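/- arXiv:2110.05788 — 2 statements merged into one kernel-verified Lean document; each statement's English description precedes it below -/
import Mathlib

section
/- If f: S → S' is a pet-isomorphism between quasi-normal orthohedral sets, then the induced map on germs sends maximal germs bijectively to maximal germs, and the height functions of S and S' agree: h_S = h_{S'}. -/
open Pointwise

namespace PeiPaper

/-- Points of the face of the standard orthant spanned by the canonical basis vectors in `Y`. -/
def stdFace (N : ℕ) (Y : Finset (Fin N)) : Set (Fin N → ℤ) :=
  {v | (∀ i, 0 ≤ v i) ∧ ∀ i, i ∉ Y → v i = 0}

/-- Integral orthogonal matrix. -/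
def IsOrthMat {N : ℕ} (A : Matrix (Fin N) (Fin N) ℤ) : Prop :=
  A * A.transpose = 1

/-- `L` is an integral orthant of rank `k` in `ℤ^N`: an affine-orthogonal image of a
rank-`k` face of the standard orthant. -/
def IsOrthantOfRank {N : ℕ} (L : Set (Fin N → ℤ)) (k : ℕ) : Prop :=
  ∃ (a : Fin N → ℤ) (A : Matrix (Fin N) (Fin N) ℤ) (Y : Finset (Fin N)),
    IsOrthMat A ∧ Y.card = k ∧ L = (fun v => a + A.mulVec v) '' stdFace N Y

def IsOrthant {N : ℕ} (L : Set (Fin N → ℤ)) : Prop := ∃ k, IsOrthantOfRank L k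

/-- `S` is orthohedral: a finite union of integral orthants. -/
def IsOrthohedral {N : ℕ} (S : Set (Fin N → ℤ)) : Prop :=
  ∃ 𝓛 : Set (Set (Fin N → ℤ)), 𝓛.Finite ∧ (∀ L ∈ 𝓛, IsOrthant L) ∧ S = ⋃₀ 𝓛

/-- The rank of a set: the maximal rank of an orthant contained in it. -/
noncomputable def orthRank {N : ℕ} (S : Set (Fin N → ℤ)) : ℕ :=
  sSup {k | ∃ L, IsOrthantOfRank L k ∧ L ⊆ S}

/-- Commensurability: the intersection is nonempty and has the same rank as both sets. -/
def Commensurable {N : ℕ} (L L' : Set (Fin N → ℤ)) : Prop :=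
  (L ∩ L').Nonempty ∧ orthRank L = orthRank (L ∩ L') ∧ orthRank L' = orthRank (L ∩ L')

/-- The rank-`k` orthants contained in `S`. -/
def germSet {N : ℕ} (S : Set (Fin N → ℤ)) (k : ℕ) : Set (Set (Fin N → ℤ)) :=
  {L | IsOrthantOfRank L k ∧ L ⊆ S}

/-- The rank-`k` germs of `S`: commensurability classes of rank-`k` orthants of `S`. -/
def Germ {N : ℕ} (S : Set (Fin N → ℤ)) (k : ℕ) : Type _ :=
  Quot (fun L L' : germSet S k => Commensurable L.1 L'.1)

def germOf {N : ℕ} (S : Set (Fin N → ℤ)) (k : ℕ) (L : germSet S k) : Germ S k :=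
  Quot.mk _ L

/-- The number of rank-`k` germs of `S` (as a natural number; `0` if infinite). -/
noncomputable def heightAt {N : ℕ} (S : Set (Fin N → ℤ)) (k : ℕ) : ℕ :=
  Nat.card (Germ S k)

/-- The height of an orthohedral set: the number of germs of maximal rank. -/
noncomputable def height {N : ℕ} (S : Set (Fin N → ℤ)) : ℕ :=
  heightAt S (orthRank S)

/-- `f` is (the restriction of) an isometry of `ℤ^N` on `L`. -/
def IsometricOn {N : ℕ} (f : (Fin N → ℤ) → (Fin N → ℤ)) (L : Set (Fin N → ℤ)) : Prop :=
  ∃ (a : Fin N → ℤ) (A : Matrix (Fin N) (Fin N) ℤ),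
    IsOrthMat A ∧ ∀ x ∈ L, f x = a + A.mulVec x

/-- `f` is (the restriction of) a translation on `L`. -/
def TranslationOn {N : ℕ} (f : (Fin N → ℤ) → (Fin N → ℤ)) (L : Set (Fin N → ℤ)) : Prop :=
  ∃ a : Fin N → ℤ, ∀ x ∈ L, f x = a + x

/-- `f` is a piecewise-Euclidean-isometric map on `S`. -/
def IsPeiMapOn {N : ℕ} (S : Set (Fin N → ℤ)) (f : (Fin N → ℤ) → (Fin N → ℤ)) : Prop :=
  ∃ 𝓛 : Set (Set (Fin N → ℤ)), 𝓛.Finite ∧ (∀ L ∈ 𝓛, IsOrthant L) ∧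
    S = ⋃₀ 𝓛 ∧ 𝓛.PairwiseDisjoint id ∧ ∀ L ∈ 𝓛, IsometricOn f L

/-- `f` is a piecewise-Euclidean-translation map on `S`. -/
def IsPetMapOn {N : ℕ} (S : Set (Fin N → ℤ)) (f : (Fin N → ℤ) → (Fin N → ℤ)) : Prop :=
  ∃ 𝓛 : Set (Set (Fin N → ℤ)), 𝓛.Finite ∧ (∀ L ∈ 𝓛, IsOrthant L) ∧
    S = ⋃₀ 𝓛 ∧ 𝓛.PairwiseDisjoint id ∧ ∀ L ∈ 𝓛, TranslationOn f L

def IsPeiIso {N : ℕ} (S S' : Set (Fin N → ℤ)) (f : (Fin N → ℤ) → (Fin N → ℤ)) : Prop :=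
  IsPeiMapOn S f ∧ Set.InjOn f S ∧ f '' S = S'

def PeiIsomorphic {N : ℕ} (S S' : Set (Fin N → ℤ)) : Prop := ∃ f, IsPeiIso S S' f

def IsPetIso {N : ℕ} (S S' : Set (Fin N → ℤ)) (f : (Fin N → ℤ) → (Fin N → ℤ)) : Prop :=
  IsPetMapOn S f ∧ Set.InjOn f S ∧ f '' S = S'

def PetIsomorphic {N : ℕ} (S S' : Set (Fin N → ℤ)) : Prop := ∃ f, IsPetIso S S' f

/-- A pei-permutation of `S`: a permutation of `ℤ^N` supported on `S` which is pei on `S`. -/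
def IsPeiPerm {N : ℕ} (S : Set (Fin N → ℤ)) (g : Equiv.Perm (Fin N → ℤ)) : Prop :=
  IsPeiMapOn S ⇑g ∧ ∀ x ∉ S, g x = x

/-- The element `g` has rank at most `k`: it is supported on an orthohedral set of rank `≤ k`. -/
def rankLE {N : ℕ} (g : Equiv.Perm (Fin N → ℤ)) (k : ℕ) : Prop :=
  ∃ T : Set (Fin N → ℤ), IsOrthohedral T ∧ orthRank T ≤ k ∧ ∀ x ∉ T, g x = x

/-- `g` fixes every rank-`k` germ of `S`. -/
def FixesGerm {N : ℕ} (S : Set (Fin N → ℤ)) (k : ℕ) (g : Equiv.Perm (Fin N → ℤ)) : Prop :=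
  ∀ L, IsOrthantOfRank L k → L ⊆ S →
    ∃ L', IsOrthantOfRank L' k ∧ L' ⊆ L ∧ Commensurable L L' ∧
      IsometricOn (⇑g) L' ∧ Commensurable (⇑g '' L') L

/-- `g` fixes every rank-`k` germ of `S` and acts on its tangent coset by a translation. -/
def TranslatesGerm {N : ℕ} (S : Set (Fin N → ℤ)) (k : ℕ) (g : Equiv.Perm (Fin N → ℤ)) : Prop :=
  ∀ L, IsOrthantOfRank L k → L ⊆ S →
    ∃ L' a, IsOrthantOfRank L' k ∧ L' ⊆ L ∧ Commensurable L L' ∧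
      (∀ x ∈ L', g x = a + x) ∧ Commensurable (⇑g '' L') L

/-- `σ` is the map induced by `g` on the rank-`k` germs of `S`. -/
def InducesGermMap {N : ℕ} (S : Set (Fin N → ℤ)) (k : ℕ) (g : Equiv.Perm (Fin N → ℤ))
    (σ : Germ S k → Germ S k) : Prop :=
  ∀ L : germSet S k, ∃ (L'' : Set (Fin N → ℤ)) (M : germSet S k),
    IsOrthantOfRank L'' k ∧ L'' ⊆ L.1 ∧ Commensurable L.1 L'' ∧
    M.1 = ⇑g '' L'' ∧ σ (germOf S k L) = germOf S k M

/-- A finitary permutation which is even (has sign `1` on a finite invariant subset). -/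
def IsEvenFinitary {α : Type*} (σ : Equiv.Perm α) : Prop :=
  ∃ (F : Finset α) (σF : Equiv.Perm F),
    (∀ a ∉ F, σ a = a) ∧ (∀ a : F, σ (a : α) = (σF a : α)) ∧
    @Equiv.Perm.sign F (Classical.decEq _) inferInstance σF = 1

/-- `g` induces an even finitary permutation on the rank-`k` germs of `S`. -/
def IsEvenOnGerms {N : ℕ} (S : Set (Fin N → ℤ)) (k : ℕ) (g : Equiv.Perm (Fin N → ℤ)) : Prop :=
  ∃ σ : Equiv.Perm (Germ S k), InducesGermMap S k g ⇑σ ∧ IsEvenFinitary σ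

/-- Ordering of germs (of arbitrary ranks): `p ≤ q` if they have representatives `L ⊆ L'`. -/
def germLE {N : ℕ} (S : Set (Fin N → ℤ)) (p q : Σ k, Germ S k) : Prop :=
  ∃ (L : germSet S p.1) (L' : germSet S q.1),
    germOf S p.1 L = p.2 ∧ germOf S q.1 L' = q.2 ∧ L.1 ⊆ L'.1

/-- A maximal germ of `S`. -/
def IsMaxGerm {N : ℕ} (S : Set (Fin N → ℤ)) (p : Σ k, Germ S k) : Prop :=
  ∀ q, germLE S p q → germLE S q p

/-- A `0`-based orthant. -/
def IsBasedOrthant {N : ℕ} (L0 : Set (Fin N → ℤ)) : Prop :=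
  ∃ (A : Matrix (Fin N) (Fin N) ℤ) (Y : Finset (Fin N)),
    IsOrthMat A ∧ L0 = (fun v => A.mulVec v) '' stdFace N Y

/-- Two (oriented) parallel orthants. -/
def ParallelOrthants {N : ℕ} (L L' : Set (Fin N → ℤ)) : Prop :=
  ∃ a : Fin N → ℤ, L' = a +ᵥ L

/-- The indicator image `S_τ` of `S`: the union of the `0`-based parallel translates of
the orthants contained in `S`. -/
def indicatorImage {N : ℕ} (S : Set (Fin N → ℤ)) : Set (Fin N → ℤ) :=
  ⋃₀ {L0 | IsBasedOrthant L0 ∧ ∃ a : Fin N → ℤ, (a +ᵥ L0) ⊆ S}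

/-- The height function `h_S`: the number of maximal germs of `S` whose indicator is `L0`. -/
noncomputable def hFun {N : ℕ} (S : Set (Fin N → ℤ)) (L0 : Set (Fin N → ℤ)) : ℕ :=
  Nat.card {p : Σ k, Germ S k //
    IsMaxGerm S p ∧ ∃ L : germSet S p.1, germOf S p.1 L = p.2 ∧ ∃ a : Fin N → ℤ, L.1 = a +ᵥ L0}

/-- `S` is quasi-normal: the maximal based orthants of `S_τ` are exactly the support of `h_S`. -/
def QuasiNormal {N : ℕ} (S : Set (Fin N → ℤ)) : Prop :=
  ∀ L0 : Set (Fin N → ℤ),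
    (IsBasedOrthant L0 ∧ L0 ⊆ indicatorImage S ∧
      ∀ L1, IsBasedOrthant L1 → L1 ⊆ indicatorImage S → L0 ⊆ L1 → L1 ⊆ L0)
    ↔ (IsBasedOrthant L0 ∧ 0 < hFun S L0)

/-- The germ `q` of `S'` is the image of the germ `p` of `S` under the injective pei-map `f`. -/
def GermMapsTo {N : ℕ} (f : (Fin N → ℤ) → (Fin N → ℤ)) (S S' : Set (Fin N → ℤ))
    (p : Σ k, Germ S k) (q : Σ k, Germ S' k) : Prop :=
  p.1 = q.1 ∧ ∃ (L : germSet S p.1) (L'' : Set (Fin N → ℤ)) (M : germSet S' q.1),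
    germOf S p.1 L = p.2 ∧ IsOrthantOfRank L'' p.1 ∧ L'' ⊆ L.1 ∧ Commensurable L.1 L'' ∧
    M.1 = f '' L'' ∧ germOf S' q.1 M = q.2

/-- A stack of `h` parallel rank-`n` orthants. -/
def IsStack {N : ℕ} (S : Set (Fin N → ℤ)) (n h : ℕ) : Prop :=
  ∃ (L0 : Set (Fin N → ℤ)) (a : Fin h → (Fin N → ℤ)),
    IsOrthantOfRank L0 n ∧
    (Pairwise fun i j => Disjoint (a i +ᵥ L0) (a j +ᵥ L0)) ∧
    S = ⋃ i, a i +ᵥ L0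

/-- A coordinate half-space of `ℤ^N`. -/
def IsHalfSpace {N : ℕ} (H : Set (Fin N → ℤ)) : Prop :=
  ∃ (i : Fin N) (c : ℤ), H = {x | x i ≤ c} ∨ H = {x | c ≤ x i}

/-- The canonical embedding `ℤ^N → ℤ^{N+1}`. -/
def emb (N : ℕ) (x : Fin N → ℤ) : Fin (N + 1) → ℤ :=
  fun i => if h : (i : ℕ) < N then x ⟨i, h⟩ else 0

/-- The sum of all matrix entries of a finitely supported family of vectors. -/
noncomputable def totalSum (k : ℕ) (Γ : Type*) : (Γ →₀ (Fin k → ℤ)) →+ ℤ :=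
  Finsupp.liftAddHom (fun _ => ∑ i : Fin k, Pi.evalAddMonoidHom (fun _ => ℤ) i)

/-- The clique (flag) complex of a graph. -/
def cliqueComplex {V : Type*} (G : SimpleGraph V) : Set (Finset V) :=
  {s | s.Nonempty ∧ G.IsClique (s : Set V)}

/-- The geometric realization of a simplicial complex on vertex set `V`. -/
def realization {V : Type*} (K : Set (Finset V)) : Set (V → ℝ) :=
  {f | (∀ v, 0 ≤ f v) ∧ ∃ s ∈ K, Function.support f ⊆ ↑s ∧ ∑ v ∈ s, f v = 1}

/-- A wedge (bouquet) of `n`-spheres indexed by `ι`, with basepoint `b`. -/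
noncomputable def wedgeSpheres (ι : Type) (n : ℕ)
    (b : Metric.sphere (0 : EuclideanSpace ℝ (Fin (n + 1))) 1) : Type :=
  Quot (fun p q : Unit ⊕ (ι × Metric.sphere (0 : EuclideanSpace ℝ (Fin (n + 1))) 1) =>
    (Sum.elim (fun _ => True) (fun pr => pr.2 = b) p) ∧
    (Sum.elim (fun _ => True) (fun qr => qr.2 = b) q))

noncomputable instance (ι : Type) (n : ℕ) (b : Metric.sphere (0 : EuclideanSpace ℝ (Fin (n + 1))) 1) :
    TopologicalSpace (wedgeSpheres ι n b) :=
  letI : TopologicalSpace ι := ⊥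
  instTopologicalSpaceQuot



/-- A coordinate box: fixed coordinates off `Y`, rays (direction given by `ε`) on `Y`. -/
def Box {N : ℕ} (a : Fin N → ℤ) (ε : Fin N → Bool) (Y : Finset (Fin N)) : Set (Fin N → ℤ) :=
  {x | (∀ j ∈ Y, if ε j then a j ≤ x j else x j ≤ a j) ∧ ∀ j ∉ Y, x j = a j}

lemma mem_box {N : ℕ} {a x : Fin N → ℤ} {ε : Fin N → Bool} {Y : Finset (Fin N)} :
    x ∈ Box a ε Y ↔ (∀ j ∈ Y, if ε j then a j ≤ x j else x j ≤ a j) ∧ ∀ j ∉ Y, x j = a j :=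
  Iff.rfl

lemma self_mem_box {N : ℕ} (a : Fin N → ℤ) (ε : Fin N → Bool) (Y : Finset (Fin N)) :
    a ∈ Box a ε Y := by
  refine ⟨fun j _ => ?_, fun j _ => rfl⟩
  split <;> exact le_refl _

lemma box_nonempty {N : ℕ} (a : Fin N → ℤ) (ε : Fin N → Bool) (Y : Finset (Fin N)) :
    (Box a ε Y).Nonempty := ⟨a, self_mem_box a ε Y⟩

lemma box_congr_eps {N : ℕ} {a : Fin N → ℤ} {ε ε' : Fin N → Bool} {Y : Finset (Fin N)}
    (h : ∀ j ∈ Y, ε j = ε' j) : Box a ε Y = Box a ε' Y := by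
  ext x
  simp only [mem_box]
  constructor <;> rintro ⟨h1, h2⟩ <;> refine ⟨fun j hj => ?_, h2⟩
  · rw [← h j hj]; exact h1 j hj
  · rw [h j hj]; exact h1 j hj

lemma box_subset_box {N : ℕ} {a a' : Fin N → ℤ} {ε : Fin N → Bool} {Y : Finset (Fin N)}
    (h1 : ∀ j ∈ Y, if ε j then a j ≤ a' j else a' j ≤ a j) (h2 : ∀ j ∉ Y, a' j = a j) :
    Box a' ε Y ⊆ Box a ε Y := by
  rintro x ⟨hx1, hx2⟩
  refine ⟨fun j hj => ?_, fun j hj => (hx2 j hj).trans (h2 j hj)⟩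
  have := hx1 j hj; have := h1 j hj
  split at this <;> rename_i hε
  · simp only [if_pos hε] at *; omega
  · simp only [if_neg hε] at *; omega

/-- test point used for structure lemmas -/
private def tp {N : ℕ} (a : Fin N → ℤ) (ε : Fin N → Bool) (j0 : Fin N) (t : ℤ) : Fin N → ℤ :=
  fun j => if j = j0 then a j + (if ε j then t else -t) else a j

lemma tp_mem {N : ℕ} {a : Fin N → ℤ} {ε : Fin N → Bool} {Y : Finset (Fin N)} {j0 : Fin N}
    (hj0 : j0 ∈ Y) {t : ℤ} (ht : 0 ≤ t) : tp a ε j0 t ∈ Box a ε Y := by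
  refine ⟨fun j hj => ?_, fun j hj => ?_⟩
  · unfold tp
    by_cases hj' : j = j0
    · simp only [if_pos hj']; split <;> omega
    · simp only [if_neg hj']; split <;> omega
  · unfold tp
    rw [if_neg]; rintro rfl; exact hj hj0

lemma subBox_struct {N : ℕ} {a a' : Fin N → ℤ} {ε ε' : Fin N → Bool} {Y Y' : Finset (Fin N)}
    (h : Box a' ε' Y' ⊆ Box a ε Y) :
    Y' ⊆ Y ∧ (∀ j ∈ Y', ε' j = ε j) ∧ (∀ j ∉ Y, a' j = a j) ∧
      (∀ j ∈ Y, if ε j then a j ≤ a' j else a' j ≤ a j) := by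
  have hbase := h (self_mem_box a' ε' Y')
  have hYsub : Y' ⊆ Y := by
    intro j0 hj0
    by_contra hj0Y
    have h1 := (h (tp_mem (a := a') (ε := ε') hj0 (t := 1) (by norm_num))).2 j0 hj0Y
    have h0 := hbase.2 j0 hj0Y
    unfold tp at h1
    simp only [if_pos rfl] at h1
    by_cases hε : ε' j0 <;> simp [hε] at h1 <;> omega
  refine ⟨hYsub, ?_, hbase.2, hbase.1⟩
  intro j0 hj0
  by_contra hne
  have hmem : ∀ t : ℤ, 0 ≤ t → tp a' ε' j0 t ∈ Box a ε Y := fun t ht => h (tp_mem hj0 ht)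
  have hbig := (hmem (|a j0 - a' j0| + 1) (by positivity)).1 j0 (hYsub hj0)
  unfold tp at hbig
  simp only [if_pos rfl] at hbig
  have habs := abs_nonneg (a j0 - a' j0)
  rcases abs_cases (a j0 - a' j0) with ⟨he, _⟩ | ⟨he, _⟩ <;>
    by_cases h1 : ε' j0 <;> by_cases h2 : ε j0 <;> simp [h1, h2] at hbig hne <;> omega

lemma box_eq_struct {N : ℕ} {a a' : Fin N → ℤ} {ε ε' : Fin N → Bool} {Y Y' : Finset (Fin N)}
    (h : Box a' ε' Y' = Box a ε Y) :
    Y' = Y ∧ (∀ j ∈ Y', ε' j = ε j) ∧ a' = a := by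
  have h1 := subBox_struct h.le
  have h2 := subBox_struct h.ge
  have hY : Y' = Y := le_antisymm h1.1 h2.1
  refine ⟨hY, h1.2.1, funext fun j => ?_⟩
  by_cases hj : j ∈ Y
  · have e1 := h1.2.2.2 j hj
    have e2 := h2.2.2.2 j (hY ▸ hj)
    have hε := h1.2.1 j (hY ▸ hj)
    rw [hε] at e2
    split at e1 <;> split at e2 <;> simp_all <;> omega
  · exact h1.2.2.1 j hj


/-- join of two bases along `ε` -/
def joinB {N : ℕ} (a a' : Fin N → ℤ) (ε : Fin N → Bool) : Fin N → ℤ :=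
  fun j => if ε j then max (a j) (a' j) else min (a j) (a' j)

lemma inter_box {N : ℕ} {a a' : Fin N → ℤ} {ε ε' : Fin N → Bool} {Y : Finset (Fin N)}
    (hε : ∀ j ∈ Y, ε j = ε' j) (ha : ∀ j ∉ Y, a j = a' j) :
    Box a ε Y ∩ Box a' ε' Y = Box (joinB a a' ε) ε Y := by
  ext x
  simp only [Set.mem_inter_iff, mem_box]
  constructor
  · rintro ⟨⟨p1, p2⟩, ⟨q1, q2⟩⟩
    refine ⟨fun j hj => ?_, fun j hj => ?_⟩
    · have := p1 j hj; have hq := q1 j hj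
      rw [← hε j hj] at hq
      unfold joinB
      by_cases h : ε j <;> simp [h] at * <;> omega
    · have := p2 j hj
      unfold joinB
      by_cases h : ε j <;> simp [h, ← ha j hj] <;> omega
  · rintro ⟨p1, p2⟩
    refine ⟨⟨fun j hj => ?_, fun j hj => ?_⟩, fun j hj => ?_, fun j hj => ?_⟩
    · have := p1 j hj; unfold joinB at this; by_cases h : ε j <;> simp [h] at * <;> omega
    · have := p2 j hj; unfold joinB at this; rw [← ha j hj] at this
      by_cases h : ε j <;> simp [h] at this <;> omega
    · have := p1 j hj; rw [← hε j hj]; unfold joinB at this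
      by_cases h : ε j <;> simp [h] at * <;> omega
    · have := p2 j hj; unfold joinB at this
      by_cases h : ε j <;> simp [h, ha j hj] at this <;> omega

lemma box_inter_nonempty {N : ℕ} {a a' : Fin N → ℤ} {ε ε' : Fin N → Bool} {Y : Finset (Fin N)}
    (hε : ∀ j ∈ Y, ε j = ε' j) (ha : ∀ j ∉ Y, a j = a' j) :
    (Box a ε Y ∩ Box a' ε' Y).Nonempty := by
  rw [inter_box hε ha]; exact box_nonempty _ _ _

lemma vadd_box {N : ℕ} (c : Fin N → ℤ) (a : Fin N → ℤ) (ε : Fin N → Bool) (Y : Finset (Fin N)) :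
    c +ᵥ Box a ε Y = Box (c + a) ε Y := by
  ext x
  simp only [Set.mem_vadd_set, mem_box]
  constructor
  · rintro ⟨y, ⟨h1, h2⟩, rfl⟩
    have : c +ᵥ y = c + y := rfl
    rw [this]
    refine ⟨fun j hj => ?_, fun j hj => ?_⟩
    · have := h1 j hj; simp only [Pi.add_apply]; split_ifs with h <;> simp [h] at this <;> omega
    · simp only [Pi.add_apply, h2 j hj]
  · rintro ⟨h1, h2⟩
    refine ⟨x - c, ⟨fun j hj => ?_, fun j hj => ?_⟩, by funext j; simp [vadd_eq_add]⟩
    · have := h1 j hj; simp only [Pi.sub_apply]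
      split_ifs with h <;> simp [h, Pi.add_apply] at this <;> omega
    · have := h2 j hj; simp only [Pi.sub_apply, Pi.add_apply] at *; omega

/-- normalized type data of a box: the fixed coordinates together with their values, and the
directions of the free coordinates. -/
def normType {N : ℕ} (a : Fin N → ℤ) (ε : Fin N → Bool) (Y : Finset (Fin N)) :
    Finset (Fin N) × (Fin N → Bool) × (Fin N → ℤ) :=
  (Y, fun j => if j ∈ Y then ε j else true, fun j => if j ∈ Y then 0 else a j)

lemma normType_eq_iff {N : ℕ} {a a' : Fin N → ℤ} {ε ε' : Fin N → Bool} {Y Y' : Finset (Fin N)} :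
    normType a ε Y = normType a' ε' Y' ↔
      Y = Y' ∧ (∀ j ∈ Y, ε j = ε' j) ∧ (∀ j ∉ Y, a j = a' j) := by
  unfold normType
  constructor
  · intro h
    rw [Prod.mk.injEq, Prod.mk.injEq] at h
    obtain ⟨h1, h2, h3⟩ := h
    subst h1
    refine ⟨rfl, fun j hj => ?_, fun j hj => ?_⟩
    · have := congrFun h2 j; simpa [hj] using this
    · have := congrFun h3 j; simpa [hj] using this
  · rintro ⟨rfl, h2, h3⟩
    refine Prod.ext rfl (Prod.ext ?_ ?_) <;> funext j <;> by_cases hj : j ∈ Y <;>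
      simp [hj, h2 j, h3 j]

lemma normType_eq_of_box_eq {N : ℕ} {a a' : Fin N → ℤ} {ε ε' : Fin N → Bool}
    {Y Y' : Finset (Fin N)} (h : Box a ε Y = Box a' ε' Y') :
    normType a ε Y = normType a' ε' Y' := by
  obtain ⟨hY, hε, ha⟩ := box_eq_struct h
  exact normType_eq_iff.2 ⟨hY, hε, fun j _ => by rw [ha]⟩


lemma orth_rows {N : ℕ} {A : Matrix (Fin N) (Fin N) ℤ} (h : IsOrthMat A) :
    ∃ π : Equiv.Perm (Fin N),
      ∀ i, (A i (π i) = 1 ∨ A i (π i) = -1) ∧ ∀ l, l ≠ π i → A i l = 0 := by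
  have key : ∀ i i', ∑ l, A i l * A i' l = if i = i' then 1 else 0 := by
    intro i i'
    have := congrFun (congrFun h i) i'
    simpa [Matrix.mul_apply, Matrix.transpose_apply, Matrix.one_apply] using this
  have main : ∀ i, ∃ kk, (A i kk = 1 ∨ A i kk = -1) ∧ ∀ l, l ≠ kk → A i l = 0 := by
    intro i
    have hrow : ∑ l, A i l * A i l = 1 := by simpa using key i i
    have hex : ∃ kk, A i kk ≠ 0 := by
      by_contra hc
      push_neg at hc
      rw [Finset.sum_eq_zero (fun l _ => by rw [hc l, mul_zero])] at hrow
      exact one_ne_zero hrow.symm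
    obtain ⟨kk, hkk⟩ := hex
    have hle : A i kk * A i kk ≤ 1 := by
      rw [← hrow]
      exact Finset.single_le_sum (fun l _ => mul_self_nonneg (A i l)) (Finset.mem_univ kk)
    have hge : 1 ≤ A i kk * A i kk := by
      have := Int.one_le_abs hkk
      calc (1:ℤ) = 1 * 1 := by ring
      _ ≤ |A i kk| * |A i kk| := by apply mul_le_mul this this <;> omega
      _ = A i kk * A i kk := by rw [← abs_mul, abs_of_nonneg (mul_self_nonneg _)]
    have hunit : A i kk * A i kk = 1 := le_antisymm hle hge
    refine ⟨kk, Int.isUnit_iff.1 (IsUnit.of_mul_eq_one _ hunit), fun l hl => ?_⟩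
    have hsplit : A i kk * A i kk + ∑ l ∈ Finset.univ.erase kk, A i l * A i l = 1 := by
      rw [Finset.add_sum_erase Finset.univ (fun l => A i l * A i l) (Finset.mem_univ kk)]
      exact hrow
    have hzero : ∑ l ∈ Finset.univ.erase kk, A i l * A i l = 0 := by omega
    have := (Finset.sum_eq_zero_iff_of_nonneg
      (fun l _ => mul_self_nonneg (A i l))).1 hzero l (Finset.mem_erase.2 ⟨hl, Finset.mem_univ l⟩)
    exact mul_self_eq_zero.1 this
  choose kf hkf1 hkf2 using main
  have hinj : Function.Injective kf := by
    intro i i' hii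
    by_contra hne
    have h0 : ∑ l, A i l * A i' l = 0 := by rw [key]; simp [hne]
    rw [Finset.sum_eq_single (kf i) (fun l _ hl => by rw [hkf2 i l hl, zero_mul])
      (fun hl => absurd (Finset.mem_univ _) hl)] at h0
    rw [hii] at h0
    rcases hkf1 i with h1 | h1 <;> rcases hkf1 i' with h2 | h2 <;>
      rw [hii] at h1 <;> rw [h1, h2] at h0 <;> norm_num at h0
  exact ⟨Equiv.ofBijective kf ((Finite.injective_iff_bijective).1 hinj),
    fun i => ⟨hkf1 i, hkf2 i⟩⟩

lemma image_box_of_signs {N : ℕ} {A : Matrix (Fin N) (Fin N) ℤ} {π : Equiv.Perm (Fin N)}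
    (hsp : ∀ i, (A i (π i) = 1 ∨ A i (π i) = -1) ∧ ∀ l, l ≠ π i → A i l = 0)
    (a : Fin N → ℤ) (Y : Finset (Fin N)) :
    (fun v => a + A.mulVec v) '' stdFace N Y
        = Box a (fun j => decide (A j (π j) = 1)) (Finset.univ.filter (fun j => π j ∈ Y)) ∧
      (Finset.univ.filter (fun j => π j ∈ Y)).card = Y.card := by
  have hmv : ∀ (v : Fin N → ℤ) j, A.mulVec v j = A j (π j) * v (π j) := by
    intro v j
    rw [Matrix.mulVec, dotProduct]
    exact Finset.sum_eq_single (π j) (fun l _ hl => by rw [(hsp j).2 l hl, zero_mul])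
      (fun hl => absurd (Finset.mem_univ _) hl)
  constructor
  · ext x
    simp only [Set.mem_image, mem_box, Finset.mem_filter, Finset.mem_univ, true_and]
    constructor
    · rintro ⟨v, ⟨hv1, hv2⟩, rfl⟩
      refine ⟨fun j hj => ?_, fun j hj => ?_⟩
      · have hv := hv1 (π j)
        simp only [Pi.add_apply, hmv]
        rcases (hsp j).1 with hs | hs <;> simp [hs] <;> omega
      · simp only [Pi.add_apply, hmv, hv2 (π j) hj, mul_zero, add_zero]
    · rintro ⟨h1, h2⟩
      refine ⟨fun l => A (π.symm l) l * (x (π.symm l) - a (π.symm l)), ⟨fun l => ?_, fun l hl => ?_⟩, ?_⟩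
      · show 0 ≤ A (π.symm l) l * (x (π.symm l) - a (π.symm l))
        have hpj : π (π.symm l) = l := Equiv.apply_symm_apply π l
        by_cases hlY : l ∈ Y
        · have hx := h1 (π.symm l) (by rwa [hpj])
          rw [hpj] at hx
          rcases (hsp (π.symm l)).1 with hs | hs <;> rw [hpj] at hs <;> rw [hs] <;>
            simp [hs] at hx <;> omega
        · have hx := h2 (π.symm l) (by rwa [hpj])
          rw [hx]; simp
      · show A (π.symm l) l * (x (π.symm l) - a (π.symm l)) = 0
        have hpj : π (π.symm l) = l := Equiv.apply_symm_apply π l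
        rw [h2 (π.symm l) (by rwa [hpj])]; simp
      · funext j
        simp only [Pi.add_apply, hmv, Equiv.symm_apply_apply]
        rcases (hsp j).1 with hs | hs <;> rw [hs] <;> ring
  · refine Finset.card_bij (fun j _ => π j) (fun j hj => (Finset.mem_filter.1 hj).2)
      (fun j _ j' _ hjj => π.injective hjj) (fun y hy => ⟨π.symm y, ?_, Equiv.apply_symm_apply π y⟩)
    simp [Equiv.apply_symm_apply, hy]

lemma diag_signs {N : ℕ} (ε : Fin N → Bool) :
    IsOrthMat (Matrix.diagonal (fun j => if ε j then (1:ℤ) else -1)) ∧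
      ∀ i, ((Matrix.diagonal (fun j => if ε j then (1:ℤ) else -1)) i ((Equiv.refl (Fin N)) i) = 1 ∨
            (Matrix.diagonal (fun j => if ε j then (1:ℤ) else -1)) i ((Equiv.refl (Fin N)) i) = -1) ∧
        ∀ l, l ≠ (Equiv.refl (Fin N)) i →
          (Matrix.diagonal (fun j => if ε j then (1:ℤ) else -1)) i l = 0 := by
  constructor
  · unfold IsOrthMat
    rw [Matrix.diagonal_transpose, Matrix.diagonal_mul_diagonal]
    have he : (fun i => (if ε i = true then (1:ℤ) else -1) * (if ε i = true then 1 else -1))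
        = fun _ => (1:ℤ) := by
      funext i; by_cases h : ε i <;> simp [h]
    rw [he, Matrix.diagonal_one]
  · intro i
    refine ⟨?_, fun l hl => Matrix.diagonal_apply_ne _ (fun he => hl he.symm)⟩
    simp only [Equiv.refl_apply, Matrix.diagonal_apply_eq]
    by_cases h : ε i <;> simp [h]

lemma box_eq_image {N : ℕ} (a : Fin N → ℤ) (ε : Fin N → Bool) (Y : Finset (Fin N)) :
    ∃ A : Matrix (Fin N) (Fin N) ℤ, IsOrthMat A ∧
      Box a ε Y = (fun v => a + A.mulVec v) '' stdFace N Y := by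
  obtain ⟨hA, hsp⟩ := diag_signs ε
  refine ⟨_, hA, ?_⟩
  rw [(image_box_of_signs hsp a Y).1]
  have hY : (Finset.univ.filter (fun j => (Equiv.refl (Fin N)) j ∈ Y)) = Y := by
    ext j; exact Finset.mem_filter.trans (and_iff_right (Finset.mem_univ _))
  rw [hY]
  refine (box_congr_eps (fun j _ => ?_)).symm
  by_cases h : ε j <;> simp [Equiv.refl_apply, Matrix.diagonal_apply_eq, h]

lemma isOrthantOfRank_iff_box {N : ℕ} {L : Set (Fin N → ℤ)} {k : ℕ} :
    IsOrthantOfRank L k ↔ ∃ a ε Y, Finset.card Y = k ∧ L = Box a ε Y := by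
  constructor
  · rintro ⟨a, A, Y, hA, hcard, rfl⟩
    obtain ⟨π, hsp⟩ := orth_rows hA
    obtain ⟨him, hc⟩ := image_box_of_signs hsp a Y
    exact ⟨a, _, _, by rw [hc, hcard], him⟩
  · rintro ⟨a, ε, Y, hcard, rfl⟩
    obtain ⟨A, hA, him⟩ := box_eq_image a ε Y
    exact ⟨a, A, Y, hA, hcard, him⟩

lemma isBasedOrthant_iff_box {N : ℕ} {L : Set (Fin N → ℤ)} :
    IsBasedOrthant L ↔ ∃ ε Y, L = Box 0 ε Y := by
  have hfe : ∀ A : Matrix (Fin N) (Fin N) ℤ,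
      (fun v => A.mulVec v) = (fun v => (0 : Fin N → ℤ) + A.mulVec v) := by
    intro A; funext v; rw [zero_add]
  constructor
  · rintro ⟨A, Y, hA, rfl⟩
    obtain ⟨π, hsp⟩ := orth_rows hA
    rw [hfe A]
    exact ⟨_, _, (image_box_of_signs hsp 0 Y).1⟩
  · rintro ⟨ε, Y, rfl⟩
    obtain ⟨A, hA, him⟩ := box_eq_image 0 ε Y
    exact ⟨A, Y, hA, by rw [him, hfe A]⟩

lemma rank_unique {N : ℕ} {L : Set (Fin N → ℤ)} {k k' : ℕ}
    (h : IsOrthantOfRank L k) (h' : IsOrthantOfRank L k') : k = k' := by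
  obtain ⟨a, ε, Y, hc, rfl⟩ := isOrthantOfRank_iff_box.1 h
  obtain ⟨a', ε', Y', hc', heq⟩ := isOrthantOfRank_iff_box.1 h'
  obtain ⟨hY, -, -⟩ := box_eq_struct heq
  rw [← hc, ← hc', hY]


lemma rank_le_N {N : ℕ} {L : Set (Fin N → ℤ)} {m : ℕ} (h : IsOrthantOfRank L m) : m ≤ N := by
  obtain ⟨a, ε, Y, hc, -⟩ := isOrthantOfRank_iff_box.1 h
  rw [← hc]
  simpa using Finset.card_le_univ Y

lemma box_empty_face {N : ℕ} (a : Fin N → ℤ) (ε : Fin N → Bool) : Box a ε ∅ = {a} := by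
  ext x
  simp only [mem_box, Finset.notMem_empty, false_implies, implies_true, true_and,
    Set.mem_singleton_iff]
  constructor
  · intro h; funext j; exact h j (by simp)
  · rintro rfl j _; rfl

lemma singleton_orthant {N : ℕ} (x : Fin N → ℤ) : IsOrthantOfRank {x} 0 :=
  isOrthantOfRank_iff_box.2 ⟨x, fun _ => true, ∅, rfl, (box_empty_face x _).symm⟩

lemma orthRank_box {N : ℕ} (a : Fin N → ℤ) (ε : Fin N → Bool) (Y : Finset (Fin N)) :
    orthRank (Box a ε Y) = Y.card := by
  have hub : ∀ m ∈ {k | ∃ L, IsOrthantOfRank L k ∧ L ⊆ Box a ε Y}, m ≤ Y.card := by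
    rintro m ⟨L, hL, hsub⟩
    obtain ⟨b, δ, Z, hc, rfl⟩ := isOrthantOfRank_iff_box.1 hL
    rw [← hc]
    exact Finset.card_le_card (subBox_struct hsub).1
  have hmem : Y.card ∈ {k | ∃ L, IsOrthantOfRank L k ∧ L ⊆ Box a ε Y} :=
    ⟨Box a ε Y, isOrthantOfRank_iff_box.2 ⟨a, ε, Y, rfl, rfl⟩, subset_rfl⟩
  exact le_antisymm (csSup_le ⟨_, hmem⟩ hub) (le_csSup ⟨Y.card, hub⟩ hmem)

lemma exists_orthant_orthRank {N : ℕ} {T : Set (Fin N → ℤ)} (hne : T.Nonempty) :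
    ∃ L, IsOrthantOfRank L (orthRank T) ∧ L ⊆ T := by
  have hset : orthRank T ∈ {k | ∃ L, IsOrthantOfRank L k ∧ L ⊆ T} := by
    apply Nat.sSup_mem
    · obtain ⟨x, hx⟩ := hne
      exact ⟨0, {x}, singleton_orthant x, by simpa using hx⟩
    · exact ⟨N, fun m hm => by obtain ⟨L, hL, -⟩ := hm; exact rank_le_N hL⟩
  exact hset

lemma comm_of_type {N : ℕ} {a a' : Fin N → ℤ} {ε ε' : Fin N → Bool} {Y : Finset (Fin N)}
    (hε : ∀ j ∈ Y, ε j = ε' j) (ha : ∀ j ∉ Y, a j = a' j) :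
    Commensurable (Box a ε Y) (Box a' ε' Y) := by
  refine ⟨box_inter_nonempty hε ha, ?_, ?_⟩ <;>
    rw [inter_box hε ha] <;> rw [orthRank_box, orthRank_box]

lemma type_of_comm {N : ℕ} {a a' : Fin N → ℤ} {ε ε' : Fin N → Bool} {Y Y' : Finset (Fin N)}
    (h : Commensurable (Box a ε Y) (Box a' ε' Y')) : normType a ε Y = normType a' ε' Y' := by
  obtain ⟨hne, h1, h2⟩ := h
  rw [orthRank_box] at h1 h2
  obtain ⟨W, hW, hWT⟩ := exists_orthant_orthRank hne
  rw [← h1] at hW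
  obtain ⟨w, η, Z, hcZ, rfl⟩ := isOrthantOfRank_iff_box.1 hW
  have s1 := subBox_struct (hWT.trans Set.inter_subset_left)
  have s2 := subBox_struct (hWT.trans Set.inter_subset_right)
  have hZY : Z = Y := Finset.eq_of_subset_of_card_le s1.1 (by omega)
  have hZY' : Z = Y' := Finset.eq_of_subset_of_card_le s2.1 (by omega)
  have hYY' : Y = Y' := hZY.symm.trans hZY'
  refine normType_eq_iff.2 ⟨hYY', fun j hj => ?_, fun j hj => ?_⟩
  · rw [← s1.2.1 j (hZY ▸ hj), s2.2.1 j (hZY ▸ hj)]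
  · rw [← s1.2.2.1 j hj, s2.2.2.1 j (by rwa [← hYY'])]

open scoped Classical in
/-- the type data of an orthant, extracted by choice. -/
noncomputable def setType {N : ℕ} (L : Set (Fin N → ℤ)) :
    Finset (Fin N) × (Fin N → Bool) × (Fin N → ℤ) :=
  if h : ∃ a ε Y, L = Box a ε Y then
    normType h.choose h.choose_spec.choose h.choose_spec.choose_spec.choose
  else (∅, fun _ => true, 0)

lemma setType_box {N : ℕ} (a : Fin N → ℤ) (ε : Fin N → Bool) (Y : Finset (Fin N)) :
    setType (Box a ε Y) = normType a ε Y := by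
  have h : ∃ a' ε' Y', Box a ε Y = Box a' ε' Y' := ⟨a, ε, Y, rfl⟩
  rw [setType, dif_pos h]
  exact (normType_eq_of_box_eq h.choose_spec.choose_spec.choose_spec).symm

lemma germSet_box {N : ℕ} {S : Set (Fin N → ℤ)} {k : ℕ} (R : germSet S k) :
    ∃ a ε Y, Finset.card Y = k ∧ R.1 = Box a ε Y :=
  isOrthantOfRank_iff_box.1 R.2.1

lemma comm_of_setType {N : ℕ} {S : Set (Fin N → ℤ)} {k : ℕ} (R R' : germSet S k)
    (h : setType R.1 = setType R'.1) : Commensurable R.1 R'.1 := by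
  obtain ⟨a, ε, Y, hc, hR⟩ := germSet_box R
  obtain ⟨a', ε', Y', hc', hR'⟩ := germSet_box R'
  rw [hR, hR'] at h ⊢
  rw [setType_box, setType_box] at h
  obtain ⟨hY, hε, ha⟩ := normType_eq_iff.1 h
  subst hY
  exact comm_of_type hε ha

lemma setType_of_comm {N : ℕ} {S : Set (Fin N → ℤ)} {k : ℕ} (R R' : germSet S k)
    (h : Commensurable R.1 R'.1) : setType R.1 = setType R'.1 := by
  obtain ⟨a, ε, Y, hc, hR⟩ := germSet_box R
  obtain ⟨a', ε', Y', hc', hR'⟩ := germSet_box R'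
  rw [hR, hR'] at h ⊢
  rw [setType_box, setType_box]
  exact type_of_comm h

/-- Type data of a germ. -/
noncomputable def gType {N : ℕ} {S : Set (Fin N → ℤ)} {k : ℕ} (x : Germ S k) :
    Finset (Fin N) × (Fin N → Bool) × (Fin N → ℤ) :=
  Quot.lift (fun R : germSet S k => setType R.1) (fun R R' h => setType_of_comm R R' h) x

lemma germOf_eq_iff {N : ℕ} {S : Set (Fin N → ℤ)} {k : ℕ} {R R' : germSet S k} :
    germOf S k R = germOf S k R' ↔ setType R.1 = setType R'.1 := by
  constructor
  · intro h
    have := congrArg gType h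
    simpa [gType, germOf] using this
  · intro h
    exact Quot.sound (comm_of_setType R R' h)

/-- Covering lemma: a box covered by finitely many orthants has a same-type sub-box lying in a
single one of them. -/
lemma covering {N : ℕ} {𝓛 : Set (Set (Fin N → ℤ))} (hfin : 𝓛.Finite)
    (horth : ∀ P ∈ 𝓛, IsOrthant P) {b : Fin N → ℤ} {ε : Fin N → Bool} {Y : Finset (Fin N)}
    (hsub : Box b ε Y ⊆ ⋃₀ 𝓛) :
    ∃ P ∈ 𝓛, ∃ b', (∀ j ∉ Y, b' j = b j) ∧ Box b' ε Y ⊆ Box b ε Y ∧ Box b' ε Y ⊆ P := by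
  classical
  set d : Fin N → ℤ := fun j => if j ∈ Y then (if ε j then 1 else -1) else 0 with hd
  set xx : ℕ → (Fin N → ℤ) := fun t => fun j => b j + (t : ℤ) * d j with hxx
  have hxmem : ∀ t : ℕ, xx t ∈ Box b ε Y := by
    intro t
    refine ⟨fun j hj => ?_, fun j hj => ?_⟩
    · simp only [hxx, hd, if_pos hj]
      by_cases h : ε j <;> simp [h] <;> omega
    · simp [hxx, hd, if_neg hj]
  haveI : Finite ↥𝓛 := hfin.to_subtype
  have hchoice : ∀ t : ℕ, ∃ P : ↥𝓛, xx t ∈ P.1 := by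
    intro t
    obtain ⟨P, hP, hxP⟩ := Set.mem_sUnion.1 (hsub (hxmem t))
    exact ⟨⟨P, hP⟩, hxP⟩
  choose c hc using hchoice
  obtain ⟨P0, hP0inf⟩ := Finite.exists_infinite_fiber c
  have hTinf : (c ⁻¹' {P0}).Infinite := Set.infinite_coe_iff.1 hP0inf
  have hxP0 : ∀ t ∈ c ⁻¹' {P0}, xx t ∈ P0.1 := by
    intro t ht
    have : c t = P0 := ht
    rw [← this]; exact hc t
  obtain ⟨m, hmrk⟩ := horth P0.1 P0.2
  obtain ⟨p, δ, Z, hcZ, hPbox⟩ := isOrthantOfRank_iff_box.1 hmrk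
  rw [hPbox] at hxP0
  -- Y ⊆ Z
  have hYZ : Y ⊆ Z := by
    intro j hj
    by_contra hjZ
    have hfix : ∀ t ∈ c ⁻¹' {P0}, b j + (t : ℤ) * d j = p j := fun t ht =>
      (hxP0 t ht).2 j hjZ
    have hdj : d j = 1 ∨ d j = -1 := by
      simp only [hd, if_pos hj]; by_cases h : ε j <;> simp [h]
    apply hTinf
    apply Set.Finite.subset (Set.finite_singleton ((p j - b j) * d j).toNat)
    intro t ht
    have := hfix t ht
    simp only [Set.mem_singleton_iff]
    rcases hdj with h | h <;> rw [h] at this ⊢ <;>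
      [skip; skip] <;> omega
  -- signs agree on Y
  have hsign : ∀ j ∈ Y, δ j = ε j := by
    intro j hj
    by_contra hne
    apply hTinf
    apply Set.Finite.subset (Set.finite_Iic (b j - p j + p j - b j + |p j - b j| + 1).toNat)
    intro t ht
    have hin := (hxP0 t ht).1 j (hYZ hj)
    simp only [hxx, hd, if_pos hj] at hin
    by_cases h1 : ε j <;> by_cases h2 : δ j <;> simp [h1, h2] at hin hne <;>
      · simp only [Set.mem_Iic]
        rcases abs_cases (p j - b j) with ⟨he, _⟩ | ⟨he, _⟩ <;> omega
  obtain ⟨t0, ht0⟩ := hTinf.nonempty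
  refine ⟨P0.1, P0.2, xx t0, fun j hj => by simp [hxx, hd, if_neg hj], ?_, ?_⟩
  · apply box_subset_box
    · intro j hj
      have := (hxmem t0).1 j hj
      by_cases h : ε j <;> simp [h] at this ⊢ <;> omega
    · exact fun j hj => (hxmem t0).2 j hj
  · rw [hPbox]
    rintro y ⟨hy1, hy2⟩
    have hx0 := hxP0 t0 ht0
    refine ⟨fun j hj => ?_, fun j hj => ?_⟩
    · by_cases hjY : j ∈ Y
      · have h1 := hy1 j hjY
        have h2 := hx0.1 j hj
        rw [hsign j hjY] at h2
        rw [hsign j hjY]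
        by_cases h : ε j <;> simp [h] at h1 h2 ⊢ <;> omega
      · rw [hy2 j hjY]
        exact hx0.1 j hj
    · have hjY : j ∉ Y := fun hc' => hj (hYZ hc')
      rw [hy2 j hjY]
      exact hx0.2 j hj

lemma image_translation {N : ℕ} {f : (Fin N → ℤ) → (Fin N → ℤ)} {L : Set (Fin N → ℤ)}
    {a : Fin N → ℤ} (h : ∀ z ∈ L, f z = a + z) : f '' L = a +ᵥ L := by
  ext y
  simp only [Set.mem_image, Set.mem_vadd_set, vadd_eq_add]
  constructor
  · rintro ⟨z, hz, rfl⟩; exact ⟨z, hz, (h z hz).symm⟩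
  · rintro ⟨z, hz, rfl⟩; exact ⟨z, hz, h z hz⟩

lemma exists_image_rep {N : ℕ} {S S' : Set (Fin N → ℤ)} {f : (Fin N → ℤ) → (Fin N → ℤ)}
    (hpet : IsPetMapOn S f) (himg : f '' S = S') {k : ℕ} (R : germSet S k) :
    ∃ (L : germSet S k) (a : Fin N → ℤ) (M : germSet S' k),
      setType L.1 = setType R.1 ∧ L.1 ⊆ R.1 ∧ (∀ z ∈ L.1, f z = a + z) ∧ M.1 = a +ᵥ L.1 := by
  obtain ⟨𝓛, hfin, horth, hSU, hdis, htrans⟩ := hpet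
  obtain ⟨b, ε, Y, hcY, hR⟩ := germSet_box R
  have hsub : Box b ε Y ⊆ ⋃₀ 𝓛 := by rw [← hSU, ← hR]; exact R.2.2
  obtain ⟨P, hP, b', hb'fix, hsub1, hsub2⟩ := covering hfin horth hsub
  obtain ⟨a, ha⟩ := htrans P hP
  have hLS : Box b' ε Y ⊆ S := by rw [← hR] at hsub1; exact hsub1.trans R.2.2
  refine ⟨⟨Box b' ε Y, isOrthantOfRank_iff_box.2 ⟨b', ε, Y, hcY, rfl⟩, hLS⟩, a,
    ⟨a +ᵥ Box b' ε Y, ?_, ?_⟩, ?_, by rw [hR]; exact hsub1, fun z hz => ha z (hsub2 hz), rfl⟩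
  · rw [vadd_box]
    exact isOrthantOfRank_iff_box.2 ⟨a + b', ε, Y, hcY, rfl⟩
  · have : a +ᵥ Box b' ε Y = f '' Box b' ε Y :=
      (image_translation (fun z hz => ha z (hsub2 hz))).symm
    rw [this, ← himg]
    exact Set.image_mono hLS
  · rw [hR, setType_box, setType_box]
    exact normType_eq_iff.2 ⟨rfl, fun j _ => rfl, hb'fix⟩

lemma engine {N : ℕ} {S S' : Set (Fin N → ℤ)} {f : (Fin N → ℤ) → (Fin N → ℤ)}
    (hpet : IsPetMapOn S f) (himg : f '' S = S') :
    ∃ F : ∀ k, Germ S k → Germ S' k,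
      ∀ k (x : Germ S k), ∃ (L : germSet S k) (a : Fin N → ℤ) (M : germSet S' k),
        germOf S k L = x ∧ (∀ z ∈ L.1, f z = a + z) ∧ M.1 = a +ᵥ L.1 ∧
          F k x = germOf S' k M := by
  classical
  choose Lf af Mf hty hsub htr hM using
    fun (k : ℕ) (R : germSet S k) => exists_image_rep hpet himg (k := k) R
  have wd : ∀ k (R R' : germSet S k), Commensurable R.1 R'.1 →
      germOf S' k (Mf k R) = germOf S' k (Mf k R') := by
    intro k R R' hcomm
    have hLL : setType (Lf k R).1 = setType (Lf k R').1 := by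
      rw [hty, hty]; exact setType_of_comm R R' hcomm
    obtain ⟨α, ε, Y, hcY, hLbox⟩ := germSet_box (Lf k R)
    obtain ⟨α', ε', Y', hcY', hLbox'⟩ := germSet_box (Lf k R')
    rw [hLbox, hLbox', setType_box, setType_box] at hLL
    obtain ⟨hY, hε, hα⟩ := normType_eq_iff.1 hLL
    subst hY
    obtain ⟨z, hz1, hz2⟩ := box_inter_nonempty hε hα
    have haa : af k R = af k R' := by
      have e1 := htr k R z (by rw [hLbox]; exact hz1)
      have e2 := htr k R' z (by rw [hLbox']; exact hz2)
      have := e1.symm.trans e2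
      exact add_right_cancel this
    apply germOf_eq_iff.2
    rw [hM, hM, hLbox, hLbox', vadd_box, vadd_box, setType_box, setType_box, haa]
    refine normType_eq_iff.2 ⟨rfl, hε, fun j hj => ?_⟩
    simp only [Pi.add_apply]
    rw [hα j hj]
  refine ⟨fun k => Quot.lift (fun R => germOf S' k (Mf k R)) (wd k), ?_⟩
  intro k x
  obtain ⟨R, hR⟩ := Quot.exists_rep x
  refine ⟨Lf k R, af k R, Mf k R, ?_, htr k R, hM k R, ?_⟩
  · rw [← hR]; exact germOf_eq_iff.2 (hty k R)
  · rw [← hR]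

lemma composite {N : ℕ} {S S' : Set (Fin N → ℤ)} {f g : (Fin N → ℤ) → (Fin N → ℤ)}
    (hgf : ∀ w ∈ S, g (f w) = w)
    {F : ∀ k, Germ S k → Germ S' k} {G : ∀ k, Germ S' k → Germ S k}
    (hF : ∀ k (x : Germ S k), ∃ (L : germSet S k) (a : Fin N → ℤ) (M : germSet S' k),
        germOf S k L = x ∧ (∀ z ∈ L.1, f z = a + z) ∧ M.1 = a +ᵥ L.1 ∧ F k x = germOf S' k M)
    (hG : ∀ k (y : Germ S' k), ∃ (L : germSet S' k) (a : Fin N → ℤ) (M : germSet S k),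
        germOf S' k L = y ∧ (∀ z ∈ L.1, g z = a + z) ∧ M.1 = a +ᵥ L.1 ∧ G k y = germOf S k M) :
    ∀ k (x : Germ S k), G k (F k x) = x := by
  intro k x
  obtain ⟨L, a, M, hL, htr, hM, hFx⟩ := hF k x
  obtain ⟨L2, b, M2, hL2, htr2, hM2, hGy⟩ := hG k (F k x)
  have ht2 : setType L2.1 = setType M.1 := germOf_eq_iff.1 (by rw [hL2, hFx])
  obtain ⟨α, ε, Y, hcY, hLbox⟩ := germSet_box L
  obtain ⟨β, δ, W, hcW, hL2box⟩ := germSet_box L2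
  have hMbox : M.1 = Box (a + α) ε Y := by rw [hM, hLbox, vadd_box]
  rw [hL2box, hMbox, setType_box, setType_box] at ht2
  obtain ⟨hWY, hδε, hβ⟩ := normType_eq_iff.1 ht2
  subst hWY
  obtain ⟨z, hz1, hz2⟩ := box_inter_nonempty hδε hβ
  have hzM : z ∈ M.1 := by rw [hMbox]; exact hz2
  rw [hM] at hzM
  obtain ⟨w, hw, hwz⟩ := Set.mem_vadd_set.1 hzM
  rw [vadd_eq_add] at hwz
  have hwS : w ∈ S := L.2.2 hw
  have hfw : f w = z := by rw [htr w hw, hwz]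
  have hgz : g z = w := by rw [← hfw, hgf w hwS]
  have hb : b = -a := by
    have := htr2 z (by rw [hL2box]; exact hz1)
    rw [hgz] at this
    have : b + z = w := this.symm
    have hzw : z = a + w := hwz.symm
    rw [hzw] at this
    funext j
    have := congrFun this j
    simp only [Pi.add_apply, Pi.neg_apply] at *
    omega
  rw [hGy, ← hL]
  apply germOf_eq_iff.2
  rw [hM2, hL2box, vadd_box, hLbox, setType_box, setType_box, hb]
  refine normType_eq_iff.2 ⟨rfl, fun j hj => (hδε j hj), fun j hj => ?_⟩
  have := hβ j hj
  simp only [Pi.add_apply, Pi.neg_apply] at *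
  omega

/-- The based orthant (pattern) attached to type data. -/
def pattBox {N : ℕ} (t : Finset (Fin N) × (Fin N → Bool) × (Fin N → ℤ)) : Set (Fin N → ℤ) :=
  Box 0 t.2.1 t.1

lemma pattBox_normType {N : ℕ} (a : Fin N → ℤ) (ε : Fin N → Bool) (Y : Finset (Fin N)) :
    pattBox (normType a ε Y) = Box 0 (fun j => if j ∈ Y then ε j else true) Y := rfl

lemma box_eq_vadd_pattBox {N : ℕ} (a : Fin N → ℤ) (ε : Fin N → Bool) (Y : Finset (Fin N)) :
    Box a ε Y = a +ᵥ pattBox (normType a ε Y) := by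
  rw [pattBox_normType, vadd_box, add_zero]
  exact box_congr_eps (fun j hj => by simp [hj])

lemma pattBox_based {N : ℕ} (a : Fin N → ℤ) (ε : Fin N → Bool) (Y : Finset (Fin N)) :
    IsBasedOrthant (pattBox (normType a ε Y)) :=
  isBasedOrthant_iff_box.2 ⟨_, _, rfl⟩

lemma pattBox_subset_indicator {N : ℕ} {S : Set (Fin N → ℤ)} {k : ℕ} (R : germSet S k) :
    pattBox (setType R.1) ⊆ indicatorImage S := by
  obtain ⟨b, ε, Y, hcY, hR⟩ := germSet_box R
  rw [hR, setType_box]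
  intro x hx
  refine Set.mem_sUnion.2 ⟨pattBox (normType b ε Y), ⟨pattBox_based b ε Y, b, ?_⟩, hx⟩
  rw [← box_eq_vadd_pattBox, ← hR]
  exact R.2.2

lemma isMaxGerm_of_patt_max {N : ℕ} {S : Set (Fin N → ℤ)} (p : Σ k, Germ S k)
    (R : germSet S p.1) (hR : germOf S p.1 R = p.2)
    (hmax : ∀ L1, IsBasedOrthant L1 → L1 ⊆ indicatorImage S →
        pattBox (setType R.1) ⊆ L1 → L1 ⊆ pattBox (setType R.1)) :
    IsMaxGerm S p := by
  rintro q ⟨A, B, hA, hB, hAB⟩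
  have htyA : setType A.1 = setType R.1 := germOf_eq_iff.1 (by rw [hA, ← hR])
  obtain ⟨α, ε, Y, hcY, hAbox⟩ := germSet_box A
  obtain ⟨β, δ, Z, hcZ, hBbox⟩ := germSet_box B
  have hAB' : Box α ε Y ⊆ Box β δ Z := by rw [← hAbox, ← hBbox]; exact hAB
  have sb := subBox_struct hAB'
  -- pattern of A is contained in pattern of B
  have hpatt : pattBox (setType A.1) ⊆ pattBox (setType B.1) := by
    rw [hAbox, hBbox, setType_box, setType_box, pattBox_normType, pattBox_normType]
    rintro y ⟨hy1, hy2⟩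
    refine ⟨fun j hj => ?_, fun j hj => ?_⟩
    · by_cases hjY : j ∈ Y
      · have := hy1 j hjY
        simp only [if_pos hj, if_pos hjY] at this ⊢
        rw [← sb.2.1 j hjY]
        exact this
      · rw [hy2 j hjY]
        simp only [if_pos hj]
        split <;> exact le_refl _
    · exact hy2 j (fun hc' => hj (sb.1 hc'))
  have hBpatt_based : IsBasedOrthant (pattBox (setType B.1)) := by
    rw [hBbox, setType_box]; exact pattBox_based β δ Z
  have heq : pattBox (setType B.1) = pattBox (setType A.1) := by
    apply Set.Subset.antisymm _ (by rw [htyA] at hpatt; rw [htyA]; exact hpatt)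
    rw [htyA]
    exact hmax _ hBpatt_based (pattBox_subset_indicator B) (htyA ▸ hpatt)
  -- hence Y = Z and the types of A and B agree
  have hbz : Z = Y ∧ ∀ j ∈ Z, (fun j => if j ∈ Z then δ j else true) j
      = (fun j => if j ∈ Y then ε j else true) j := by
    have := heq
    rw [hAbox, hBbox, setType_box, setType_box, pattBox_normType, pattBox_normType] at this
    obtain ⟨h1, h2, -⟩ := box_eq_struct this
    exact ⟨h1, h2⟩
  obtain ⟨hZY, hδε⟩ := hbz
  subst hZY
  have htyB : setType B.1 = setType A.1 := by
    rw [hAbox, hBbox, setType_box, setType_box]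
    refine normType_eq_iff.2 ⟨rfl, fun j hj => ?_, fun j hj => (sb.2.2.1 j hj).symm⟩
    have := hδε j hj
    simpa [hj] using this
  have hOB : IsOrthantOfRank B.1 p.1 := by
    rw [← hcY]
    exact isOrthantOfRank_iff_box.2 ⟨β, δ, Z, rfl, hBbox⟩
  refine ⟨B, ⟨B.1, hOB, B.2.2⟩, hB, ?_, subset_rfl⟩
  rw [← hR]
  apply germOf_eq_iff.2
  show setType B.1 = setType R.1
  rw [htyB, htyA]

lemma finite_max {N : ℕ} {S : Set (Fin N → ℤ)} (hS : IsOrthohedral S)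
    (C : (Σ k, Germ S k) → Prop) :
    Finite {p : Σ k, Germ S k // IsMaxGerm S p ∧ C p} := by
  classical
  obtain ⟨𝓚, hfin, horth, hU⟩ := hS
  haveI : Finite ↥𝓚 := hfin.to_subtype
  have key : ∀ z : {p : Σ k, Germ S k // IsMaxGerm S p ∧ C p},
      ∃ (K : ↥𝓚) (R : germSet S z.1.1), germOf S z.1.1 R = z.1.2 ∧
        setType R.1 = setType K.1 := by
    rintro ⟨⟨k, x⟩, hmax, -⟩
    obtain ⟨R, hR⟩ := Quot.exists_rep x
    obtain ⟨b, ε, Y, hcY, hRbox⟩ := germSet_box R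
    have hsub : Box b ε Y ⊆ ⋃₀ 𝓚 := by rw [← hU, ← hRbox]; exact R.2.2
    obtain ⟨K, hK, b', hb'fix, hsub1, hsub2⟩ := covering hfin horth hsub
    obtain ⟨mK, hmK⟩ := horth K hK
    obtain ⟨κ, δ, Z, hcZ, hKbox⟩ := isOrthantOfRank_iff_box.1 hmK
    have hKS : K ⊆ S := by rw [hU]; exact fun y hy => Set.mem_sUnion.2 ⟨K, hK, hy⟩
    have hYZ : Y ⊆ Z := by
      have := hsub2
      rw [hKbox] at this
      exact (subBox_struct this).1
    set KR : germSet S Z.card := ⟨K, isOrthantOfRank_iff_box.2 ⟨κ, δ, Z, rfl, hKbox⟩, hKS⟩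
      with hKR
    set q : Σ m, Germ S m := ⟨Z.card, germOf S Z.card KR⟩ with hq
    have hWS : Box b' ε Y ⊆ S := by
      intro y hy
      exact R.2.2 (by rw [hRbox]; exact hsub1 hy)
    have hle : germLE S ⟨k, x⟩ q := by
      refine ⟨⟨Box b' ε Y, isOrthantOfRank_iff_box.2 ⟨b', ε, Y, hcY, rfl⟩, hWS⟩, KR, ?_, rfl, hsub2⟩
      show germOf S k _ = x
      rw [← hR]
      apply germOf_eq_iff.2
      show setType (Box b' ε Y) = setType R.1
      rw [hRbox, setType_box, setType_box]
      exact normType_eq_iff.2 ⟨rfl, fun j _ => rfl, hb'fix⟩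
    obtain ⟨U, V, hUq, hVx, hUV⟩ := hmax q hle
    obtain ⟨u, η, Zu, hcZu, hUbox⟩ := germSet_box U
    obtain ⟨v, θ, Yv, hcYv, hVbox⟩ := germSet_box V
    have htyU : setType U.1 = setType K := by
      have : germOf S Z.card U = germOf S Z.card KR := by rw [hUq]
      exact germOf_eq_iff.1 this
    have htyV : setType V.1 = setType R.1 := germOf_eq_iff.1 (hVx.trans hR.symm)
    have hZu : Zu = Z := by
      have := htyU
      rw [hUbox, hKbox, setType_box, setType_box] at this
      exact (normType_eq_iff.1 this).1
    have hYv : Yv = Y := by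
      have := htyV
      rw [hVbox, hRbox, setType_box, setType_box] at this
      exact (normType_eq_iff.1 this).1
    have hUV' : Box u η Zu ⊆ Box v θ Yv := by rw [← hUbox, ← hVbox]; exact hUV
    have sb := subBox_struct hUV'
    have hZY : Z = Y := le_antisymm (by rw [← hZu, ← hYv]; exact sb.1) hYZ
    have hZuYv : Zu = Yv := by rw [hZu, hYv, hZY]
    refine ⟨⟨K, hK⟩, R, hR, ?_⟩
    rw [← htyV, ← htyU, hUbox, hVbox, setType_box, setType_box]
    refine normType_eq_iff.2 ⟨hZuYv.symm, fun j hj => ?_, fun j hj => ?_⟩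
    · exact (sb.2.1 j (hZuYv ▸ hj)).symm
    · exact (sb.2.2.1 j hj).symm
  choose Kf Rf hRf hTf using key
  apply Finite.of_injective Kf
  rintro ⟨⟨k, x⟩, hz⟩ ⟨⟨k', x'⟩, hz'⟩ hKK
  have hty : setType (Rf ⟨⟨k, x⟩, hz⟩).1 = setType (Rf ⟨⟨k', x'⟩, hz'⟩).1 := by
    rw [hTf, hTf, hKK]
  obtain ⟨b, ε, Y, hcY, hbox⟩ := germSet_box (Rf ⟨⟨k, x⟩, hz⟩)
  obtain ⟨b', ε', Y', hcY', hbox'⟩ := germSet_box (Rf ⟨⟨k', x'⟩, hz'⟩)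
  have hYY : Y = Y' := by
    rw [hbox, hbox', setType_box, setType_box] at hty
    exact (normType_eq_iff.1 hty).1
  have hk1 : Y.card = k := hcY
  have hk2 : Y'.card = k' := hcY'
  have hkk : k = k' := by rw [← hk1, ← hk2, hYY]
  subst hkk
  have hg1 : germOf S k (Rf ⟨⟨k, x⟩, hz⟩) = x := hRf ⟨⟨k, x⟩, hz⟩
  have hg2 : germOf S k (Rf ⟨⟨k, x'⟩, hz'⟩) = x' := hRf ⟨⟨k, x'⟩, hz'⟩
  have hxx : x = x' := by
    rw [← hg1, ← hg2]
    exact germOf_eq_iff.2 hty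
  subst hxx
  rfl

lemma patt_max_of_isMaxGerm {N : ℕ} {S : Set (Fin N → ℤ)} (hS : IsOrthohedral S)
    (hq : QuasiNormal S) {p : Σ k, Germ S k} (hp : IsMaxGerm S p)
    (R : germSet S p.1) (hR : germOf S p.1 R = p.2) :
    ∀ L1, IsBasedOrthant L1 → L1 ⊆ indicatorImage S →
      pattBox (setType R.1) ⊆ L1 → L1 ⊆ pattBox (setType R.1) := by
  obtain ⟨b, ε, Y, hcY, hRbox⟩ := germSet_box R
  have hbased : IsBasedOrthant (pattBox (setType R.1)) := by
    rw [hRbox, setType_box]; exact pattBox_based b ε Y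
  have hpos : 0 < hFun S (pattBox (setType R.1)) := by
    rw [hFun]
    rw [Nat.card_pos_iff]
    constructor
    · exact ⟨⟨p, hp, R, hR, b, by rw [hRbox, setType_box]; exact box_eq_vadd_pattBox b ε Y⟩⟩
    · exact finite_max hS _
  exact ((hq (pattBox (setType R.1))).2 ⟨hbased, hpos⟩).2.2

lemma indicator_sub {N : ℕ} {S S' : Set (Fin N → ℤ)} {f : (Fin N → ℤ) → (Fin N → ℤ)}
    (hpet : IsPetMapOn S f) (himg : f '' S = S') :
    indicatorImage S ⊆ indicatorImage S' := by
  intro x hx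
  obtain ⟨L0, ⟨hbased, a, hsub⟩, hxL0⟩ := Set.mem_sUnion.1 hx
  obtain ⟨ε, Y, hL0⟩ := isBasedOrthant_iff_box.1 hbased
  have hvb : a +ᵥ L0 = Box a ε Y := by rw [hL0, vadd_box, add_zero]
  set R : germSet S Y.card := ⟨Box a ε Y, isOrthantOfRank_iff_box.2 ⟨a, ε, Y, rfl, rfl⟩,
    by rw [← hvb]; exact hsub⟩ with hRdef
  obtain ⟨L, a', M, hty, hLR, htr, hM⟩ := exists_image_rep hpet himg R
  obtain ⟨β, ε', Y', hcY', hLbox⟩ := germSet_box L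
  have : setType L.1 = setType (Box a ε Y) := hty
  rw [hLbox, setType_box, setType_box] at this
  obtain ⟨hYY, hεε, hββ⟩ := normType_eq_iff.1 this
  subst hYY
  refine Set.mem_sUnion.2 ⟨L0, ⟨hbased, a' + β, ?_⟩, hxL0⟩
  have : (a' + β) +ᵥ L0 = Box (a' + β) ε Y' := by rw [hL0, vadd_box, add_zero]
  rw [this]
  have hMbox : M.1 = Box (a' + β) ε' Y' := by rw [hM, hLbox, vadd_box]
  rw [← box_congr_eps hεε, ← hMbox]
  exact M.2.2

lemma max_transfer {N : ℕ} {S S' : Set (Fin N → ℤ)} {f : (Fin N → ℤ) → (Fin N → ℤ)}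
    (hS : IsOrthohedral S) (hq : QuasiNormal S)
    (hind : indicatorImage S = indicatorImage S')
    {F : ∀ k, Germ S k → Germ S' k}
    (hF : ∀ k (x : Germ S k), ∃ (L : germSet S k) (a : Fin N → ℤ) (M : germSet S' k),
        germOf S k L = x ∧ (∀ z ∈ L.1, f z = a + z) ∧ M.1 = a +ᵥ L.1 ∧ F k x = germOf S' k M)
    (p : Σ k, Germ S k) (hp : IsMaxGerm S p) : IsMaxGerm S' ⟨p.1, F p.1 p.2⟩ := by
  obtain ⟨L, a, M, hL, htr, hM, hFx⟩ := hF p.1 p.2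
  obtain ⟨α, ε, Y, hcY, hLbox⟩ := germSet_box L
  have hpatt : pattBox (setType M.1) = pattBox (setType L.1) := by
    have hMbox : M.1 = Box (a + α) ε Y := by rw [hM, hLbox, vadd_box]
    rw [hMbox, hLbox, setType_box, setType_box, pattBox_normType, pattBox_normType]
  apply isMaxGerm_of_patt_max ⟨p.1, F p.1 p.2⟩ M hFx.symm
  intro L1 h1 h2 h3
  rw [hpatt]
  exact patt_max_of_isMaxGerm hS hq hp L hL L1 h1 (by rw [hind]; exact h2) (by rw [← hpatt]; exact h3)

lemma comm_self {N : ℕ} {S : Set (Fin N → ℤ)} {k : ℕ} (R : germSet S k) :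
    Commensurable R.1 R.1 := by
  obtain ⟨b, ε, Y, hcY, hRbox⟩ := germSet_box R
  refine ⟨?_, by rw [Set.inter_self], by rw [Set.inter_self]⟩
  rw [Set.inter_self, hRbox]
  exact box_nonempty b ε Y

lemma cond_transfer {N : ℕ} {S S' : Set (Fin N → ℤ)} {k : ℕ} {x : Germ S k} {y : Germ S' k}
    {L0 : Set (Fin N → ℤ)}
    (hs : ∃ (L : germSet S k) (a : Fin N → ℤ) (M : germSet S' k),
        germOf S k L = x ∧ M.1 = a +ᵥ L.1 ∧ germOf S' k M = y)
    (h : ∃ L : germSet S k, germOf S k L = x ∧ ∃ a : Fin N → ℤ, L.1 = a +ᵥ L0) :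
    ∃ M : germSet S' k, germOf S' k M = y ∧ ∃ a : Fin N → ℤ, M.1 = a +ᵥ L0 := by
  obtain ⟨L2, a, M, hL2, hM, hMy⟩ := hs
  obtain ⟨L, hL, c, hLc⟩ := h
  have hty : setType L.1 = setType L2.1 := germOf_eq_iff.1 (hL.trans hL2.symm)
  obtain ⟨lam, ε, Y, hcY, hLbox⟩ := germSet_box L
  obtain ⟨mu, ε2, Y2, hcY2, hL2box⟩ := germSet_box L2
  rw [hLbox, hL2box, setType_box, setType_box] at hty
  obtain ⟨hYY, hεε, hmm⟩ := normType_eq_iff.1 hty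
  subst hYY
  have hL0 : L0 = Box (-c + lam) ε Y := by
    have h2 : (-c) +ᵥ L.1 = (-c) +ᵥ (c +ᵥ L0) := by rw [hLc]
    rw [vadd_vadd, neg_add_cancel, zero_vadd] at h2
    rw [← h2, hLbox, vadd_box]
  refine ⟨M, hMy, a + mu - (-c + lam), ?_⟩
  have harr : (a + mu - (-c + lam)) + (-c + lam) = a + mu := by
    funext j
    simp only [Pi.add_apply, Pi.sub_apply, Pi.neg_apply]
    ring
  have h1 : (a + mu - (-c + lam)) +ᵥ L0 = Box (a + mu) ε Y := by
    rw [hL0, vadd_box, harr]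
  rw [h1, hM, hL2box, vadd_box]
  exact box_congr_eps (fun j hj => (hεε j hj).symm)

/-- A pet-isomorphism between quasi-normal orthohedral sets maps maximal
germs bijectively to maximal germs and preserves the height functions. -/
theorem stmt7 {N : ℕ} (S S' : Set (Fin N → ℤ)) (hS : IsOrthohedral S)
    (hS' : IsOrthohedral S') (hq : QuasiNormal S) (hq' : QuasiNormal S')
    (f : (Fin N → ℤ) → (Fin N → ℤ)) (hf : IsPetIso S S' f) :
    (∃ e : {p : Σ k, Germ S k // IsMaxGerm S p} ≃ {q : Σ k, Germ S' k // IsMaxGerm S' q},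
      ∀ p, GermMapsTo f S S' p.1 (e p).1) ∧
    (∀ L0 : Set (Fin N → ℤ), hFun S L0 = hFun S' L0) := by
  classical
  obtain ⟨hpet, hinj, himg⟩ := hf
  -- construct the inverse pet-map g
  set g : (Fin N → ℤ) → (Fin N → ℤ) :=
    fun y => if h : ∃ x ∈ S, f x = y then h.choose else y with hgdef
  have hgf : ∀ w ∈ S, g (f w) = w := by
    intro w hw
    have h : ∃ x ∈ S, f x = f w := ⟨w, hw, rfl⟩
    have : g (f w) = h.choose := by rw [hgdef]; exact dif_pos h
    rw [this]
    exact hinj h.choose_spec.1 hw h.choose_spec.2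
  have hfg : ∀ y ∈ S', f (g y) = y := by
    intro y hy
    rw [← himg] at hy
    obtain ⟨x, hx, rfl⟩ := hy
    rw [hgf x hx]
  have hgS' : g '' S' = S := by
    ext w
    constructor
    · rintro ⟨y, hy, rfl⟩
      rw [← himg] at hy
      obtain ⟨x, hx, rfl⟩ := hy
      rw [hgf x hx]; exact hx
    · intro hw
      exact ⟨f w, himg ▸ ⟨w, hw, rfl⟩, hgf w hw⟩
  have hpetg : IsPetMapOn S' g := by
    obtain ⟨𝓛, hfin, horth, hSU, hdis, htrans⟩ := hpet
    have hPS : ∀ P ∈ 𝓛, P ⊆ S := fun P hP => by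
      rw [hSU]; exact fun y hy => Set.mem_sUnion.2 ⟨P, hP, hy⟩
    refine ⟨(fun P => f '' P) '' 𝓛, hfin.image _, ?_, ?_, ?_, ?_⟩
    · rintro Q ⟨P, hP, rfl⟩
      obtain ⟨m, hm⟩ := horth P hP
      obtain ⟨p0, δ, Z, hcZ, hPbox⟩ := isOrthantOfRank_iff_box.1 hm
      obtain ⟨aP, haP⟩ := htrans P hP
      refine ⟨m, isOrthantOfRank_iff_box.2 ⟨aP + p0, δ, Z, hcZ, ?_⟩⟩
      show f '' P = Box (aP + p0) δ Z
      rw [image_translation haP, hPbox, vadd_box]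
    · ext y
      constructor
      · intro hy
        rw [← himg] at hy
        obtain ⟨x, hx, rfl⟩ := hy
        rw [hSU] at hx
        obtain ⟨P, hP, hxP⟩ := Set.mem_sUnion.1 hx
        exact Set.mem_sUnion.2 ⟨f '' P, ⟨P, hP, rfl⟩, ⟨x, hxP, rfl⟩⟩
      · intro hy
        obtain ⟨Q, ⟨P, hP, rfl⟩, hyQ⟩ := Set.mem_sUnion.1 hy
        obtain ⟨x, hxP, rfl⟩ := hyQ
        rw [← himg]
        exact ⟨x, hPS P hP hxP, rfl⟩
    · rintro u ⟨P, hP, rfl⟩ v ⟨Q, hQ, rfl⟩ huv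
      have hPQ : P ≠ Q := fun h => huv (by rw [h])
      have hdisPQ : Disjoint P Q := hdis hP hQ hPQ
      show Disjoint (f '' P) (f '' Q)
      rw [Set.disjoint_left]
      rintro y ⟨p, hp, rfl⟩ ⟨q, hq, hqy⟩
      have : q = p := hinj (hPS Q hQ hq) (hPS P hP hp) hqy
      rw [this] at hq
      exact Set.disjoint_left.1 hdisPQ hp hq
    · rintro Q ⟨P, hP, rfl⟩
      obtain ⟨aP, haP⟩ := htrans P hP
      refine ⟨-aP, ?_⟩
      rintro y ⟨x, hx, rfl⟩
      rw [hgf x (hPS P hP hx), haP x hx]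
      funext j
      simp only [Pi.add_apply, Pi.neg_apply]
      ring
  obtain ⟨F, hF⟩ := engine hpet himg
  obtain ⟨G, hG⟩ := engine hpetg hgS'
  have hGF := composite hgf hF hG
  have hFG := composite hfg hG hF
  have hind : indicatorImage S = indicatorImage S' :=
    Set.Subset.antisymm (indicator_sub hpet himg) (indicator_sub hpetg hgS')
  have hmaxF : ∀ p : Σ k, Germ S k, IsMaxGerm S p → IsMaxGerm S' ⟨p.1, F p.1 p.2⟩ :=
    fun p hp => max_transfer hS hq hind hF p hp
  have hmaxG : ∀ p : Σ k, Germ S' k, IsMaxGerm S' p → IsMaxGerm S ⟨p.1, G p.1 p.2⟩ :=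
    fun p hp => max_transfer hS' hq' hind.symm hG p hp
  constructor
  · refine ⟨⟨fun z => ⟨⟨z.1.1, F z.1.1 z.1.2⟩, hmaxF z.1 z.2⟩,
      fun z => ⟨⟨z.1.1, G z.1.1 z.1.2⟩, hmaxG z.1 z.2⟩, ?_, ?_⟩, ?_⟩
    · intro z
      exact Subtype.ext (congrArg (Sigma.mk z.1.1) (hGF z.1.1 z.1.2))
    · intro z
      exact Subtype.ext (congrArg (Sigma.mk z.1.1) (hFG z.1.1 z.1.2))
    · intro p
      obtain ⟨L, a, M, hL, htr, hM, hFx⟩ := hF p.1.1 p.1.2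
      refine ⟨rfl, L, L.1, M, hL, L.2.1, subset_rfl, comm_self L, ?_, hFx.symm⟩
      rw [image_translation htr]
      exact hM
  · intro L0
    rw [hFun, hFun]
    apply Nat.card_congr
    refine ⟨fun z => ⟨⟨z.1.1, F z.1.1 z.1.2⟩, hmaxF z.1 z.2.1, ?_⟩,
      fun z => ⟨⟨z.1.1, G z.1.1 z.1.2⟩, hmaxG z.1 z.2.1, ?_⟩, ?_, ?_⟩
    · obtain ⟨L, a, M, hL, htr, hM, hFx⟩ := hF z.1.1 z.1.2
      exact cond_transfer ⟨L, a, M, hL, hM, hFx.symm⟩ z.2.2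
    · obtain ⟨L, a, M, hL, htr, hM, hGx⟩ := hG z.1.1 z.1.2
      exact cond_transfer ⟨L, a, M, hL, hM, hGx.symm⟩ z.2.2
    · intro z
      exact Subtype.ext (congrArg (Sigma.mk z.1.1) (hGF z.1.1 z.1.2))
    · intro z
      exact Subtype.ext (congrArg (Sigma.mk z.1.1) (hFG z.1.1 z.1.2))


end PeiPaper
end

section
/- For any orthohedral set S and any k, the group G_k(S) of pei-permutations of S of rank ≤ k acts on the set Γ^k(S) of rank-k germs of S by finitary permutations, and this action is highly transitive: every bijection f: F → F' between finite subsets of Γ^k(S) is induced by some element of G_k(S). -/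
open Pointwise

theorem Equiv.Perm.inv_apply_self {α : Type*} (f : Equiv.Perm α) (x : α) : f⁻¹ (f x) = x :=
  f.symm_apply_apply x

theorem Equiv.Perm.apply_inv_self {α : Type*} (f : Equiv.Perm α) (x : α) : f (f⁻¹ x) = x :=
  f.apply_symm_apply x

theorem Equiv.apply_inv_self {α : Type*} (f : Equiv.Perm α) (x : α) : f (f⁻¹ x) = x :=
  f.apply_symm_apply x

namespace PeiPaper

/-! ### Infrastructure: rays, cells (canonical orthants) -/

section Cells

open Classical in
noncomputable instance : DecidableEq (Fin 0 → ℤ) := Classical.decEq _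

/-- A ray or point in `ℤ`: `(c, none)` is the point `c`, `(c, some true)` is `[c, ∞)`,
`(c, some false)` is `(-∞, c]`. -/
abbrev ZRay := ℤ × Option Bool

def memR (n : ℤ) (r : ZRay) : Prop :=
  match r.2 with
  | none => n = r.1
  | some true => r.1 ≤ n
  | some false => n ≤ r.1

instance (n : ℤ) (r : ZRay) : Decidable (memR n r) := by
  unfold memR; cases r.2 with
  | none => exact inferInstance
  | some b => cases b <;> exact inferInstance

/-- Description of a canonical orthant: a ray or point in each coordinate. -/
abbrev ODesc (N : ℕ) := Fin N → ZRay

def CellOf {N : ℕ} (ρ : ODesc N) : Set (Fin N → ℤ) := {x | ∀ i, memR (x i) (ρ i)}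

/-- The rank of a cell description. -/
def rkD {N : ℕ} (ρ : ODesc N) : ℕ := (Finset.univ.filter fun i => (ρ i).2 ≠ none).card

def baseD {N : ℕ} (ρ : ODesc N) : Fin N → ℤ := fun i => (ρ i).1

lemma baseD_mem {N : ℕ} (ρ : ODesc N) : baseD ρ ∈ CellOf ρ := by
  intro i
  rcases r : (ρ i).2 with _ | b
  · simp [memR, r, baseD]
  · cases b <;> simp [memR, r, baseD]

lemma cell_nonempty {N : ℕ} (ρ : ODesc N) : (CellOf ρ).Nonempty := ⟨baseD ρ, baseD_mem ρ⟩

lemma update_mem {N : ℕ} (ρ : ODesc N) (i : Fin N) (v : ℤ) (hv : memR v (ρ i)) :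
    Function.update (baseD ρ) i v ∈ CellOf ρ := by
  intro j
  by_cases h : j = i
  · subst h; simpa using hv
  · rw [Function.update_of_ne h]; exact baseD_mem ρ j

/-- Pushing a ray deeper in its own direction. -/
def pushR (r : ZRay) (m : ℤ) : ZRay :=
  match r.2 with
  | none => r
  | some true => (max r.1 m, some true)
  | some false => (min r.1 m, some false)

lemma pushR_snd (r : ZRay) (m : ℤ) : (pushR r m).2 = r.2 := by
  rcases r with ⟨c, _ | b⟩
  · rfl
  · cases b <;> rfl

lemma mem_pushR {n : ℤ} {r : ZRay} {m : ℤ} (h : memR n (pushR r m)) : memR n r := by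
  rcases r with ⟨c, _ | b⟩
  · exact h
  · cases b <;> simp [memR, pushR] at h ⊢ <;> omega

def pushD {N : ℕ} (ρ : ODesc N) (b : Fin N → ℤ) : ODesc N := fun i => pushR (ρ i) (b i)

lemma pushD_subset {N : ℕ} (ρ : ODesc N) (b : Fin N → ℤ) : CellOf (pushD ρ b) ⊆ CellOf ρ :=
  fun _ hx i => mem_pushR (hx i)

/-- Equivalence of descriptions: same shape in each coordinate, and same base point in the
point coordinates.  Cells of equivalent rank-`k` descriptions are commensurable. -/
def EquivD {N : ℕ} (ρ ρ' : ODesc N) : Prop :=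
  ∀ i, (ρ i).2 = (ρ' i).2 ∧ ((ρ i).2 = none → (ρ i).1 = (ρ' i).1)

lemma EquivD.refl {N : ℕ} (ρ : ODesc N) : EquivD ρ ρ := fun _ => ⟨rfl, fun _ => rfl⟩

lemma EquivD.symm {N : ℕ} {ρ ρ' : ODesc N} (h : EquivD ρ ρ') : EquivD ρ' ρ := by
  intro i
  refine ⟨(h i).1.symm, fun hn => ?_⟩
  exact ((h i).2 (by rw [(h i).1]; exact hn)).symm

lemma EquivD.trans {N : ℕ} {ρ₁ ρ₂ ρ₃ : ODesc N} (h : EquivD ρ₁ ρ₂) (h' : EquivD ρ₂ ρ₃) :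
    EquivD ρ₁ ρ₃ := by
  intro i
  refine ⟨(h i).1.trans (h' i).1, fun hn => ?_⟩
  exact ((h i).2 hn).trans ((h' i).2 (by rw [← (h i).1]; exact hn))

lemma rkD_eq_of_equiv {N : ℕ} {ρ ρ' : ODesc N} (h : EquivD ρ ρ') : rkD ρ = rkD ρ' := by
  unfold rkD
  congr 1
  apply Finset.filter_congr
  intro i _
  simp [(h i).1]

lemma pushD_equiv {N : ℕ} (ρ : ODesc N) (b : Fin N → ℤ) : EquivD (pushD ρ b) ρ := by
  intro i
  refine ⟨pushR_snd _ _, fun hn => ?_⟩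
  rcases r : (ρ i).2 with _ | b'
  · simp [pushD, pushR, r]
  · rw [pushD, pushR_snd] at hn; rw [r] at hn; exact absurd hn (by simp)

lemma rkD_pushD {N : ℕ} (ρ : ODesc N) (b : Fin N → ℤ) : rkD (pushD ρ b) = rkD ρ :=
  rkD_eq_of_equiv (pushD_equiv ρ b)

@[simp] lemma memR_pt {n c : ℤ} : memR n (c, none) ↔ n = c := Iff.rfl
@[simp] lemma memR_up {n c : ℤ} : memR n (c, some true) ↔ c ≤ n := Iff.rfl
@[simp] lemma memR_dn {n c : ℤ} : memR n (c, some false) ↔ n ≤ c := Iff.rfl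

/-- Intersection of cells of equivalent descriptions. -/
lemma inter_equiv_cells {N : ℕ} {ρ ρ' : ODesc N} (h : EquivD ρ ρ') :
    CellOf ρ ∩ CellOf ρ' = CellOf (pushD ρ (baseD ρ')) := by
  ext x
  simp only [Set.mem_inter_iff, CellOf, Set.mem_setOf_eq]
  have key : ∀ i, (memR (x i) (ρ i) ∧ memR (x i) (ρ' i)) ↔ memR (x i) (pushD ρ (baseD ρ') i) := by
    intro i
    have hsnd := (h i).1
    have hfst := (h i).2
    rcases hr : ρ i with ⟨c, o⟩
    rcases hr' : ρ' i with ⟨c', o'⟩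
    rw [hr, hr'] at hsnd hfst
    simp only at hsnd hfst
    subst hsnd
    simp only [pushD, hr, baseD, hr']
    rcases o with _ | b
    · simp only [pushR]
      have := hfst rfl
      subst this
      constructor
      · rintro ⟨h1, _⟩; exact h1
      · intro h1; exact ⟨h1, by rw [memR_pt] at h1 ⊢; omega⟩
    · cases b <;> simp [pushR, memR] <;> omega
  constructor
  · rintro ⟨h1, h2⟩ i; exact (key i).mp ⟨h1 i, h2 i⟩
  · intro hx; exact ⟨fun i => ((key i).mpr (hx i)).1, fun i => ((key i).mpr (hx i)).2⟩

end Cells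
section CellOrder

/-- If a cell is contained in another, its set of non-constant coordinates is smaller. -/
lemma filter_sub_of_cell_sub {N : ℕ} {ρ' ρ : ODesc N} (h : CellOf ρ' ⊆ CellOf ρ) :
    (Finset.univ.filter fun i => (ρ' i).2 ≠ none) ⊆ (Finset.univ.filter fun i => (ρ i).2 ≠ none) := by
  intro i hi
  simp only [Finset.mem_filter, Finset.mem_univ, true_and] at hi ⊢
  intro hnone
  rcases hr' : ρ' i with ⟨c', o'⟩
  rw [hr'] at hi
  simp only at hi
  have h1 := h (baseD_mem ρ') i
  -- a second point of CellOf ρ' differing at i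
  rcases o' with _ | b
  · exact hi rfl
  · have hv : memR (if b then c' + 1 else c' - 1) (ρ' i) := by
      rw [hr']; cases b <;> simp <;> omega
    have h2 := h (update_mem ρ' i _ hv) i
    rw [Function.update_self] at h2
    rcases hr : ρ i with ⟨c, o⟩
    rw [hr] at hnone
    simp only at hnone
    subst hnone
    rw [hr] at h1 h2
    rw [memR_pt] at h1 h2
    have hbb : baseD ρ' i = c' := by simp [baseD, hr']
    rw [hbb] at h1
    cases b <;> omega

lemma rkD_le_of_cell_sub {N : ℕ} {ρ' ρ : ODesc N} (h : CellOf ρ' ⊆ CellOf ρ) :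
    rkD ρ' ≤ rkD ρ :=
  Finset.card_le_card (filter_sub_of_cell_sub h)

/-- A full-rank subcell has an equivalent description. -/
lemma equiv_of_cell_sub {N : ℕ} {ρ' ρ : ODesc N} (h : CellOf ρ' ⊆ CellOf ρ)
    (hrk : rkD ρ' = rkD ρ) : EquivD ρ' ρ := by
  have hfil : (Finset.univ.filter fun i => (ρ' i).2 ≠ none)
      = (Finset.univ.filter fun i => (ρ i).2 ≠ none) :=
    Finset.eq_of_subset_of_card_le (filter_sub_of_cell_sub h) (le_of_eq hrk.symm)
  intro i
  have hiff : (ρ' i).2 = none ↔ (ρ i).2 = none := by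
    have := Finset.ext_iff.mp hfil i
    simp only [Finset.mem_filter, Finset.mem_univ, true_and] at this
    tauto
  have h1 := h (baseD_mem ρ') i
  rcases hr' : ρ' i with ⟨c', o'⟩
  rcases hr : ρ i with ⟨c, o⟩
  rw [hr', hr] at hiff
  simp only at hiff
  rw [hr] at h1
  have hb : baseD ρ' i = c' := by simp [baseD, hr']
  rw [hb] at h1
  rcases o' with _ | b
  · have : o = none := hiff.mp rfl
    subst this
    rw [memR_pt] at h1
    exact ⟨rfl, fun _ => h1⟩
  · rcases o with _ | b'
    · exact absurd (hiff.mpr rfl) (by simp)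
    · -- both rays; show directions equal
      refine ⟨?_, fun hn => by simp at hn⟩
      simp only
      congr 1
      by_contra hne
      have hbb' : b' = !b := by cases b <;> cases b' <;> simp_all
      -- take a point of CellOf ρ' very deep in direction b
      have hv : memR (if b then max c' (c+1) else min c' (c-1)) (ρ' i) := by
        rw [hr']; cases b <;> simp <;> omega
      have h2 := h (update_mem ρ' i _ hv) i
      rw [Function.update_self, hr] at h2
      subst hbb'
      cases b <;> simp at h2 <;> omega

/-- Compatibility of a ray with a second ray: the second constraint is satisfiable
arbitrarily deep in the direction of the first. -/
def compatR (r r' : ZRay) : Prop :=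
  match r.2, r'.2 with
  | none, _ => memR r.1 r'
  | some true, some true => (True : Prop)
  | some false, some false => (True : Prop)
  | _, _ => (False : Prop)

lemma avoid_of_not_compat {r r' : ZRay} (h : ¬ compatR r r') :
    ∃ m, ∀ n, memR n (pushR r m) → ¬ memR n r' := by
  obtain ⟨c, o⟩ := r
  obtain ⟨c', o'⟩ := r'
  rcases o with _ | b
  · refine ⟨0, fun n hn => ?_⟩
    simp only [pushR, memR_pt] at hn
    subst hn
    exact fun hmem => h hmem
  · cases b
    · rcases o' with _ | b'
      · exact ⟨c' - 1, fun n hn hmem => by simp [pushR] at hn; rw [memR_pt] at hmem; omega⟩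
      · cases b'
        · simp [compatR] at h
        · exact ⟨c' - 1, fun n hn hmem => by simp [pushR] at hn; rw [memR_up] at hmem; omega⟩
    · rcases o' with _ | b'
      · exact ⟨c' + 1, fun n hn hmem => by simp [pushR] at hn; rw [memR_pt] at hmem; omega⟩
      · cases b'
        · exact ⟨c' + 1, fun n hn hmem => by simp [pushR] at hn; rw [memR_dn] at hmem; omega⟩
        · simp [compatR] at h

lemma stable_of_compat {r r' : ZRay} (h : compatR r r') :
    ∀ n, memR n (pushR r r'.1) → memR n r' := by
  intro n hn
  obtain ⟨c, o⟩ := r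
  obtain ⟨c', o'⟩ := r'
  rcases o with _ | b
  · simp only [pushR, memR_pt] at hn
    subst hn
    exact h
  · cases b <;> rcases o' with _ | b' <;> (try cases b') <;> (try simp [compatR] at h) <;>
      simp only [pushR, memR_up, memR_dn] at hn ⊢ <;> omega

/-- Dichotomy: a cell either has a full subcell inside another cell, or a full subcell
disjoint from it. -/
lemma cell_dichotomy {N : ℕ} (ρ ρ' : ODesc N) :
    (∃ ρ₂, EquivD ρ₂ ρ ∧ CellOf ρ₂ ⊆ CellOf ρ ∧ CellOf ρ₂ ⊆ CellOf ρ') ∨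
    (∃ ρ₂, EquivD ρ₂ ρ ∧ CellOf ρ₂ ⊆ CellOf ρ ∧ CellOf ρ₂ ∩ CellOf ρ' = ∅) := by
  by_cases hc : ∀ i, compatR (ρ i) (ρ' i)
  · left
    refine ⟨pushD ρ (fun i => (ρ' i).1), pushD_equiv _ _, pushD_subset _ _, ?_⟩
    intro x hx i
    exact stable_of_compat (hc i) _ (hx i)
  · right
    push_neg at hc
    obtain ⟨i₀, hi₀⟩ := hc
    obtain ⟨m, hm⟩ := avoid_of_not_compat hi₀
    refine ⟨pushD ρ (Function.update (baseD ρ) i₀ m), pushD_equiv _ _, pushD_subset _ _, ?_⟩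
    apply Set.eq_empty_of_forall_notMem
    rintro x ⟨hx1, hx2⟩
    have := hx1 i₀
    simp only [pushD, Function.update_self] at this
    exact hm _ this (hx2 i₀)

/-- Pigeonhole: a cell covered by finitely many cells has a full subcell inside one of them. -/
lemma pigeon_cover {N : ℕ} (𝓟 : Finset (ODesc N)) :
    ∀ ρ : ODesc N, CellOf ρ ⊆ (⋃ ρ' ∈ 𝓟, CellOf ρ') →
    ∃ ρ' ∈ 𝓟, ∃ ρ₂, EquivD ρ₂ ρ ∧ CellOf ρ₂ ⊆ CellOf ρ ∧ CellOf ρ₂ ⊆ CellOf ρ' := by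
  induction 𝓟 using Finset.induction_on with
  | empty =>
    intro ρ hρ
    obtain ⟨x, hx⟩ := cell_nonempty ρ
    simpa using hρ hx
  | @insert ρ' 𝓟 _ ih =>
    intro ρ hρ
    rcases cell_dichotomy ρ ρ' with ⟨ρ₂, he, hs, hs'⟩ | ⟨ρ₂, he, hs, hd⟩
    · exact ⟨ρ', Finset.mem_insert_self _ _, ρ₂, he, hs, hs'⟩
    · have hsub : CellOf ρ₂ ⊆ (⋃ ρ'' ∈ 𝓟, CellOf ρ'') := by
        intro x hx
        have := hρ (hs hx)
        simp only [Set.mem_iUnion, exists_prop] at this ⊢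
        rcases this with ⟨ρ'', hm, hx'⟩
        rcases Finset.mem_insert.mp hm with rfl | hm'
        · exact absurd (Set.mem_inter hx hx') (by rw [hd]; exact Set.notMem_empty x)
        · exact ⟨ρ'', hm', hx'⟩
      obtain ⟨ρ'', hm, ρ₃, he3, hs3, hs3'⟩ := ih ρ₂ hsub
      exact ⟨ρ'', Finset.mem_insert_of_mem hm, ρ₃, he3.trans he, hs3.trans hs, hs3'⟩

/-- If no member of the family admits a full subcell of `ρ`, then there is a full subcell
of `ρ` avoiding the whole family. -/
lemma avoid_all {N : ℕ} (𝓟 : Finset (ODesc N)) :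
    ∀ ρ : ODesc N,
    (∀ ρ' ∈ 𝓟, ¬ ∃ ρ₂, EquivD ρ₂ ρ ∧ CellOf ρ₂ ⊆ CellOf ρ ∧ CellOf ρ₂ ⊆ CellOf ρ') →
    ∃ ρ₂, EquivD ρ₂ ρ ∧ CellOf ρ₂ ⊆ CellOf ρ ∧ ∀ ρ' ∈ 𝓟, CellOf ρ₂ ∩ CellOf ρ' = ∅ := by
  induction 𝓟 using Finset.induction_on with
  | empty =>
    intro ρ _
    exact ⟨ρ, EquivD.refl ρ, le_refl _, by simp⟩
  | @insert ρ' 𝓟 hni ih =>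
    intro ρ hρ
    rcases cell_dichotomy ρ ρ' with ⟨ρ₂, he, hs, hs'⟩ | ⟨ρ₂, he, hs, hd⟩
    · exact absurd ⟨ρ₂, he, hs, hs'⟩ (hρ ρ' (Finset.mem_insert_self _ _))
    · have hρ₂ : ∀ ρ'' ∈ 𝓟, ¬ ∃ ρ₃, EquivD ρ₃ ρ₂ ∧ CellOf ρ₃ ⊆ CellOf ρ₂ ∧ CellOf ρ₃ ⊆ CellOf ρ'' := by
        rintro ρ'' hm ⟨ρ₃, he3, hs3, hs3'⟩
        exact hρ ρ'' (Finset.mem_insert_of_mem hm) ⟨ρ₃, he3.trans he, hs3.trans hs, hs3'⟩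
      obtain ⟨ρ₃, he3, hs3, hd3⟩ := ih ρ₂ hρ₂
      refine ⟨ρ₃, he3.trans he, hs3.trans hs, ?_⟩
      intro ρ'' hm
      rcases Finset.mem_insert.mp hm with rfl | hm'
      · apply Set.eq_empty_of_forall_notMem
        rintro x ⟨hx1, hx2⟩
        exact absurd (Set.mem_inter (hs3 hx1) hx2) (by rw [hd]; exact Set.notMem_empty x)
      · exact hd3 ρ'' hm'

/-- Normalized description: forgets base points along ray coordinates. -/
def tripD {N : ℕ} (ρ : ODesc N) : ODesc N := fun i =>
  (if (ρ i).2 = none then (ρ i).1 else 0, (ρ i).2)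

lemma tripD_eq_iff {N : ℕ} (ρ ρ' : ODesc N) : tripD ρ = tripD ρ' ↔ EquivD ρ ρ' := by
  constructor
  · intro h i
    have hh := congrFun h i
    rw [Prod.ext_iff] at hh
    simp only [tripD] at hh
    refine ⟨hh.2, fun hn => ?_⟩
    have hn' : (ρ' i).2 = none := by rw [← hh.2]; exact hn
    rw [if_pos hn, if_pos hn'] at hh
    exact hh.1
  · intro h
    funext i
    have h1 := (h i).1
    have h2 := (h i).2
    simp only [tripD]
    by_cases hn : (ρ i).2 = none
    · have hn' : (ρ' i).2 = none := by rw [← h1]; exact hn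
      rw [if_pos hn, if_pos hn', h1, h2 hn]
    · have hn' : ¬ (ρ' i).2 = none := by rw [← h1]; exact hn
      rw [if_neg hn, if_neg hn', h1]

end CellOrder
section OrthCell

/-- Integral orthogonal matrices are signed permutation matrices. -/
lemma signedPerm {N : ℕ} {A : Matrix (Fin N) (Fin N) ℤ} (hA : IsOrthMat A) :
    ∃ (τ : Equiv.Perm (Fin N)) (s : Fin N → ℤ),
      (∀ i, s i = 1 ∨ s i = -1) ∧ ∀ i j, A i j = if j = τ i then s i else 0 := by
  have hdiag : ∀ i, ∑ j, A i j * A i j = 1 := by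
    intro i
    have := congrFun (congrFun hA i) i
    simpa [Matrix.mul_apply, Matrix.transpose_apply, Matrix.one_apply] using this
  have hoff : ∀ i i', i ≠ i' → ∑ j, A i j * A i' j = 0 := by
    intro i i' hne
    have := congrFun (congrFun hA i) i'
    simpa [Matrix.mul_apply, Matrix.transpose_apply, Matrix.one_apply, hne] using this
  have hrow : ∀ i, ∃ j, (A i j = 1 ∨ A i j = -1) ∧ ∀ j', j' ≠ j → A i j' = 0 := by
    intro i
    have hnz : ∃ j, A i j ≠ 0 := by
      by_contra hz
      push_neg at hz
      have := hdiag i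
      rw [Finset.sum_eq_zero (fun j _ => by rw [hz j]; ring)] at this
      omega
    obtain ⟨j, hj⟩ := hnz
    have h1 : 1 ≤ A i j * A i j := by
      rcases lt_trichotomy (A i j) 0 with h | h | h
      · nlinarith
      · exact absurd h hj
      · nlinarith
    have hsum := hdiag i
    have hle : A i j * A i j ≤ ∑ j', A i j' * A i j' :=
      Finset.single_le_sum (fun j' _ => mul_self_nonneg (A i j')) (Finset.mem_univ j)
    have heq : A i j * A i j = 1 := le_antisymm (by linarith) h1
    have hrest : ∑ j' ∈ Finset.univ.erase j, A i j' * A i j' = 0 := by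
      have := Finset.add_sum_erase Finset.univ (fun j' => A i j' * A i j') (Finset.mem_univ j)
      linarith
    refine ⟨j, ?_, ?_⟩
    · rcases Int.isUnit_iff.mp (IsUnit.of_mul_eq_one _ heq) with h | h <;> [left; right] <;>
        exact h
    · intro j' hne
      have hz := (Finset.sum_eq_zero_iff_of_nonneg
        (fun j'' _ => mul_self_nonneg (A i j''))).mp hrest j' (Finset.mem_erase.mpr ⟨hne, Finset.mem_univ _⟩)
      nlinarith [hz]
  choose c hc1 hc2 using hrow
  have hinj : Function.Injective c := by
    intro i i' heq
    by_contra hne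
    have h0 := hoff i i' hne
    rw [Finset.sum_eq_single (c i)
      (fun j _ hj => by rw [hc2 i j hj]; ring)
      (fun h => absurd (Finset.mem_univ _) h)] at h0
    have e2 : A i' (c i) = A i' (c i') := by rw [heq]
    rcases hc1 i with h | h <;> rcases hc1 i' with h' | h' <;>
      rw [h, e2, h'] at h0 <;> norm_num at h0
  let τ := Equiv.ofBijective c (Finite.injective_iff_bijective.mp hinj)
  refine ⟨τ, fun i => A i (c i), fun i => hc1 i, fun i j => ?_⟩
  by_cases hj : j = τ i
  · rw [if_pos hj, hj]; rfl
  · rw [if_neg hj]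
    exact hc2 i j hj

/-- The cell of a description is an orthant of the appropriate rank. -/
lemma isOrth_cell {N : ℕ} (ρ : ODesc N) : IsOrthantOfRank (CellOf ρ) (rkD ρ) := by
  classical
  set d : Fin N → ℤ := fun i => if (ρ i).2 = some false then -1 else 1 with hd
  have hd1 : ∀ i, d i * d i = 1 := by
    intro i
    by_cases h : (ρ i).2 = some false <;> simp [hd, h]
  refine ⟨baseD ρ, Matrix.diagonal d, Finset.univ.filter fun i => (ρ i).2 ≠ none, ?_, rfl, ?_⟩
  · unfold IsOrthMat
    rw [Matrix.diagonal_transpose, Matrix.diagonal_mul_diagonal]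
    have : (fun i => d i * d i) = fun _ => (1 : ℤ) := funext fun i => hd1 i
    rw [this, Matrix.diagonal_one]
  · ext x
    simp only [Set.mem_image]
    constructor
    · intro hx
      refine ⟨fun i => d i * (x i - baseD ρ i), ⟨?_, ?_⟩, ?_⟩
      · intro i
        have := hx i
        rcases hr : ρ i with ⟨c, o⟩
        rw [hr] at this
        have hbc : baseD ρ i = c := by simp [baseD, hr]
        rcases o with _ | b
        · simp [hd, hr, hbc, memR_pt.mp this]
        · cases b <;> simp [memR, hr] at this <;> simp [hd, hr, hbc] <;> omega
      · intro i hi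
        simp only [Finset.mem_filter, Finset.mem_univ, true_and, not_not] at hi
        have := hx i
        rcases hr : ρ i with ⟨c, o⟩
        rw [hr] at hi
        simp only at hi
        subst hi
        rw [hr] at this
        have hbc : baseD ρ i = c := by simp [baseD, hr]
        simp [memR_pt.mp this, hbc]
      · funext i
        simp only [Pi.add_apply, Matrix.mulVec_diagonal]
        have hmm : d i * (d i * (x i - baseD ρ i)) = x i - baseD ρ i := by
          rw [← mul_assoc, hd1 i, one_mul]
        rw [hmm]
        ring
    · rintro ⟨v, ⟨hv0, hvz⟩, rfl⟩
      intro i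
      simp only [Pi.add_apply, Matrix.mulVec_diagonal]
      rcases hr : ρ i with ⟨c, o⟩
      have hbc : baseD ρ i = c := by simp [baseD, hr]
      rcases o with _ | b
      · have : v i = 0 := hvz i (by simp [Finset.mem_filter, hr])
        simp [this, hbc, memR]
      · have hv := hv0 i
        cases b <;> simp [hd, hr, memR, hbc] <;> nlinarith [hv0 i]

/-- Any orthant of rank `m` is a cell. -/
lemma cell_of_orth {N : ℕ} {L : Set (Fin N → ℤ)} {m : ℕ} (h : IsOrthantOfRank L m) :
    ∃ ρ : ODesc N, L = CellOf ρ ∧ rkD ρ = m := by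
  classical
  obtain ⟨a, A, Y, hA, hY, hL⟩ := h
  obtain ⟨τ, s, hs, hAs⟩ := signedPerm hA
  have hs2 : ∀ i, s i * s i = 1 := fun i => by rcases hs i with h | h <;> rw [h] <;> ring
  have hmv : ∀ (v : Fin N → ℤ) i, (A.mulVec v) i = s i * v (τ i) := by
    intro v i
    simp only [Matrix.mulVec, dotProduct, hAs, ite_mul, zero_mul]
    rw [Finset.sum_ite_eq' Finset.univ (τ i) (fun j => s i * v j)]
    simp
  refine ⟨fun i => if τ i ∈ Y then (a i, some (s i = 1 : Bool)) else (a i, none), ?_, ?_⟩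
  · rw [hL]
    ext x
    simp only [Set.mem_image]
    constructor
    · rintro ⟨v, ⟨hv0, hvz⟩, rfl⟩
      intro i
      simp only [Pi.add_apply, hmv]
      by_cases hY' : τ i ∈ Y
      · simp only [if_pos hY']
        rcases hs i with h | h <;> simp [h, memR] <;> nlinarith [hv0 (τ i)]
      · simp [if_neg hY', memR, hvz (τ i) hY']
    · intro hx
      have hxi : ∀ j, memR (x (τ.symm j))
          (if j ∈ Y then ((a (τ.symm j), some (decide (s (τ.symm j) = 1))) : ZRay)
           else (a (τ.symm j), none)) := by
        intro j
        have h := hx (τ.symm j)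
        simpa only [Equiv.apply_symm_apply] using h
      refine ⟨fun j => s (τ.symm j) * (x (τ.symm j) - a (τ.symm j)), ⟨?_, ?_⟩, ?_⟩
      · intro j
        have h := hxi j
        by_cases hj : j ∈ Y
        · rw [if_pos hj] at h
          rcases hs (τ.symm j) with h1 | h1 <;> simp only [h1, memR] at h ⊢ <;>
            simp at h ⊢ <;> omega
        · rw [if_neg hj, memR_pt] at h
          simp [h]
      · intro j hj
        have h := hxi j
        rw [if_neg hj, memR_pt] at h
        simp [h]
      · funext i
        simp only [Pi.add_apply, hmv, Equiv.symm_apply_apply]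
        have hmm : s i * (s i * (x i - a i)) = x i - a i := by
          rw [← mul_assoc, hs2 i, one_mul]
        rw [hmm]
        ring
  · unfold rkD
    rw [← hY]
    have : (Finset.univ.filter fun i =>
        ((if τ i ∈ Y then ((a i, some (s i = 1 : Bool)) : ZRay) else (a i, none)) : ZRay).2 ≠ none)
        = Finset.univ.filter fun i => τ i ∈ Y := by
      apply Finset.filter_congr
      intro i _
      by_cases hY' : τ i ∈ Y <;> simp [hY']
    rw [this]
    rw [← Finset.card_image_of_injective _ τ.injective]
    congr 1
    ext j
    simp only [Finset.mem_image, Finset.mem_filter, Finset.mem_univ, true_and]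
    constructor
    · rintro ⟨i, hi, rfl⟩; exact hi
    · intro hj; exact ⟨τ.symm j, by rwa [Equiv.apply_symm_apply], Equiv.apply_symm_apply _ _⟩

/-- A singleton is a rank-0 cell. -/
lemma singleton_cell {N : ℕ} (x : Fin N → ℤ) :
    CellOf (fun i => ((x i, none) : ZRay)) = {x} ∧ rkD (fun i => ((x i, none) : ZRay)) = 0 := by
  constructor
  · ext y
    simp only [CellOf, Set.mem_setOf_eq, Set.mem_singleton_iff, memR_pt]
    exact ⟨fun h => funext h, fun h i => congrFun h i⟩
  · simp [rkD]

end OrthCell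
section RankComm

lemma orthRank_cell {N : ℕ} (ρ : ODesc N) : orthRank (CellOf ρ) = rkD ρ := by
  have hub : ∀ m ∈ {m | ∃ L', IsOrthantOfRank L' m ∧ L' ⊆ CellOf ρ}, m ≤ rkD ρ := by
    rintro m ⟨L', hL', hsub⟩
    obtain ⟨ρ', hρ', hrk⟩ := cell_of_orth hL'
    rw [← hrk]
    exact rkD_le_of_cell_sub (by rw [← hρ']; exact hsub)
  have hmem : rkD ρ ∈ {m | ∃ L', IsOrthantOfRank L' m ∧ L' ⊆ CellOf ρ} :=
    ⟨CellOf ρ, isOrth_cell ρ, subset_rfl⟩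
  exact le_antisymm (csSup_le ⟨_, hmem⟩ hub) (le_csSup ⟨rkD ρ, hub⟩ hmem)

lemma comm_of_equiv {N : ℕ} {ρ ρ' : ODesc N} (h : EquivD ρ ρ') :
    Commensurable (CellOf ρ) (CellOf ρ') := by
  rw [Commensurable, inter_equiv_cells h]
  refine ⟨cell_nonempty _, ?_, ?_⟩
  · rw [orthRank_cell, orthRank_cell, rkD_pushD]
  · rw [orthRank_cell, orthRank_cell, rkD_pushD, rkD_eq_of_equiv h]

lemma equiv_of_comm {N : ℕ} {ρ ρ' : ODesc N}
    (h : Commensurable (CellOf ρ) (CellOf ρ')) : EquivD ρ ρ' := by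
  obtain ⟨hne, h1, h2⟩ := h
  set X := {m | ∃ L', IsOrthantOfRank L' m ∧ L' ⊆ CellOf ρ ∩ CellOf ρ'} with hX
  have hXr : orthRank (CellOf ρ ∩ CellOf ρ') = sSup X := rfl
  have hXne : X.Nonempty := by
    obtain ⟨x₀, hx₀⟩ := hne
    obtain ⟨hcell, hrk⟩ := singleton_cell x₀
    exact ⟨0, {x₀}, by rw [← hcell, ← hrk]; exact isOrth_cell _,
      Set.singleton_subset_iff.mpr hx₀⟩
  have hXbdd : BddAbove X := by
    refine ⟨rkD ρ, ?_⟩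
    rintro m ⟨L', hL', hsub⟩
    obtain ⟨ρ'', hρ'', hrk⟩ := cell_of_orth hL'
    rw [← hrk]
    exact rkD_le_of_cell_sub (by rw [← hρ'']; exact hsub.trans Set.inter_subset_left)
  obtain ⟨L', hL', hsub⟩ := Nat.sSup_mem hXne hXbdd
  obtain ⟨ρ'', hρ'', hrk⟩ := cell_of_orth hL'
  rw [hρ''] at hsub
  have e1 : EquivD ρ'' ρ := by
    apply equiv_of_cell_sub (hsub.trans Set.inter_subset_left)
    rw [hrk, ← hXr, ← h1, orthRank_cell]
  have e2 : EquivD ρ'' ρ' := by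
    apply equiv_of_cell_sub (hsub.trans Set.inter_subset_right)
    rw [hrk, ← hXr, ← h2, orthRank_cell]
  exact e1.symm.trans e2

/-- An orthant inside a finite union of cells has rank bounded by one of the cells,
with a full subcell inside that cell. -/
lemma orthant_in_cells {N : ℕ} {𝓣 : Finset (ODesc N)} {ρM : ODesc N}
    (hsub : CellOf ρM ⊆ ⋃ ρ' ∈ 𝓣, CellOf ρ') :
    ∃ ρ' ∈ 𝓣, ∃ ρ₂, EquivD ρ₂ ρM ∧ CellOf ρ₂ ⊆ CellOf ρM ∧ CellOf ρ₂ ⊆ CellOf ρ' ∧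
      rkD ρM ≤ rkD ρ' := by
  obtain ⟨ρ', hm, ρ₂, he, hs, hs'⟩ := pigeon_cover 𝓣 ρM hsub
  exact ⟨ρ', hm, ρ₂, he, hs, hs', by
    rw [← rkD_eq_of_equiv he]; exact rkD_le_of_cell_sub hs'⟩

lemma bddAbove_rkset_of_cells {N : ℕ} (𝓣 : Finset (ODesc N)) :
    BddAbove {m | ∃ L', IsOrthantOfRank L' m ∧ L' ⊆ ⋃ ρ' ∈ 𝓣, CellOf ρ'} := by
  refine ⟨𝓣.sup rkD, ?_⟩
  rintro m ⟨L', hL', hsub⟩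
  obtain ⟨ρM, hρM, hrk⟩ := cell_of_orth hL'
  rw [hρM] at hsub
  obtain ⟨ρ', hm, _, _, _, _, hle⟩ := orthant_in_cells hsub
  rw [← hrk]
  exact hle.trans (Finset.le_sup hm)

lemma orthRank_cells_le {N : ℕ} (𝓣 : Finset (ODesc N)) {n : ℕ}
    (h : ∀ ρ' ∈ 𝓣, rkD ρ' ≤ n) : orthRank (⋃ ρ' ∈ 𝓣, CellOf ρ') ≤ n := by
  apply csSup_le'
  rintro m ⟨L', hL', hsub⟩
  obtain ⟨ρM, hρM, hrk⟩ := cell_of_orth hL'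
  rw [hρM] at hsub
  obtain ⟨ρ', hm, _, _, _, _, hle⟩ := orthant_in_cells hsub
  rw [← hrk]
  exact hle.trans (h ρ' hm)

/-- An orthohedral set is a finite union of cells. -/
lemma ortho_to_cells {N : ℕ} {T : Set (Fin N → ℤ)} (h : IsOrthohedral T) :
    ∃ 𝓣 : Finset (ODesc N), T = ⋃ ρ ∈ 𝓣, CellOf ρ := by
  classical
  obtain ⟨𝓛, hfin, horth, hT⟩ := h
  have key : ∀ L : 𝓛, ∃ ρ : ODesc N, (L : Set (Fin N → ℤ)) = CellOf ρ := by
    rintro ⟨L, hL⟩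
    obtain ⟨m, hm⟩ := horth L hL
    obtain ⟨ρ, hρ, _⟩ := cell_of_orth hm
    exact ⟨ρ, hρ⟩
  choose f hf using key
  haveI : Fintype 𝓛 := hfin.fintype
  refine ⟨Finset.univ.image f, ?_⟩
  rw [hT]
  ext x
  simp only [Set.mem_sUnion, Set.mem_iUnion, Finset.mem_image, Finset.mem_univ, true_and,
    exists_prop]
  constructor
  · rintro ⟨L, hL, hx⟩
    exact ⟨f ⟨L, hL⟩, ⟨⟨L, hL⟩, rfl⟩, by rw [← hf ⟨L, hL⟩]; exact hx⟩
  · rintro ⟨ρ, ⟨L, rfl⟩, hx⟩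
    exact ⟨L, L.2, by rw [hf L]; exact hx⟩

/-- Rank bound for cells inside an orthohedral set of bounded rank. -/
lemma rkD_le_of_cell_sub_ortho {N : ℕ} {T : Set (Fin N → ℤ)} {𝓣 : Finset (ODesc N)}
    (hT : T = ⋃ ρ ∈ 𝓣, CellOf ρ) {k : ℕ} (hrk : orthRank T ≤ k) {ρ : ODesc N}
    (hsub : CellOf ρ ⊆ T) : rkD ρ ≤ k := by
  have hmem : rkD ρ ∈ {m | ∃ L', IsOrthantOfRank L' m ∧ L' ⊆ T} :=
    ⟨CellOf ρ, isOrth_cell ρ, hsub⟩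
  have hbdd : BddAbove {m | ∃ L', IsOrthantOfRank L' m ∧ L' ⊆ T} := by
    rw [hT]; exact bddAbove_rkset_of_cells 𝓣
  exact le_trans (le_csSup hbdd hmem) hrk

end RankComm
section MapDesc

/-- `f` acts on `P` as the affine signed-permutation map with data `(a, s, τ)`. -/
def IsoOn {N : ℕ} (f : (Fin N → ℤ) → (Fin N → ℤ)) (P : Set (Fin N → ℤ))
    (a s : Fin N → ℤ) (τ : Equiv.Perm (Fin N)) : Prop :=
  (∀ j, s j = 1 ∨ s j = -1) ∧ ∀ x ∈ P, ∀ j, f x j = a j + s j * x (τ j)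

/-- Image description of a cell under an affine signed-permutation map. -/
def mapD {N : ℕ} (a s : Fin N → ℤ) (τ : Equiv.Perm (Fin N)) (ρ : ODesc N) : ODesc N :=
  fun j => (a j + s j * (ρ (τ j)).1, (ρ (τ j)).2.map (fun d => if s j = 1 then d else !d))

lemma rkD_mapD {N : ℕ} (a s : Fin N → ℤ) (τ : Equiv.Perm (Fin N)) (ρ : ODesc N) :
    rkD (mapD a s τ ρ) = rkD ρ := by
  unfold rkD
  have : (Finset.univ.filter fun j => ((mapD a s τ ρ) j).2 ≠ none)
      = Finset.univ.filter fun j => (ρ (τ j)).2 ≠ none := by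
    apply Finset.filter_congr
    intro j _
    simp [mapD, Option.map_eq_none_iff]
  rw [this, ← Finset.card_image_of_injective _ τ.injective]
  congr 1
  ext i
  simp only [Finset.mem_image, Finset.mem_filter, Finset.mem_univ, true_and]
  constructor
  · rintro ⟨j, hj, rfl⟩; exact hj
  · intro hi; exact ⟨τ.symm i, by rwa [Equiv.apply_symm_apply], Equiv.apply_symm_apply _ _⟩

lemma memR_map {n : ℤ} {r : ZRay} {aj sj : ℤ} (hsj : sj = 1 ∨ sj = -1) :
    (memR (aj + sj * n) (aj + sj * r.1, r.2.map (fun d => if sj = 1 then d else !d))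
      ↔ memR n r) := by
  obtain ⟨c, o⟩ := r
  rcases o with _ | b <;> rcases hsj with h | h <;> (try cases b) <;>
    subst h <;> norm_num [memR] <;> omega

lemma mapD_equiv {N : ℕ} {ρ ρ' : ODesc N} (a s : Fin N → ℤ) (τ : Equiv.Perm (Fin N))
    (h : EquivD ρ ρ') : EquivD (mapD a s τ ρ) (mapD a s τ ρ') := by
  intro j
  have h1 := (h (τ j)).1
  have h2 := (h (τ j)).2
  constructor
  · simp [mapD, h1]
  · intro hn
    simp only [mapD, Option.map_eq_none_iff] at hn ⊢
    rw [h2 hn]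

lemma image_mapD {N : ℕ} {f : (Fin N → ℤ) → (Fin N → ℤ)} {ρ : ODesc N}
    {a s : Fin N → ℤ} {τ : Equiv.Perm (Fin N)} (hiso : IsoOn f (CellOf ρ) a s τ) :
    f '' CellOf ρ = CellOf (mapD a s τ ρ) := by
  obtain ⟨hs, hf⟩ := hiso
  have hs2 : ∀ j, s j * s j = 1 := fun j => by rcases hs j with h | h <;> rw [h] <;> ring
  ext y
  constructor
  · rintro ⟨x, hx, rfl⟩
    intro j
    rw [hf x hx j]
    exact (memR_map (hs j)).mpr (hx (τ j))
  · intro hy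
    set x : Fin N → ℤ := fun i => s (τ.symm i) * (y (τ.symm i) - a (τ.symm i)) with hxdef
    have hxmem : x ∈ CellOf ρ := by
      intro i
      have h := hy (τ.symm i)
      have he : τ (τ.symm i) = i := Equiv.apply_symm_apply _ _
      rw [show (mapD a s τ ρ) (τ.symm i)
          = (a (τ.symm i) + s (τ.symm i) * (ρ i).1,
             (ρ i).2.map (fun d => if s (τ.symm i) = 1 then d else !d)) by rw [mapD, he]] at h
      have hxi : a (τ.symm i) + s (τ.symm i) * x i = y (τ.symm i) := by
        simp only [hxdef]
        have hq : s (τ.symm i) * (s (τ.symm i) * (y (τ.symm i) - a (τ.symm i)))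
            = y (τ.symm i) - a (τ.symm i) := by rw [← mul_assoc, hs2 (τ.symm i), one_mul]
        rw [hq]
        ring
      rw [← hxi] at h
      exact (memR_map (hs (τ.symm i))).mp h
    refine ⟨x, hxmem, ?_⟩
    funext j
    rw [hf x hxmem j]
    simp only [hxdef, Equiv.symm_apply_apply]
    have hq : s j * (s j * (y j - a j)) = y j - a j := by
      rw [← mul_assoc, hs2 j, one_mul]
    rw [hq]
    ring

/-- Identity data. -/
lemma mapD_id {N : ℕ} (ρ : ODesc N) : mapD 0 1 (Equiv.refl (Fin N)) ρ = ρ := by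
  funext j
  simp [mapD]

lemma isoOn_id {N : ℕ} {f : (Fin N → ℤ) → (Fin N → ℤ)} {P : Set (Fin N → ℤ)}
    (h : ∀ x ∈ P, f x = x) : IsoOn f P 0 1 (Equiv.refl (Fin N)) := by
  refine ⟨fun j => Or.inl rfl, fun x hx j => ?_⟩
  rw [h x hx]
  simp

lemma mulVec_signed {N : ℕ} {A : Matrix (Fin N) (Fin N) ℤ} {s : Fin N → ℤ}
    {τ : Equiv.Perm (Fin N)} (hAs : ∀ i j, A i j = if j = τ i then s i else 0) :
    ∀ (v : Fin N → ℤ) i, (A.mulVec v) i = s i * v (τ i) := by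
  intro v i
  simp only [Matrix.mulVec, dotProduct, hAs, ite_mul, zero_mul]
  rw [Finset.sum_ite_eq' Finset.univ (τ i) (fun j => s i * v j)]
  simp

/-- Data extraction from `IsometricOn`. -/
lemma data_of_isometricOn {N : ℕ} {f : (Fin N → ℤ) → (Fin N → ℤ)} {P : Set (Fin N → ℤ)}
    (h : IsometricOn f P) : ∃ (a s : Fin N → ℤ) (τ : Equiv.Perm (Fin N)), IsoOn f P a s τ := by
  obtain ⟨a, A, hA, hfx⟩ := h
  obtain ⟨τ, s, hs, hAs⟩ := signedPerm hA
  refine ⟨a, s, τ, hs, fun x hx j => ?_⟩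
  rw [hfx x hx]
  simp only [Pi.add_apply, mulVec_signed hAs]

/-- `IsometricOn` from data. -/
lemma isometricOn_of_data {N : ℕ} {f : (Fin N → ℤ) → (Fin N → ℤ)} {P : Set (Fin N → ℤ)}
    {a s : Fin N → ℤ} {τ : Equiv.Perm (Fin N)} (h : IsoOn f P a s τ) : IsometricOn f P := by
  obtain ⟨hs, hf⟩ := h
  set A : Matrix (Fin N) (Fin N) ℤ := Matrix.of (fun i j => if j = τ i then s i else 0) with hA
  have hAs : ∀ i j, A i j = if j = τ i then s i else 0 := fun i j => rfl
  refine ⟨a, A, ?_, ?_⟩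
  · have hmul : ∀ i i', (A * A.transpose) i i' = if τ i = τ i' then s i * s i' else 0 := by
      intro i i'
      rw [Matrix.mul_apply]
      simp only [Matrix.transpose_apply, hAs, ite_mul, mul_ite, zero_mul, mul_zero]
      rw [Finset.sum_ite_eq' Finset.univ (τ i')
        (fun j => if j = τ i then s i * s i' else 0)]
      simp [eq_comm]
    ext i i'
    rw [hmul i i']
    by_cases hii : i = i'
    · subst hii
      simp [Matrix.one_apply]
      rcases hs i with h | h <;> rw [h] <;> ring
    · rw [if_neg (fun hc => hii (τ.injective hc)), Matrix.one_apply_ne hii]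
  · intro x hx
    funext j
    rw [hf x hx j]
    simp only [Pi.add_apply, mulVec_signed hAs]

/-- Inverse data for a permutation acting by data on `P`. -/
lemma isoOn_inv {N : ℕ} (g : Equiv.Perm (Fin N → ℤ)) {P : Set (Fin N → ℤ)}
    {a s : Fin N → ℤ} {τ : Equiv.Perm (Fin N)} (h : IsoOn (⇑g) P a s τ) :
    IsoOn (⇑g⁻¹) (⇑g '' P) (fun i => -(s (τ.symm i) * a (τ.symm i))) (fun i => s (τ.symm i))
      τ.symm := by
  obtain ⟨hs, hf⟩ := h
  have hs2 : ∀ j, s j * s j = 1 := fun j => by rcases hs j with h | h <;> rw [h] <;> ring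
  refine ⟨fun i => hs (τ.symm i), ?_⟩
  rintro y ⟨x, hx, rfl⟩ i
  rw [Equiv.Perm.inv_apply_self]
  rw [hf x hx (τ.symm i)]
  have he : τ (τ.symm i) = i := Equiv.apply_symm_apply _ _
  rw [he]
  simp only
  have hq : s (τ.symm i) * (a (τ.symm i) + s (τ.symm i) * x i)
      = s (τ.symm i) * a (τ.symm i) + x i := by
    have : s (τ.symm i) * (s (τ.symm i) * x i) = x i := by
      rw [← mul_assoc, hs2 (τ.symm i), one_mul]
    rw [mul_add, this]
  rw [hq]
  ring

/-- A permutation fixing the complement of `S` pointwise maps `S` onto itself. -/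
lemma perm_image_self {N : ℕ} (g : Equiv.Perm (Fin N → ℤ)) {S : Set (Fin N → ℤ)}
    (h : ∀ x ∉ S, g x = x) : ⇑g '' S = S := by
  ext y
  constructor
  · rintro ⟨x, hx, rfl⟩
    by_contra hgx
    have := h _ hgx
    have : g x = x := g.injective this
    rw [this] at hgx
    exact hgx hx
  · intro hy
    refine ⟨g⁻¹ y, ?_, g.apply_inv_self y⟩
    by_contra hx
    have h2 := h _ hx
    rw [g.apply_inv_self] at h2
    rw [← h2] at hx
    exact hx hy

end MapDesc
section GermInfra

variable {N : ℕ} (S : Set (Fin N → ℤ)) (k : ℕ)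

lemma rkD_eq_of_cell_eq {α β : ODesc N} (h : CellOf α = CellOf β) : rkD α = rkD β :=
  le_antisymm (rkD_le_of_cell_sub h.le) (rkD_le_of_cell_sub h.ge)

lemma cell_mem_germSet {α : ODesc N} (hk : rkD α = k) (hsub : CellOf α ⊆ S) :
    CellOf α ∈ germSet S k := ⟨hk ▸ isOrth_cell α, hsub⟩

noncomputable def descOfG (L : germSet S k) : ODesc N := (cell_of_orth L.2.1).choose

lemma descOfG_spec (L : germSet S k) :
    L.1 = CellOf (descOfG S k L) ∧ rkD (descOfG S k L) = k :=
  (cell_of_orth L.2.1).choose_spec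

noncomputable def gTrip : Germ S k → ODesc N :=
  Quot.lift (fun L => tripD (descOfG S k L)) (by
    intro L L' hc
    rw [tripD_eq_iff]
    apply equiv_of_comm
    rw [← (descOfG_spec S k L).1, ← (descOfG_spec S k L').1]
    exact hc)

lemma gTrip_mk (α : ODesc N) (h : CellOf α ∈ germSet S k) (hk : rkD α = k) :
    gTrip S k (germOf S k ⟨CellOf α, h⟩) = tripD α := by
  show tripD (descOfG S k ⟨CellOf α, h⟩) = tripD α
  rw [tripD_eq_iff]
  have hcell : CellOf (descOfG S k ⟨CellOf α, h⟩) = CellOf α :=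
    (descOfG_spec S k ⟨CellOf α, h⟩).1.symm
  exact equiv_of_cell_sub hcell.le ((descOfG_spec S k ⟨CellOf α, h⟩).2.trans hk.symm)

lemma germ_eq_of_trip {α β : ODesc N} (hα : CellOf α ∈ germSet S k)
    (hβ : CellOf β ∈ germSet S k) (h : tripD α = tripD β) :
    germOf S k ⟨CellOf α, hα⟩ = germOf S k ⟨CellOf β, hβ⟩ :=
  Quot.sound (comm_of_equiv ((tripD_eq_iff _ _).mp h))

lemma gTrip_inj : Function.Injective (gTrip S k) := by
  intro γ γ' h
  obtain ⟨L, rfl⟩ := Quot.exists_rep γ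
  obtain ⟨L', rfl⟩ := Quot.exists_rep γ'
  have h' : tripD (descOfG S k L) = tripD (descOfG S k L') := h
  apply Quot.sound
  have := comm_of_equiv ((tripD_eq_iff _ _).mp h')
  rwa [← (descOfG_spec S k L).1, ← (descOfG_spec S k L').1] at this

lemma germOf_desc (L : germSet S k) (h : CellOf (descOfG S k L) ∈ germSet S k) :
    germOf S k ⟨CellOf (descOfG S k L), h⟩ = germOf S k L :=
  congrArg (germOf S k) (Subtype.ext (descOfG_spec S k L).1.symm)

end GermInfra
section HalfMap

variable {N : ℕ}

lemma isoOn_mono {f : (Fin N → ℤ) → (Fin N → ℤ)} {P Q : Set (Fin N → ℤ)}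
    {a s : Fin N → ℤ} {τ : Equiv.Perm (Fin N)} (h : IsoOn f P a s τ) (hQ : Q ⊆ P) :
    IsoOn f Q a s τ := ⟨h.1, fun x hx => h.2 x (hQ hx)⟩

lemma trip_map_core {f : (Fin N → ℤ) → (Fin N → ℤ)} {ρ₁ ρ₂ : ODesc N}
    {a₁ s₁ : Fin N → ℤ} {τ₁ : Equiv.Perm (Fin N)} {a₂ s₂ : Fin N → ℤ} {τ₂ : Equiv.Perm (Fin N)}
    (h12 : EquivD ρ₁ ρ₂) (d₁ : IsoOn f (CellOf ρ₁) a₁ s₁ τ₁)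
    (d₂ : IsoOn f (CellOf ρ₂) a₂ s₂ τ₂) :
    tripD (mapD a₁ s₁ τ₁ ρ₁) = tripD (mapD a₂ s₂ τ₂ ρ₂) := by
  set μ := pushD ρ₁ (baseD ρ₂) with hμdef
  have hμ1 : EquivD μ ρ₁ := pushD_equiv _ _
  have hμ2 : EquivD μ ρ₂ := hμ1.trans h12
  have hinter : CellOf ρ₁ ∩ CellOf ρ₂ = CellOf μ := inter_equiv_cells h12
  have hsub1 : CellOf μ ⊆ CellOf ρ₁ := by rw [← hinter]; exact Set.inter_subset_left
  have hsub2 : CellOf μ ⊆ CellOf ρ₂ := by rw [← hinter]; exact Set.inter_subset_right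
  have i1 : f '' CellOf μ = CellOf (mapD a₁ s₁ τ₁ μ) := image_mapD (isoOn_mono d₁ hsub1)
  have i2 : f '' CellOf μ = CellOf (mapD a₂ s₂ τ₂ μ) := image_mapD (isoOn_mono d₂ hsub2)
  have hcell : CellOf (mapD a₁ s₁ τ₁ μ) = CellOf (mapD a₂ s₂ τ₂ μ) := by rw [← i1, ← i2]
  have e : EquivD (mapD a₁ s₁ τ₁ μ) (mapD a₂ s₂ τ₂ μ) :=
    equiv_of_cell_sub hcell.le (rkD_eq_of_cell_eq hcell)
  have e1 : EquivD (mapD a₁ s₁ τ₁ μ) (mapD a₁ s₁ τ₁ ρ₁) := mapD_equiv _ _ _ hμ1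
  have e2 : EquivD (mapD a₂ s₂ τ₂ μ) (mapD a₂ s₂ τ₂ ρ₂) := mapD_equiv _ _ _ hμ2
  rw [tripD_eq_iff]
  exact (e1.symm.trans e).trans e2

/-- Pieces of a pei map, as cells with data. -/
lemma pieces_of_pei {S : Set (Fin N → ℤ)} {f : (Fin N → ℤ) → (Fin N → ℤ)}
    (hpei : IsPeiMapOn S f) :
    ∃ 𝓟 : Finset (ODesc N), (S = ⋃ ρ' ∈ 𝓟, CellOf ρ') ∧
      ∀ ρ' ∈ 𝓟, ∃ (a s : Fin N → ℤ) (τ : Equiv.Perm (Fin N)), IsoOn f (CellOf ρ') a s τ := by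
  classical
  obtain ⟨𝓛, hfin, horth, hS, _, hiso⟩ := hpei
  have key : ∀ L : 𝓛, ∃ ρ : ODesc N, (L : Set (Fin N → ℤ)) = CellOf ρ ∧
      ∃ (a s : Fin N → ℤ) (τ : Equiv.Perm (Fin N)), IsoOn f (CellOf ρ) a s τ := by
    rintro ⟨L, hL⟩
    obtain ⟨m, hm⟩ := horth L hL
    obtain ⟨ρ, hρ, _⟩ := cell_of_orth hm
    obtain ⟨a, s, τ, hd⟩ := data_of_isometricOn (hiso L hL)
    exact ⟨ρ, hρ, a, s, τ, by rw [← hρ]; exact hd⟩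
  choose fc hfc1 hfc2 using key
  haveI : Fintype 𝓛 := hfin.fintype
  refine ⟨Finset.univ.image fc, ?_, ?_⟩
  · rw [hS]
    ext x
    simp only [Set.mem_sUnion, Set.mem_iUnion, Finset.mem_image, Finset.mem_univ, true_and,
      exists_prop]
    constructor
    · rintro ⟨L, hL, hx⟩
      exact ⟨fc ⟨L, hL⟩, ⟨⟨L, hL⟩, rfl⟩, by rw [← hfc1 ⟨L, hL⟩]; exact hx⟩
    · rintro ⟨ρ, ⟨L, rfl⟩, hx⟩
      exact ⟨L, L.2, by rw [hfc1 L]; exact hx⟩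
  · rintro ρ' hρ'
    obtain ⟨L, _, rfl⟩ := Finset.mem_image.mp hρ'
    exact hfc2 L

/-- `σ0` maps each cell-germ with isometry data to the germ of the image cell. -/
def GermMapSpec (S : Set (Fin N → ℤ)) (k : ℕ) (f : (Fin N → ℤ) → (Fin N → ℤ))
    (σ0 : Germ S k → Germ S k) : Prop :=
  ∀ (ρ : ODesc N) (hm : CellOf ρ ∈ germSet S k), rkD ρ = k →
    ∀ (a s : Fin N → ℤ) (τ : Equiv.Perm (Fin N)), IsoOn f (CellOf ρ) a s τ →
    ∀ (hm' : CellOf (mapD a s τ ρ) ∈ germSet S k),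
      σ0 (germOf S k ⟨CellOf ρ, hm⟩) = germOf S k ⟨CellOf (mapD a s τ ρ), hm'⟩

/-- `σ0` comes with a selection witnessing the germ image of each orthant. -/
def GermMapSel (S : Set (Fin N → ℤ)) (k : ℕ) (f : (Fin N → ℤ) → (Fin N → ℤ))
    (σ0 : Germ S k → Germ S k) : Prop :=
  ∀ L : germSet S k, ∃ (ρ₂ : ODesc N) (a s : Fin N → ℤ) (τ : Equiv.Perm (Fin N))
    (hm' : CellOf (mapD a s τ ρ₂) ∈ germSet S k),
      rkD ρ₂ = k ∧ CellOf ρ₂ ⊆ L.1 ∧ EquivD ρ₂ (descOfG S k L) ∧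
      IsoOn f (CellOf ρ₂) a s τ ∧
      σ0 (germOf S k L) = germOf S k ⟨CellOf (mapD a s τ ρ₂), hm'⟩

/-- The half of the action construction for a single pei self-map. -/
lemma exists_half_map (S : Set (Fin N → ℤ)) (k : ℕ) (f : (Fin N → ℤ) → (Fin N → ℤ))
    (hpei : IsPeiMapOn S f) (himg : ∀ x ∈ S, f x ∈ S) :
    ∃ σ0 : Germ S k → Germ S k, GermMapSpec S k f σ0 ∧ GermMapSel S k f σ0 := by
  classical
  obtain ⟨𝓟, hcov, hdat⟩ := pieces_of_pei hpei
  -- selection of a full subcell in a single piece, with data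
  have hsel : ∀ L : germSet S k, ∃ (ρ₂ : ODesc N) (a s : Fin N → ℤ) (τ : Equiv.Perm (Fin N)),
      EquivD ρ₂ (descOfG S k L) ∧ CellOf ρ₂ ⊆ L.1 ∧ IsoOn f (CellOf ρ₂) a s τ := by
    intro L
    have hsub : CellOf (descOfG S k L) ⊆ ⋃ ρ' ∈ 𝓟, CellOf ρ' := by
      rw [← (descOfG_spec S k L).1, ← hcov]
      exact L.2.2
    obtain ⟨ρ', hρ', ρ₂, he, hs, hs'⟩ := pigeon_cover 𝓟 _ hsub
    obtain ⟨a, s, τ, hd⟩ := hdat ρ' hρ'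
    exact ⟨ρ₂, a, s, τ, he, by rw [(descOfG_spec S k L).1]; exact hs, isoOn_mono hd hs'⟩
  choose selρ sela sels selτ hsel1 hsel2 hsel3 using hsel
  have hrk2 : ∀ L : germSet S k, rkD (selρ L) = k := fun L =>
    (rkD_eq_of_equiv (hsel1 L)).trans (descOfG_spec S k L).2
  have hmem' : ∀ L : germSet S k,
      CellOf (mapD (sela L) (sels L) (selτ L) (selρ L)) ∈ germSet S k := by
    intro L
    apply cell_mem_germSet
    · rw [rkD_mapD]; exact hrk2 L
    · rw [← image_mapD (hsel3 L)]
      rintro y ⟨x, hx, rfl⟩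
      exact himg x (L.2.2 (hsel2 L hx))
  -- the germ map
  set F : germSet S k → germSet S k :=
    fun L => ⟨CellOf (mapD (sela L) (sels L) (selτ L) (selρ L)), hmem' L⟩ with hF
  have hwd : ∀ (L L' : germSet S k), Commensurable L.1 L'.1 →
      germOf S k (F L) = germOf S k (F L') := by
    intro L L' hc
    apply germ_eq_of_trip
    apply trip_map_core _ (hsel3 L) (hsel3 L')
    -- EquivD (selρ L) (selρ L')
    have h1 : EquivD (descOfG S k L) (descOfG S k L') := by
      apply equiv_of_comm
      rw [← (descOfG_spec S k L).1, ← (descOfG_spec S k L').1]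
      exact hc
    exact ((hsel1 L).trans h1).trans (hsel1 L').symm
  set σ0 : Germ S k → Germ S k := Quot.lift (fun L => germOf S k (F L)) hwd with hσ0
  have hσ0mk : ∀ L : germSet S k, σ0 (germOf S k L) = germOf S k (F L) := fun L => rfl
  refine ⟨σ0, ?_, ?_⟩
  · intro ρ hm hk a s τ hd hm'
    rw [hσ0mk ⟨CellOf ρ, hm⟩]
    apply germ_eq_of_trip
    -- core applied to (selρ ⟨cells⟩) and ρ
    have hequiv : EquivD (selρ ⟨CellOf ρ, hm⟩) ρ := by
      refine (hsel1 ⟨CellOf ρ, hm⟩).trans ?_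
      have hcell : CellOf (descOfG S k ⟨CellOf ρ, hm⟩) = CellOf ρ :=
        (descOfG_spec S k ⟨CellOf ρ, hm⟩).1.symm
      exact equiv_of_cell_sub hcell.le
        ((descOfG_spec S k ⟨CellOf ρ, hm⟩).2.trans hk.symm)
    exact trip_map_core hequiv (hsel3 ⟨CellOf ρ, hm⟩) hd
  · intro L
    exact ⟨selρ L, sela L, sels L, selτ L, hmem' L, hrk2 L, hsel2 L, hsel1 L, hsel3 L,
      hσ0mk L⟩

end HalfMap
section BuildSigma

variable {N : ℕ}

lemma pei_inv (S : Set (Fin N → ℤ)) (g : Equiv.Perm (Fin N → ℤ)) (hg : IsPeiPerm S g) :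
    IsPeiPerm S g⁻¹ := by
  classical
  obtain ⟨⟨𝓛, hfin, horth, hS, hdisj, hiso⟩, hfix⟩ := hg
  constructor
  · refine ⟨(Set.image ⇑g) '' 𝓛, hfin.image _, ?_, ?_, ?_, ?_⟩
    · rintro _ ⟨L, hL, rfl⟩
      obtain ⟨m, hm⟩ := horth L hL
      obtain ⟨ρ, hρ, _⟩ := cell_of_orth hm
      obtain ⟨a, s, τ, hd⟩ := data_of_isometricOn (hiso L hL)
      rw [hρ] at hd ⊢
      rw [image_mapD hd]
      exact ⟨rkD (mapD a s τ ρ), isOrth_cell _⟩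
    · rw [← Set.image_sUnion, ← hS, perm_image_self g hfix]
    · rintro _ ⟨L, hL, rfl⟩ _ ⟨L', hL', rfl⟩ hne
      have hLL' : L ≠ L' := fun h => hne (by rw [h])
      have := hdisj hL hL' hLL'
      exact (Set.disjoint_image_iff g.injective).mpr this
    · rintro _ ⟨L, hL, rfl⟩
      obtain ⟨a, s, τ, hd⟩ := data_of_isometricOn (hiso L hL)
      exact isometricOn_of_data (isoOn_inv g hd)
  · intro x hx
    have h := hfix x hx
    have h2 : g⁻¹ (g x) = g⁻¹ x := congrArg _ h
    rw [Equiv.Perm.inv_apply_self] at h2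
    exact h2.symm

lemma half_inv_aux (S : Set (Fin N → ℤ)) (k : ℕ) (g : Equiv.Perm (Fin N → ℤ))
    {σA σB : Germ S k → Germ S k}
    (hB : GermMapSpec S k (⇑g⁻¹) σB) (hA : GermMapSel S k (⇑g) σA) :
    ∀ γ, σB (σA γ) = γ := by
  intro γ
  obtain ⟨L, rfl⟩ := Quot.exists_rep γ
  obtain ⟨ρ₂, a, s, τ, hm', hrk2, hsub2, hequiv2, hd, hstep⟩ := hA L
  show σB (σA (germOf S k L)) = germOf S k L
  rw [hstep]
  have himgcell : CellOf (mapD a s τ ρ₂) = ⇑g '' CellOf ρ₂ := (image_mapD hd).symm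
  have hinv : IsoOn (⇑g⁻¹) (CellOf (mapD a s τ ρ₂))
      (fun i => -(s (τ.symm i) * a (τ.symm i))) (fun i => s (τ.symm i)) τ.symm := by
    rw [himgcell]
    exact isoOn_inv g hd
  have hback : CellOf (mapD (fun i => -(s (τ.symm i) * a (τ.symm i)))
      (fun i => s (τ.symm i)) τ.symm (mapD a s τ ρ₂)) = CellOf ρ₂ := by
    rw [← image_mapD hinv, himgcell, Set.image_image]
    simp only [Equiv.Perm.inv_apply_self, Set.image_id']
  have hmρ₂ : CellOf ρ₂ ∈ germSet S k := cell_mem_germSet S k hrk2 (hsub2.trans L.2.2)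
  have hm'' : CellOf (mapD (fun i => -(s (τ.symm i) * a (τ.symm i)))
      (fun i => s (τ.symm i)) τ.symm (mapD a s τ ρ₂)) ∈ germSet S k := by
    rw [hback]; exact hmρ₂
  rw [hB (mapD a s τ ρ₂) hm' (by rw [rkD_mapD]; exact hrk2) _ _ _ hinv hm'']
  have e1 : germOf S k ⟨_, hm''⟩ = germOf S k ⟨CellOf ρ₂, hmρ₂⟩ :=
    congrArg (germOf S k) (Subtype.ext hback)
  rw [e1]
  apply Quot.sound
  show Commensurable (CellOf ρ₂) L.1
  rw [(descOfG_spec S k L).1]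
  exact comm_of_equiv hequiv2

/-- Main construction: the induced finitary permutation on rank-`k` germs. -/
lemma build_sigma (S : Set (Fin N → ℤ)) (k : ℕ) (g : Equiv.Perm (Fin N → ℤ))
    (hg : IsPeiPerm S g) (T : Set (Fin N → ℤ)) (hT : IsOrthohedral T)
    (hTrk : orthRank T ≤ k) (hTfix : ∀ x ∉ T, g x = x) :
    ∃ σ : Equiv.Perm (Germ S k), InducesGermMap S k g ⇑σ ∧ {γ | σ γ ≠ γ}.Finite ∧
      GermMapSpec S k (⇑g) ⇑σ := by
  classical
  have hginv := pei_inv S g hg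
  have himg : ∀ x ∈ S, g x ∈ S := by
    intro x hx
    rw [← perm_image_self g hg.2]
    exact ⟨x, hx, rfl⟩
  have himg' : ∀ x ∈ S, g⁻¹ x ∈ S := by
    intro x hx
    rw [← perm_image_self g⁻¹ hginv.2]
    exact ⟨x, hx, rfl⟩
  obtain ⟨σ0, hfst, hsnd⟩ := exists_half_map S k (⇑g) hg.1 himg
  obtain ⟨σ0', hfst', hsnd'⟩ := exists_half_map S k (⇑g⁻¹) hginv.1 himg'
  have hfst2 : GermMapSpec S k (⇑(g⁻¹)⁻¹) σ0 := by rw [inv_inv]; exact hfst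
  set σ : Equiv.Perm (Germ S k) :=
    ⟨σ0, σ0', half_inv_aux S k g hfst' hsnd, half_inv_aux S k g⁻¹ hfst2 hsnd'⟩ with hσ
  have hcoe : ⇑σ = σ0 := rfl
  refine ⟨σ, ?_, ?_, ?_⟩
  · -- InducesGermMap
    intro L
    obtain ⟨ρ₂, a, s, τ, hm', hrk2, hsub2, hequiv2, hd, hstep⟩ := hsnd L
    refine ⟨CellOf ρ₂, ⟨CellOf (mapD a s τ ρ₂), hm'⟩, hrk2 ▸ isOrth_cell ρ₂, hsub2, ?_,
      (image_mapD hd).symm, ?_⟩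
    · rw [(descOfG_spec S k L).1]
      exact comm_of_equiv hequiv2.symm
    · rw [hcoe]; exact hstep
  · -- finiteness of support
    obtain ⟨𝓣, hTeq⟩ := ortho_to_cells hT
    have hsubT : {γ | σ γ ≠ γ} ⊆ gTrip S k ⁻¹' ↑(𝓣.image tripD) := by
      intro γ hγ
      by_contra hmemt
      apply hγ
      obtain ⟨L, rfl⟩ := Quot.exists_rep γ
      have hnotin : tripD (descOfG S k L) ∉ 𝓣.image tripD := by
        exact fun h => hmemt (Finset.mem_coe.mpr h)
      -- avoid the support
      have havoid : ∀ ρt ∈ 𝓣, ¬ ∃ ρ₃, EquivD ρ₃ (descOfG S k L) ∧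
          CellOf ρ₃ ⊆ CellOf (descOfG S k L) ∧ CellOf ρ₃ ⊆ CellOf ρt := by
        rintro ρt hρt ⟨ρ₃, he3, _, hs3'⟩
        have hrk3 : rkD ρ₃ = k := (rkD_eq_of_equiv he3).trans (descOfG_spec S k L).2
        have hrkt : rkD ρt ≤ k := by
          apply rkD_le_of_cell_sub_ortho hTeq hTrk
          rw [hTeq]
          exact Set.subset_biUnion_of_mem hρt
        have hrkt' : rkD ρt = k :=
          le_antisymm hrkt (by rw [← hrk3]; exact rkD_le_of_cell_sub hs3')
        have : EquivD ρ₃ ρt := equiv_of_cell_sub hs3' (hrk3.trans hrkt'.symm)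
        apply hnotin
        rw [Finset.mem_image]
        refine ⟨ρt, hρt, ?_⟩
        rw [tripD_eq_iff] at *
        exact (this.symm.trans he3)
      obtain ⟨ρ₂, he2, hs2, hd2⟩ := avoid_all 𝓣 (descOfG S k L) havoid
      have hfixcell : ∀ x ∈ CellOf ρ₂, g x = x := by
        intro x hx
        apply hTfix
        rw [hTeq]
        intro hxT
        simp only [Set.mem_iUnion, exists_prop] at hxT
        obtain ⟨ρt, hρt, hxt⟩ := hxT
        exact absurd (Set.mem_inter hx hxt) (by rw [hd2 ρt hρt]; exact Set.notMem_empty x)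
      have hrk2 : rkD ρ₂ = k := (rkD_eq_of_equiv he2).trans (descOfG_spec S k L).2
      have hmρ₂ : CellOf ρ₂ ∈ germSet S k := by
        apply cell_mem_germSet S k hrk2
        refine subset_trans ?_ L.2.2
        rw [(descOfG_spec S k L).1]
        exact hs2
      have hm' : CellOf (mapD 0 1 (Equiv.refl (Fin N)) ρ₂) ∈ germSet S k := by
        rw [mapD_id]; exact hmρ₂
      have h1 := hfst ρ₂ hmρ₂ hrk2 0 1 (Equiv.refl (Fin N)) (isoOn_id hfixcell) hm'
      have h2 : germOf S k ⟨CellOf (mapD 0 1 (Equiv.refl (Fin N)) ρ₂), hm'⟩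
          = germOf S k ⟨CellOf ρ₂, hmρ₂⟩ :=
        congrArg (germOf S k) (Subtype.ext (congrArg CellOf (mapD_id ρ₂)))
      have h3 : germOf S k ⟨CellOf ρ₂, hmρ₂⟩ = germOf S k L := by
        apply Quot.sound
        show Commensurable (CellOf ρ₂) L.1
        rw [(descOfG_spec S k L).1]
        exact comm_of_equiv he2
      show σ0 (germOf S k L) = germOf S k L
      calc σ0 (germOf S k L) = σ0 (germOf S k ⟨CellOf ρ₂, hmρ₂⟩) := by rw [h3]
        _ = germOf S k ⟨CellOf (mapD 0 1 (Equiv.refl (Fin N)) ρ₂), hm'⟩ := h1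
        _ = germOf S k L := h2.trans h3
    exact Set.Finite.subset (Set.Finite.preimage ((gTrip_inj S k).injOn)
      (Finset.finite_toSet _)) hsubT
  · rw [hcoe]; exact hfst

end BuildSigma
section Boxes

variable {N : ℕ}

abbrev ZInt := Option ℤ × Option ℤ

def lbP (o : Option ℤ) (n : ℤ) : Prop := ∀ c ∈ o, c ≤ n
def ubP (o : Option ℤ) (n : ℤ) : Prop := ∀ c ∈ o, n ≤ c

instance (o : Option ℤ) (n : ℤ) : Decidable (lbP o n) := by
  unfold lbP; exact inferInstance
instance (o : Option ℤ) (n : ℤ) : Decidable (ubP o n) := by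
  unfold ubP; exact inferInstance

@[simp] lemma lbP_none (n : ℤ) : lbP none n := by simp [lbP]
@[simp] lemma ubP_none (n : ℤ) : ubP none n := by simp [ubP]
@[simp] lemma lbP_some {c n : ℤ} : lbP (some c) n ↔ c ≤ n := by simp [lbP]
@[simp] lemma ubP_some {c n : ℤ} : ubP (some c) n ↔ n ≤ c := by simp [ubP]

def memI (n : ℤ) (d : ZInt) : Prop := lbP d.1 n ∧ ubP d.2 n

instance (n : ℤ) (d : ZInt) : Decidable (memI n d) := by
  unfold memI; exact inferInstance

def BoxOf (b : Fin N → ZInt) : Set (Fin N → ℤ) := {x | ∀ i, memI (x i) (b i)}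

def toI : ZRay → ZInt
  | (c, none) => (some c, some c)
  | (c, some true) => (some c, none)
  | (c, some false) => (none, some c)

lemma memI_toI {n : ℤ} {r : ZRay} : memI n (toI r) ↔ memR n r := by
  obtain ⟨c, _ | b⟩ := r
  · simp [toI, memI]; omega
  · cases b <;> simp [toI, memI]

lemma cell_box (ρ : ODesc N) : CellOf ρ = BoxOf (fun i => toI (ρ i)) := by
  ext x
  exact (forall_congr' fun i => memI_toI).symm

def omax : Option ℤ → Option ℤ → Option ℤ
  | none, b => b
  | a, none => a
  | some x, some y => some (max x y)

def omin : Option ℤ → Option ℤ → Option ℤ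
  | none, b => b
  | a, none => a
  | some x, some y => some (min x y)

lemma lbP_omax {a b : Option ℤ} {n : ℤ} : lbP (omax a b) n ↔ lbP a n ∧ lbP b n := by
  rcases a with _ | x <;> rcases b with _ | y <;> simp [omax] <;> omega

lemma ubP_omin {a b : Option ℤ} {n : ℤ} : ubP (omin a b) n ↔ ubP a n ∧ ubP b n := by
  rcases a with _ | x <;> rcases b with _ | y <;> simp [omin] <;> omega

def interI (d e : ZInt) : ZInt := (omax d.1 e.1, omin d.2 e.2)

lemma memI_inter {n : ℤ} {d e : ZInt} : memI n (interI d e) ↔ memI n d ∧ memI n e := by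
  simp only [memI, interI, lbP_omax, ubP_omin]
  tauto

def interD (d e : Fin N → ZInt) : Fin N → ZInt := fun i => interI (d i) (e i)

lemma box_inter (d e : Fin N → ZInt) : BoxOf (interD d e) = BoxOf d ∩ BoxOf e := by
  ext x
  simp only [BoxOf, Set.mem_setOf_eq, Set.mem_inter_iff, interD]
  constructor
  · intro h
    exact ⟨fun i => (memI_inter.mp (h i)).1, fun i => (memI_inter.mp (h i)).2⟩
  · rintro ⟨h1, h2⟩ i
    exact memI_inter.mpr ⟨h1 i, h2 i⟩

def univD : Fin N → ZInt := fun _ => (none, none)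

lemma box_univ : BoxOf (univD (N := N)) = Set.univ := by
  ext x; simp [BoxOf, univD, memI]

def emptyD : Fin N → ZInt := fun _ => (some 1, some 0)

lemma box_empty (hN : 0 < N) : BoxOf (emptyD (N := N)) = ∅ := by
  ext x
  simp only [BoxOf, Set.mem_setOf_eq, Set.mem_empty_iff_false, iff_false, not_forall]
  refine ⟨⟨0, hN⟩, ?_⟩
  simp [emptyD, memI]
  omega

def belowD (d : Fin N → ZInt) (i : Fin N) (l : ℤ) : Fin N → ZInt :=
  fun j => if j < i then d j else if j = i then (none, some (l - 1)) else (none, none)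

def aboveD (d : Fin N → ZInt) (i : Fin N) (u : ℤ) : Fin N → ZInt :=
  fun j => if j < i then d j else if j = i then (omax (d i).1 (some (u + 1)), none)
    else (none, none)

noncomputable def cobP (d : Fin N → ZInt) (i : Fin N) (s : Bool) : Fin N → ZInt :=
  if s then (match (d i).2 with | some u => aboveD d i u | none => emptyD)
  else (match (d i).1 with | some l => belowD d i l | none => emptyD)

lemma mem_empty_box {x : Fin N → ℤ} (i : Fin N) (hx : x ∈ BoxOf (emptyD (N := N))) :
    False := by
  rw [box_empty (Fin.pos i)] at hx
  exact hx

lemma cobP_prev {d : Fin N → ZInt} {i : Fin N} {s : Bool} {x : Fin N → ℤ}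
    (hx : x ∈ BoxOf (cobP d i s)) : ∀ j, j < i → memI (x j) (d j) := by
  intro j hj
  cases s
  · rcases h1 : (d i).1 with _ | l
    · exact absurd (by simpa [cobP, h1] using hx) (fun h => mem_empty_box i h)
    · have hx' : x ∈ BoxOf (belowD d i l) := by simpa [cobP, h1] using hx
      have := hx' j
      rwa [belowD, if_pos hj] at this
  · rcases h2 : (d i).2 with _ | u
    · exact absurd (by simpa [cobP, h2] using hx) (fun h => mem_empty_box i h)
    · have hx' : x ∈ BoxOf (aboveD d i u) := by simpa [cobP, h2] using hx
      have := hx' j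
      rwa [aboveD, if_pos hj] at this

lemma cobP_nlb {d : Fin N → ZInt} {i : Fin N} {x : Fin N → ℤ}
    (hx : x ∈ BoxOf (cobP d i false)) : ¬ lbP (d i).1 (x i) := by
  rcases h1 : (d i).1 with _ | l
  · exact absurd (by simpa [cobP, h1] using hx) (fun h => mem_empty_box i h)
  · have hx' : x ∈ BoxOf (belowD d i l) := by simpa [cobP, h1] using hx
    have h3 := (hx' i).2
    rw [belowD, if_neg (lt_irrefl i), if_pos rfl] at h3
    simp only [ubP_some] at h3
    simp only [lbP_some]
    omega

lemma cobP_lb {d : Fin N → ZInt} {i : Fin N} {x : Fin N → ℤ}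
    (hx : x ∈ BoxOf (cobP d i true)) : lbP (d i).1 (x i) := by
  rcases h2 : (d i).2 with _ | u
  · exact absurd (by simpa [cobP, h2] using hx) (fun h => mem_empty_box i h)
  · have hx' : x ∈ BoxOf (aboveD d i u) := by simpa [cobP, h2] using hx
    have h3 := (hx' i).1
    rw [aboveD, if_neg (lt_irrefl i), if_pos rfl] at h3
    exact (lbP_omax.mp h3).1

lemma cobP_nub {d : Fin N → ZInt} {i : Fin N} {x : Fin N → ℤ}
    (hx : x ∈ BoxOf (cobP d i true)) : ¬ ubP (d i).2 (x i) := by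
  rcases h2 : (d i).2 with _ | u
  · exact absurd (by simpa [cobP, h2] using hx) (fun h => mem_empty_box i h)
  · have hx' : x ∈ BoxOf (aboveD d i u) := by simpa [cobP, h2] using hx
    have h3 := (hx' i).1
    rw [aboveD, if_neg (lt_irrefl i), if_pos rfl] at h3
    have h4 := (lbP_omax.mp h3).2
    simp only [lbP_some] at h4
    simp only [ubP_some]
    omega

lemma cobP_violates {d : Fin N → ZInt} {i : Fin N} {s : Bool} {x : Fin N → ℤ}
    (hx : x ∈ BoxOf (cobP d i s)) : ¬ memI (x i) (d i) := by
  cases s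
  · exact fun h => cobP_nlb hx h.1
  · exact fun h => cobP_nub hx h.2

lemma cob_sub (d : Fin N → ZInt) (i : Fin N) (s : Bool) :
    BoxOf (cobP d i s) ⊆ (BoxOf d)ᶜ :=
  fun _ hx hxd => cobP_violates hx (hxd i)

lemma cob_cover {d : Fin N → ZInt} {x : Fin N → ℤ} (hx : x ∉ BoxOf d) :
    ∃ i s, x ∈ BoxOf (cobP d i s) := by
  classical
  have hV : (Finset.univ.filter fun i => ¬ memI (x i) (d i)).Nonempty := by
    rw [Finset.filter_nonempty_iff]
    by_contra hc
    push_neg at hc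
    exact hx (fun i => hc i (Finset.mem_univ i))
  set i₀ := (Finset.univ.filter fun i => ¬ memI (x i) (d i)).min' hV with hi₀
  have hbad : ¬ memI (x i₀) (d i₀) := by
    have := Finset.min'_mem _ hV
    rw [Finset.mem_filter] at this
    exact this.2
  have hlt : ∀ j, j < i₀ → memI (x j) (d j) := by
    intro j hj
    by_contra hcj
    have : i₀ ≤ j := Finset.min'_le _ _ (Finset.mem_filter.mpr ⟨Finset.mem_univ j, hcj⟩)
    exact absurd hj (not_lt.mpr this)
  by_cases hlb : lbP (d i₀).1 (x i₀)
  · have hub : ¬ ubP (d i₀).2 (x i₀) := fun h => hbad ⟨hlb, h⟩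
    rcases h2 : (d i₀).2 with _ | u
    · rw [h2] at hub; exact absurd (ubP_none _) hub
    · refine ⟨i₀, true, ?_⟩
      have hc : cobP d i₀ true = aboveD d i₀ u := by simp [cobP, h2]
      rw [hc]
      intro j
      rcases lt_trichotomy j i₀ with hj | hj | hj
      · rw [aboveD, if_pos hj]; exact hlt j hj
      · rw [hj, aboveD, if_neg (lt_irrefl i₀), if_pos rfl]
        refine ⟨lbP_omax.mpr ⟨hlb, ?_⟩, ubP_none _⟩
        rw [h2] at hub
        simp only [ubP_some, not_le] at hub
        simp only [lbP_some]
        omega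
      · rw [aboveD, if_neg (not_lt.mpr hj.le), if_neg (Fin.ne_of_gt hj)]
        exact ⟨lbP_none _, ubP_none _⟩
  · rcases h1 : (d i₀).1 with _ | l
    · rw [h1] at hlb; exact absurd (lbP_none _) hlb
    · refine ⟨i₀, false, ?_⟩
      have hc : cobP d i₀ false = belowD d i₀ l := by simp [cobP, h1]
      rw [hc]
      intro j
      rcases lt_trichotomy j i₀ with hj | hj | hj
      · rw [belowD, if_pos hj]; exact hlt j hj
      · rw [hj, belowD, if_neg (lt_irrefl i₀), if_pos rfl]
        refine ⟨lbP_none _, ?_⟩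
        rw [h1] at hlb
        simp only [lbP_some, not_le] at hlb
        simp only [ubP_some]
        omega
      · rw [belowD, if_neg (not_lt.mpr hj.le), if_neg (Fin.ne_of_gt hj)]
        exact ⟨lbP_none _, ubP_none _⟩

lemma cob_disj {d : Fin N → ZInt} {i i' : Fin N} {s s' : Bool}
    (hne : (i, s) ≠ (i', s')) :
    Disjoint (BoxOf (cobP d i s)) (BoxOf (cobP d i' s')) := by
  rw [Set.disjoint_left]
  intro x hx hx'
  rcases lt_trichotomy i i' with hii | hii | hii
  · exact cobP_violates hx (cobP_prev hx' i hii)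
  · subst hii
    have hss : s ≠ s' := fun h => hne (by rw [h])
    cases s
    · cases s'
      · exact hss rfl
      · exact cobP_nlb hx (cobP_lb hx')
    · cases s'
      · exact cobP_nlb hx' (cobP_lb hx)
      · exact hss rfl
  · exact cobP_violates hx' (cobP_prev hx i' hii)

/-- A finite disjoint union of boxes (with an arbitrary finite index type). -/
def BDU (E : Set (Fin N → ℤ)) : Prop :=
  ∃ (ι : Type) (_ : Fintype ι) (b : ι → (Fin N → ZInt)),
    (∀ i j : ι, i ≠ j → Disjoint (BoxOf (b i)) (BoxOf (b j))) ∧ E = ⋃ i, BoxOf (b i)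

lemma BDU_inter {E E' : Set (Fin N → ℤ)} (h : BDU E) (h' : BDU E') : BDU (E ∩ E') := by
  obtain ⟨ι, hι, b, hdisj, rfl⟩ := h
  obtain ⟨κ, hκ, c, hdisj2, rfl⟩ := h'
  refine ⟨ι × κ, inferInstance, fun p => interD (b p.1) (c p.2), ?_, ?_⟩
  · rintro ⟨i, j⟩ ⟨i2, j2⟩ hne
    rw [box_inter, box_inter]
    by_cases hii : i = i2
    · subst hii
      have hjj : j ≠ j2 := fun h => hne (by rw [h])
      exact Set.disjoint_of_subset Set.inter_subset_right Set.inter_subset_right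
        (hdisj2 j j2 hjj)
    · exact Set.disjoint_of_subset Set.inter_subset_left Set.inter_subset_left
        (hdisj i i2 hii)
  · ext x
    simp only [Set.mem_inter_iff, Set.mem_iUnion, box_inter]
    constructor
    · rintro ⟨⟨i, hi⟩, ⟨j, hj⟩⟩
      exact ⟨(i, j), hi, hj⟩
    · rintro ⟨⟨i, j⟩, hi, hj⟩
      exact ⟨⟨i, hi⟩, ⟨j, hj⟩⟩

lemma BDU_compl_box (d : Fin N → ZInt) : BDU (BoxOf d)ᶜ := by
  refine ⟨Fin N × Bool, inferInstance, fun p => cobP d p.1 p.2, ?_, ?_⟩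
  · rintro ⟨i, s⟩ ⟨i2, s2⟩ hne
    exact cob_disj hne
  · ext x
    simp only [Set.mem_compl_iff, Set.mem_iUnion]
    constructor
    · intro hx
      obtain ⟨i, s, h⟩ := cob_cover hx
      exact ⟨(i, s), h⟩
    · rintro ⟨⟨i, s⟩, h⟩
      exact cob_sub d i s h

lemma BDU_compl_union (𝓓 : Finset (Fin N → ZInt)) : BDU ((⋃ d ∈ 𝓓, BoxOf d)ᶜ) := by
  classical
  induction 𝓓 using Finset.induction_on with
  | empty =>
    refine ⟨Unit, inferInstance, fun _ => univD, fun i j h => absurd (Subsingleton.elim i j) h, ?_⟩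
    simp [box_univ, Set.iUnion_const]
  | @insert d 𝓓 hd ih =>
    rw [Finset.set_biUnion_insert, Set.compl_union]
    exact BDU_inter (BDU_compl_box d) ih

lemma BDU_union (𝓓 : Finset (Fin N → ZInt)) : BDU (⋃ d ∈ 𝓓, BoxOf d) := by
  classical
  induction 𝓓 using Finset.induction_on with
  | empty =>
    refine ⟨Empty, inferInstance, fun e => e.elim, fun i => i.elim, by simp⟩
  | @insert d 𝓓 hd ih =>
    rw [Finset.set_biUnion_insert]
    obtain ⟨ι, hι, b, hdisj, hU⟩ := BDU_inter ih (BDU_compl_box d)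
    have hsub : ∀ j, BoxOf (b j) ⊆ (BoxOf d)ᶜ := by
      intro j x hx
      have hxm : x ∈ (⋃ e ∈ 𝓓, BoxOf e) ∩ (BoxOf d)ᶜ := by
        rw [hU]; exact Set.mem_iUnion.mpr ⟨j, hx⟩
      exact hxm.2
    refine ⟨Option ι, inferInstance, fun o => o.elim d b, ?_, ?_⟩
    · rintro (_ | i) (_ | j) hne
      · exact absurd rfl hne
      · exact Set.disjoint_left.mpr (fun x hxd hxb => hsub j hxb hxd)
      · exact Set.disjoint_left.mpr (fun x hxb hxd => hsub i hxb hxd)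
      · have hij : i ≠ j := fun h => hne (by rw [h])
        exact hdisj i j hij
    · ext x
      simp only [Set.mem_union, Set.mem_iUnion]
      constructor
      · intro hx
        by_cases hxd : x ∈ BoxOf d
        · exact ⟨none, hxd⟩
        · rcases hx with hx | hx
          · exact absurd hx hxd
          · obtain ⟨e, he, hxe⟩ := hx
            have hmem : x ∈ (⋃ e ∈ 𝓓, BoxOf e) ∩ (BoxOf d)ᶜ :=
              ⟨Set.mem_biUnion he hxe, hxd⟩
            rw [hU] at hmem
            obtain ⟨i, hi⟩ := Set.mem_iUnion.mp hmem
            exact ⟨some i, hi⟩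
      · rintro ⟨(_ | i), hx⟩
        · exact Or.inl hx
        · right
          have hmem : x ∈ (⋃ e ∈ 𝓓, BoxOf e) ∩ (BoxOf d)ᶜ := by
            rw [hU]; exact Set.mem_iUnion.mpr ⟨i, hx⟩
          obtain ⟨e, he, hxe⟩ := Set.mem_iUnion₂.mp hmem.1
          exact ⟨e, he, hxe⟩

lemma BDU_diff (𝓐 𝓑 : Finset (Fin N → ZInt)) :
    BDU ((⋃ d ∈ 𝓐, BoxOf d) \ (⋃ d ∈ 𝓑, BoxOf d)) := by
  rw [Set.diff_eq]
  exact BDU_inter (BDU_union 𝓐) (BDU_compl_union 𝓑)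

end Boxes
section BoxCells

variable {N : ℕ}

noncomputable def splitI : ZInt → Finset ZRay
  | (some l, some u) => (Finset.Icc l u).image (fun c => ((c, none) : ZRay))
  | (some l, none) => {(l, some true)}
  | (none, some u) => {(u, some false)}
  | (none, none) => {((0:ℤ), some true), ((-1:ℤ), some false)}

lemma memI_split {n : ℤ} {d : ZInt} : memI n d ↔ ∃ r ∈ splitI d, memR n r := by
  obtain ⟨o1, o2⟩ := d
  rcases o1 with _ | l <;> rcases o2 with _ | u
  · simp only [splitI, memI, lbP_none, ubP_none, true_and, Finset.mem_insert,
      Finset.mem_singleton]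
    constructor
    · intro _
      rcases le_or_gt 0 n with h | h
      · exact ⟨((0:ℤ), some true), Or.inl rfl, by simpa using h⟩
      · exact ⟨((-1:ℤ), some false), Or.inr rfl, by simp; omega⟩
    · exact fun _ => trivial
  · simp only [splitI, memI, lbP_none, true_and, Finset.mem_singleton]
    constructor
    · intro h
      exact ⟨((u:ℤ), some false), rfl, by simpa using h⟩
    · rintro ⟨r, rfl, hr⟩
      simpa using hr
  · simp only [splitI, memI, ubP_none, and_true, Finset.mem_singleton]
    constructor
    · intro h
      exact ⟨((l:ℤ), some true), rfl, by simpa using h⟩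
    · rintro ⟨r, rfl, hr⟩
      simpa using hr
  · simp only [splitI, memI, lbP_some, ubP_some, Finset.mem_image, Finset.mem_Icc]
    constructor
    · rintro ⟨h1, h2⟩
      exact ⟨(n, none), ⟨n, ⟨h1, h2⟩, rfl⟩, by simp⟩
    · rintro ⟨r, ⟨c, hc, rfl⟩, hr⟩
      rw [memR_pt] at hr
      omega

lemma split_disj {d : ZInt} {r r' : ZRay} (h : r ∈ splitI d) (h' : r' ∈ splitI d)
    (hne : r ≠ r') {n : ℤ} (hn : memR n r) (hn' : memR n r') : False := by
  obtain ⟨o1, o2⟩ := d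
  rcases o1 with _ | l <;> rcases o2 with _ | u
  · simp only [splitI, Finset.mem_insert, Finset.mem_singleton] at h h'
    rcases h with rfl | rfl <;> rcases h' with rfl | rfl
    · exact hne rfl
    · rw [memR_up] at hn; rw [memR_dn] at hn'; omega
    · rw [memR_dn] at hn; rw [memR_up] at hn'; omega
    · exact hne rfl
  · simp only [splitI, Finset.mem_singleton] at h h'
    subst h; subst h'
    exact hne rfl
  · simp only [splitI, Finset.mem_singleton] at h h'
    subst h; subst h'
    exact hne rfl
  · simp only [splitI, Finset.mem_image] at h h'
    obtain ⟨c, _, rfl⟩ := h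
    obtain ⟨c', _, rfl⟩ := h'
    rw [memR_pt] at hn hn'
    exact hne (by rw [← hn, ← hn'])

lemma cell_sub_box {d : Fin N → ZInt} {ρ : ODesc N}
    (h : ρ ∈ Fintype.piFinset fun i => splitI (d i)) : CellOf ρ ⊆ BoxOf d := by
  intro x hx i
  exact memI_split.mpr ⟨ρ i, Fintype.mem_piFinset.mp h i, hx i⟩

lemma box_eq_union_cells (d : Fin N → ZInt) :
    BoxOf d = ⋃ ρ : ↥(Fintype.piFinset fun i => splitI (d i)), CellOf ρ.1 := by
  ext x
  simp only [Set.mem_iUnion]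
  constructor
  · intro hx
    have h : ∀ i, ∃ r ∈ splitI (d i), memR (x i) r := fun i => memI_split.mp (hx i)
    choose rr hrr1 hrr2 using h
    exact ⟨⟨rr, Fintype.mem_piFinset.mpr hrr1⟩, hrr2⟩
  · rintro ⟨ρ, hρ⟩
    exact cell_sub_box ρ.2 hρ

lemma cell_disj_piFinset {d : Fin N → ZInt} {ρ ρ' : ODesc N}
    (h : ρ ∈ Fintype.piFinset fun i => splitI (d i))
    (h' : ρ' ∈ Fintype.piFinset fun i => splitI (d i)) (hne : ρ ≠ ρ') :
    Disjoint (CellOf ρ) (CellOf ρ') := by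
  rw [Set.disjoint_left]
  intro x hx hx'
  obtain ⟨i, hi⟩ := Function.ne_iff.mp hne
  exact split_disj (Fintype.mem_piFinset.mp h i) (Fintype.mem_piFinset.mp h' i) hi
    (hx i) (hx' i)

/-- A finite disjoint union of cells. -/
def CDU (E : Set (Fin N → ℤ)) : Prop :=
  ∃ (ι : Type) (_ : Fintype ι) (ρ : ι → ODesc N),
    (∀ i j : ι, i ≠ j → Disjoint (CellOf (ρ i)) (CellOf (ρ j))) ∧ E = ⋃ i, CellOf (ρ i)

lemma CDU_of_BDU {E : Set (Fin N → ℤ)} (h : BDU E) : CDU E := by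
  classical
  obtain ⟨ι, hι, b, hdisj, rfl⟩ := h
  refine ⟨Σ i : ι, ↥(Fintype.piFinset fun x => splitI (b i x)), inferInstance,
    fun p => p.2.1, ?_, ?_⟩
  · rintro ⟨i, ρi⟩ ⟨j, ρj⟩ hne
    by_cases hij : i = j
    · subst hij
      have hρ : ρi ≠ ρj := fun h => hne (by rw [h])
      exact cell_disj_piFinset ρi.2 ρj.2 (fun h => hρ (Subtype.ext h))
    · exact Set.disjoint_of_subset (cell_sub_box ρi.2) (cell_sub_box ρj.2) (hdisj i j hij)
  · ext x
    simp only [Set.mem_iUnion]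
    constructor
    · intro hx
      obtain ⟨i, hi⟩ := hx
      rw [box_eq_union_cells] at hi
      obtain ⟨ρ, hρ⟩ := Set.mem_iUnion.mp hi
      exact ⟨⟨i, ρ⟩, hρ⟩
    · rintro ⟨⟨i, ρ⟩, hx⟩
      exact ⟨i, cell_sub_box ρ.2 hx⟩

/-- The difference of two finite unions of cells is a finite disjoint union of cells. -/
lemma diff_cells_decomp (𝓐 𝓑 : Finset (ODesc N)) :
    CDU ((⋃ a ∈ 𝓐, CellOf a) \ (⋃ b ∈ 𝓑, CellOf b)) := by
  classical
  apply CDU_of_BDU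
  have hA : (⋃ a ∈ 𝓐, CellOf a) = ⋃ d ∈ 𝓐.image (fun ρ (i : Fin N) => toI (ρ i)), BoxOf d := by
    rw [Finset.set_biUnion_finset_image]
    exact Set.iUnion₂_congr (fun a _ => cell_box a)
  have hB : (⋃ b ∈ 𝓑, CellOf b) = ⋃ d ∈ 𝓑.image (fun ρ (i : Fin N) => toI (ρ i)), BoxOf d := by
    rw [Finset.set_biUnion_finset_image]
    exact Set.iUnion₂_congr (fun a _ => cell_box a)
  rw [hA, hB]
  exact BDU_diff _ _

end BoxCells
section PartB

variable {N : ℕ}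

/-- Exact affine signed-permutation isomorphism between two cells of equal rank. -/
lemma cellIso {α β : ODesc N} (hrk : rkD α = rkD β) :
    ∃ (a s : Fin N → ℤ) (τ : Equiv.Perm (Fin N)),
      (∀ j, s j = 1 ∨ s j = -1) ∧ mapD a s τ α = β := by
  classical
  set Iα : Finset (Fin N) := Finset.univ.filter (fun i => (α i).2 ≠ none) with hIα
  set Iβ : Finset (Fin N) := Finset.univ.filter (fun i => (β i).2 ≠ none) with hIβ
  have hcard : Iβ.card = Iα.card := hrk.symm
  set e₁ : ↥Iβ ≃ ↥Iα := Finset.equivOfCardEq hcard with he₁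
  set e₂ : ↥Iβᶜ ≃ ↥Iαᶜ := Finset.equivOfCardEq
    (by rw [Finset.card_compl, Finset.card_compl, hcard]) with he₂
  set τfun : Fin N → Fin N := fun j =>
    if h : j ∈ Iβ then (e₁ ⟨j, h⟩ : Fin N) else (e₂ ⟨j, Finset.mem_compl.mpr h⟩ : Fin N)
    with hτfun
  have hmem : ∀ j (h : j ∈ Iβ), τfun j ∈ Iα := by
    intro j h
    rw [hτfun]
    simp only [dif_pos h]
    exact (e₁ ⟨j, h⟩).2
  have hnmem : ∀ j, j ∉ Iβ → τfun j ∉ Iα := by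
    intro j h
    rw [hτfun]
    simp only [dif_neg h]
    exact Finset.mem_compl.mp (e₂ ⟨j, Finset.mem_compl.mpr h⟩).2
  have hinj : Function.Injective τfun := by
    intro j j' hjj
    by_cases h : j ∈ Iβ <;> by_cases h' : j' ∈ Iβ
    · rw [hτfun] at hjj
      simp only [dif_pos h, dif_pos h'] at hjj
      have := e₁.injective (Subtype.ext hjj)
      exact congrArg Subtype.val this
    · exact absurd (hjj ▸ hmem j h) (hnmem j' h')
    · exact absurd (hjj ▸ hnmem j h) (not_not.mpr (hmem j' h'))
    · rw [hτfun] at hjj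
      simp only [dif_neg h, dif_neg h'] at hjj
      have := e₂.injective (Subtype.ext hjj)
      have := congrArg Subtype.val this
      simpa using this
  set τ : Equiv.Perm (Fin N) := Equiv.ofBijective τfun
    (Finite.injective_iff_bijective.mp hinj) with hτ
  have hτap : ∀ j, τ j = τfun j := fun j => rfl
  set s : Fin N → ℤ := fun j => if (α (τ j)).2 = (β j).2 then 1 else -1 with hsdef
  have hs : ∀ j, s j = 1 ∨ s j = -1 := by
    intro j
    rw [hsdef]
    by_cases h : (α (τ j)).2 = (β j).2 <;> simp [h]
  refine ⟨fun j => (β j).1 - s j * (α (τ j)).1, s, τ, hs, ?_⟩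
  funext j
  have hshape : (α (τ j)).2 = none ↔ (β j).2 = none := by
    constructor
    · intro h
      by_contra hb
      have hjβ : j ∈ Iβ := by rw [hIβ]; simp [hb]
      have := hmem j hjβ
      rw [hIα, Finset.mem_filter] at this
      rw [← hτap j] at this
      exact this.2 h
    · intro h
      by_contra ha
      have hjβ : j ∉ Iβ := by rw [hIβ]; simp [h]
      have := hnmem j hjβ
      rw [hIα, Finset.mem_filter] at this
      rw [← hτap j] at this
      push_neg at this
      exact ha (this (Finset.mem_univ _))
  have hfst : (mapD (fun j => (β j).1 - s j * (α (τ j)).1) s τ α j).1 = (β j).1 := by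
    simp only [mapD]
    ring
  have hsnd : (mapD (fun j => (β j).1 - s j * (α (τ j)).1) s τ α j).2 = (β j).2 := by
    simp only [mapD]
    rcases hb : (β j).2 with _ | db
    · rw [hshape.mpr hb]
      simp
    · rcases ha : (α (τ j)).2 with _ | da
      · exact absurd (hshape.mp ha) (by rw [hb]; simp)
      · by_cases hdd : da = db
        · have hsj : s j = 1 := by rw [hsdef]; simp [ha, hb, hdd]
          simp [hsj, hdd]
        · have hsj : s j = -1 := by rw [hsdef]; simp [ha, hb, hdd]
          have : (-1 : ℤ) ≠ 1 := by norm_num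
          simp [hsj, this]
          cases da <;> cases db <;> simp_all
  exact Prod.ext hfst hsnd

/-- The affine signed-permutation map of given data. -/
def affMap (a s : Fin N → ℤ) (τ : Equiv.Perm (Fin N)) : (Fin N → ℤ) → (Fin N → ℤ) :=
  fun x j => a j + s j * x (τ j)

def invA (a s : Fin N → ℤ) (τ : Equiv.Perm (Fin N)) : Fin N → ℤ :=
  fun i => -(s (τ.symm i) * a (τ.symm i))

def invS (s : Fin N → ℤ) (τ : Equiv.Perm (Fin N)) : Fin N → ℤ := fun i => s (τ.symm i)

lemma affMap_left {a s : Fin N → ℤ} {τ : Equiv.Perm (Fin N)}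
    (hs : ∀ j, s j = 1 ∨ s j = -1) (x : Fin N → ℤ) :
    affMap (invA a s τ) (invS s τ) τ.symm (affMap a s τ x) = x := by
  have hs2 : ∀ j, s j * s j = 1 := fun j => by rcases hs j with h | h <;> rw [h] <;> ring
  funext i
  simp only [affMap, invA, invS, Equiv.apply_symm_apply]
  rcases hs (τ.symm i) with h | h <;> rw [h] <;> ring

lemma affMap_right {a s : Fin N → ℤ} {τ : Equiv.Perm (Fin N)}
    (hs : ∀ j, s j = 1 ∨ s j = -1) (y : Fin N → ℤ) :
    affMap a s τ (affMap (invA a s τ) (invS s τ) τ.symm y) = y := by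
  have hs2 : ∀ j, s j * s j = 1 := fun j => by rcases hs j with h | h <;> rw [h] <;> ring
  funext j
  simp only [affMap, invA, invS, Equiv.symm_apply_apply]
  rcases hs j with h | h <;> rw [h] <;> ring

lemma affMap_image {a s : Fin N → ℤ} {τ : Equiv.Perm (Fin N)}
    (hs : ∀ j, s j = 1 ∨ s j = -1) (ρ : ODesc N) :
    affMap a s τ '' CellOf ρ = CellOf (mapD a s τ ρ) :=
  image_mapD ⟨hs, fun x _ j => rfl⟩

/-- Pairwise disjoint cell representatives for a finite set of germs. -/
lemma disjointReps (S : Set (Fin N → ℤ)) (k : ℕ) (G : Finset (Germ S k)) :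
    ∃ C : Germ S k → ODesc N,
      (∀ γ ∈ G, rkD (C γ) = k ∧ CellOf (C γ) ⊆ S ∧
        ∃ hm : CellOf (C γ) ∈ germSet S k, germOf S k ⟨CellOf (C γ), hm⟩ = γ) ∧
      (∀ γ ∈ G, ∀ γ' ∈ G, γ ≠ γ' → Disjoint (CellOf (C γ)) (CellOf (C γ'))) := by
  classical
  induction G using Finset.induction_on with
  | empty =>
    exact ⟨fun _ i => ((0 : ℤ), none), by simp, by simp⟩
  | @insert γ₀ G hγ₀ ih =>
    obtain ⟨C, h1, h2⟩ := ih
    obtain ⟨L, hL⟩ := Quot.exists_rep γ₀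
    set ρ₀ := descOfG S k L with hρ₀
    have hmem₀ : CellOf ρ₀ ∈ germSet S k := by
      rw [← (descOfG_spec S k L).1]
      exact L.2
    have hrk₀ : rkD ρ₀ = k := (descOfG_spec S k L).2
    have hgerm₀ : germOf S k ⟨CellOf ρ₀, hmem₀⟩ = γ₀ := by
      rw [← hL]
      exact germOf_desc S k L hmem₀
    have havoid : ∀ ρt ∈ G.image C, ¬ ∃ ρ₃, EquivD ρ₃ ρ₀ ∧
        CellOf ρ₃ ⊆ CellOf ρ₀ ∧ CellOf ρ₃ ⊆ CellOf ρt := by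
      rintro ρt hρt ⟨ρ₃, he3, hs3, hs3'⟩
      obtain ⟨γ, hγG, rfl⟩ := Finset.mem_image.mp hρt
      obtain ⟨hrkγ, hsubγ, hmγ, hgermγ⟩ := h1 γ hγG
      have hrk3 : rkD ρ₃ = k := (rkD_eq_of_equiv he3).trans hrk₀
      have he3' : EquivD ρ₃ (C γ) :=
        equiv_of_cell_sub hs3' (hrk3.trans hrkγ.symm)
      have htrip : tripD (C γ) = tripD ρ₀ := by
        rw [tripD_eq_iff]
        exact (he3'.symm).trans he3
      have : γ = γ₀ := by
        rw [← hgermγ, ← hgerm₀]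
        exact germ_eq_of_trip S k hmγ hmem₀ htrip
      exact hγ₀ (this ▸ hγG)
    obtain ⟨ρ₂, he2, hs2, hd2⟩ := avoid_all (G.image C) ρ₀ havoid
    have hrk₂ : rkD ρ₂ = k := (rkD_eq_of_equiv he2).trans hrk₀
    have hsub₂ : CellOf ρ₂ ⊆ S := hs2.trans hmem₀.2
    have hmem₂ : CellOf ρ₂ ∈ germSet S k := cell_mem_germSet S k hrk₂ hsub₂
    have hgerm₂ : germOf S k ⟨CellOf ρ₂, hmem₂⟩ = γ₀ := by
      rw [← hgerm₀]
      exact Quot.sound (comm_of_equiv he2)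
    refine ⟨fun γ => if γ = γ₀ then ρ₂ else C γ, ?_, ?_⟩
    · intro γ hγ
      rcases Finset.mem_insert.mp hγ with h | hγG
      · simp only [if_pos h]
        exact ⟨hrk₂, hsub₂, hmem₂, hgerm₂.trans h.symm⟩
      · have hne : γ ≠ γ₀ := fun hh => hγ₀ (hh ▸ hγG)
        simp only [if_neg hne]
        exact h1 γ hγG
    · intro γ hγ γ' hγ' hne
      have hd2' : ∀ γ'' ∈ G, Disjoint (CellOf ρ₂) (CellOf (C γ'')) := by
        intro γ'' h
        rw [Set.disjoint_iff_inter_eq_empty]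
        exact hd2 (C γ'') (Finset.mem_image_of_mem C h)
      rcases Finset.mem_insert.mp hγ with h | hγG <;>
        rcases Finset.mem_insert.mp hγ' with h' | hγ'G
      · exact absurd (h.trans h'.symm) hne
      · have hne2 : γ' ≠ γ₀ := fun hh => hγ₀ (hh ▸ hγ'G)
        simp only [if_pos h, if_neg hne2]
        exact hd2' γ' hγ'G
      · have hne1 : γ ≠ γ₀ := fun hh => hγ₀ (hh ▸ hγG)
        simp only [if_pos h', if_neg hne1]
        exact (hd2' γ hγG).symm
      · have hne1 : γ ≠ γ₀ := fun hh => hγ₀ (hh ▸ hγG)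
        have hne2 : γ' ≠ γ₀ := fun hh => hγ₀ (hh ▸ hγ'G)
        simp only [if_neg hne1, if_neg hne2]
        exact h2 γ hγG γ' hγ'G hne

end PartB
section Extend

/-- Extend a bijection between two finsets to a permutation supported on a larger finset. -/
lemma extend_perm {α : Type*} (F F' G₀ : Finset α) (hF : F ⊆ G₀) (hF' : F' ⊆ G₀)
    (e : ↥F ≃ ↥F') :
    ∃ π : Equiv.Perm α, (∀ γ ∉ G₀, π γ = γ) ∧ (∀ γ ∈ G₀, π γ ∈ G₀) ∧
      ∀ (γ : α) (h : γ ∈ F), π γ = ↑(e ⟨γ, h⟩) := by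
  classical
  let eA : {x : ↥G₀ // (x : α) ∈ F} ≃ ↥F :=
    { toFun := fun x => ⟨x.1.1, x.2⟩
      invFun := fun y => ⟨⟨y.1, hF y.2⟩, y.2⟩
      left_inv := fun x => by apply Subtype.ext; apply Subtype.ext; rfl
      right_inv := fun y => by apply Subtype.ext; rfl }
  let eB : {x : ↥G₀ // (x : α) ∈ F'} ≃ ↥F' :=
    { toFun := fun x => ⟨x.1.1, x.2⟩
      invFun := fun y => ⟨⟨y.1, hF' y.2⟩, y.2⟩
      left_inv := fun x => by apply Subtype.ext; apply Subtype.ext; rfl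
      right_inv := fun y => by apply Subtype.ext; rfl }
  let e' : {x : ↥G₀ // (x : α) ∈ F} ≃ {x : ↥G₀ // (x : α) ∈ F'} :=
    eA.trans (e.trans eB.symm)
  let π₁ : Equiv.Perm ↥G₀ := e'.extendSubtype
  let frefl : ↥G₀ ≃ {x : α // x ∈ G₀} := Equiv.refl _
  let π : Equiv.Perm α := π₁.extendDomain frefl
  have happly : ∀ (γ : α) (h : γ ∈ G₀), π γ = ↑(π₁ ⟨γ, h⟩) := by
    intro γ h
    have := Equiv.Perm.extendDomain_apply_subtype π₁ frefl (b := γ) h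
    rw [this]
    rfl
  refine ⟨π, ?_, ?_, ?_⟩
  · intro γ h
    exact Equiv.Perm.extendDomain_apply_not_subtype π₁ frefl h
  · intro γ h
    rw [happly γ h]
    exact (π₁ ⟨γ, h⟩).2
  · intro γ h
    rw [happly γ (hF h)]
    have h2 : π₁ ⟨γ, hF h⟩ = e' ⟨⟨γ, hF h⟩, h⟩ :=
      Equiv.extendSubtype_apply_of_mem e' ⟨γ, hF h⟩ h
    rw [h2]
    rfl

end Extend
section Final

variable {N : ℕ}

lemma part_b (S : Set (Fin N → ℤ)) (hS : IsOrthohedral S) (k : ℕ)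
    (F F' : Finset (Germ S k)) (e : ↥F ≃ ↥F') :
    ∃ (g : Equiv.Perm (Fin N → ℤ)) (σ : Equiv.Perm (Germ S k)),
      IsPeiPerm S g ∧ rankLE g k ∧ InducesGermMap S k g ⇑σ ∧
      ∀ γ : ↥F, σ (γ : Germ S k) = ((e γ : ↥F') : Germ S k) := by
  classical
  set G₀ : Finset (Germ S k) := F ∪ F' with hG₀
  obtain ⟨π, hπfix, hπmem, hπF⟩ :=
    extend_perm F F' G₀ Finset.subset_union_left Finset.subset_union_right e
  have hπinv : ∀ γ ∈ G₀, π⁻¹ γ ∈ G₀ := by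
    intro γ hγ
    by_contra h
    have h2 := hπfix _ h
    rw [Equiv.Perm.apply_inv_self] at h2
    rw [← h2] at h
    exact h hγ
  obtain ⟨C, hC1, hC2⟩ := disjointReps S k G₀
  have hdata : ∀ γ : Germ S k, ∃ (a s : Fin N → ℤ) (τ : Equiv.Perm (Fin N)),
      (∀ j, s j = 1 ∨ s j = -1) ∧ (γ ∈ G₀ → mapD a s τ (C γ) = C (π γ)) := by
    intro γ
    by_cases h : γ ∈ G₀
    · obtain ⟨a, s, τ, hs, hmap⟩ :=
        cellIso (((hC1 γ h).1).trans ((hC1 (π γ) (hπmem γ h)).1).symm)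
      exact ⟨a, s, τ, hs, fun _ => hmap⟩
    · exact ⟨0, 1, Equiv.refl _, fun j => Or.inl rfl, fun hc => absurd hc h⟩
  choose da ds dτ hds hdmap using hdata
  set D : Set (Fin N → ℤ) := ⋃ γ ∈ G₀, CellOf (C γ) with hD
  have hDS : D ⊆ S := by
    rw [hD]
    apply Set.iUnion₂_subset
    intro γ hγ
    exact (hC1 γ hγ).2.1
  have hCD : ∀ γ ∈ G₀, CellOf (C γ) ⊆ D := by
    intro γ hγ x hx
    rw [hD]
    exact Set.mem_biUnion hγ hx
  have hmemD : ∀ x, x ∈ D → ∃ γ, γ ∈ G₀ ∧ x ∈ CellOf (C γ) := by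
    intro x hx
    rw [hD] at hx
    obtain ⟨γ, hγ, hxc⟩ := Set.mem_iUnion₂.mp hx
    exact ⟨γ, hγ, hxc⟩
  set gam : ∀ x, x ∈ D → Germ S k := fun x hx => (hmemD x hx).choose with hgam
  have hgam1 : ∀ x hx, gam x hx ∈ G₀ := fun x hx => (hmemD x hx).choose_spec.1
  have hgam2 : ∀ x hx, x ∈ CellOf (C (gam x hx)) := fun x hx => (hmemD x hx).choose_spec.2
  have huniq : ∀ {γ γ' : Germ S k}, γ ∈ G₀ → γ' ∈ G₀ → ∀ {x : Fin N → ℤ},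
      x ∈ CellOf (C γ) → x ∈ CellOf (C γ') → γ = γ' := by
    intro γ γ' hγ hγ' x hx hx'
    by_contra hne
    exact Set.disjoint_left.mp (hC2 γ hγ γ' hγ' hne) hx hx'
  set gfun : (Fin N → ℤ) → (Fin N → ℤ) := fun x =>
    if hx : x ∈ D then affMap (da (gam x hx)) (ds (gam x hx)) (dτ (gam x hx)) x else x
    with hgfun
  set ginv : (Fin N → ℤ) → (Fin N → ℤ) := fun y =>
    if hy : y ∈ D then
      affMap (invA (da (π⁻¹ (gam y hy))) (ds (π⁻¹ (gam y hy))) (dτ (π⁻¹ (gam y hy))))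
        (invS (ds (π⁻¹ (gam y hy))) (dτ (π⁻¹ (gam y hy)))) (dτ (π⁻¹ (gam y hy))).symm y
    else y
    with hginv
  have hgfun_eq : ∀ γ ∈ G₀, ∀ x ∈ CellOf (C γ),
      gfun x = affMap (da γ) (ds γ) (dτ γ) x := by
    intro γ hγ x hx
    have hxD : x ∈ D := hCD γ hγ hx
    rw [hgfun]
    simp only [dif_pos hxD]
    rw [huniq (hgam1 x hxD) hγ (hgam2 x hxD) hx]
  have hgfun_off : ∀ x, x ∉ D → gfun x = x := by
    intro x hx
    rw [hgfun]
    simp only [dif_neg hx]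
  have hginv_off : ∀ y, y ∉ D → ginv y = y := by
    intro y hy
    rw [hginv]
    simp only [dif_neg hy]
  have himgcell : ∀ γ ∈ G₀, gfun '' CellOf (C γ) = CellOf (C (π γ)) := by
    intro γ hγ
    have h1 : gfun '' CellOf (C γ) = affMap (da γ) (ds γ) (dτ γ) '' CellOf (C γ) :=
      Set.image_congr (fun x hx => hgfun_eq γ hγ x hx)
    rw [h1, affMap_image (hds γ), hdmap γ hγ]
  have hginv_eq : ∀ γ ∈ G₀, ∀ y ∈ CellOf (C (π γ)),
      ginv y = affMap (invA (da γ) (ds γ) (dτ γ)) (invS (ds γ) (dτ γ)) (dτ γ).symm y := by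
    intro γ hγ y hy
    have hyD : y ∈ D := hCD (π γ) (hπmem γ hγ) hy
    rw [hginv]
    simp only [dif_pos hyD]
    rw [huniq (hgam1 y hyD) (hπmem γ hγ) (hgam2 y hyD) hy, Equiv.Perm.inv_apply_self]
  have hleft : ∀ x, ginv (gfun x) = x := by
    intro x
    by_cases hx : x ∈ D
    · have hγ := hgam1 x hx
      have hxc := hgam2 x hx
      have h1 : gfun x = affMap (da (gam x hx)) (ds (gam x hx)) (dτ (gam x hx)) x :=
        hgfun_eq _ hγ x hxc
      have h2 : gfun x ∈ CellOf (C (π (gam x hx))) := by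
        rw [← himgcell _ hγ]
        exact ⟨x, hxc, rfl⟩
      rw [hginv_eq _ hγ _ h2, h1, affMap_left (hds _)]
    · rw [hgfun_off x hx, hginv_off x hx]
  have hright : ∀ y, gfun (ginv y) = y := by
    intro y
    by_cases hy : y ∈ D
    · have hγ' := hgam1 y hy
      have hyc := hgam2 y hy
      have hγ := hπinv _ hγ'
      have hππ : π (π⁻¹ (gam y hy)) = gam y hy := Equiv.Perm.apply_inv_self π _
      have hyc2 : y ∈ CellOf (C (π (π⁻¹ (gam y hy)))) := by rw [hππ]; exact hyc
      obtain ⟨x₀, hx₀, hgx₀⟩ : y ∈ gfun '' CellOf (C (π⁻¹ (gam y hy))) := by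
        rw [himgcell _ hγ]; exact hyc2
      have h1 : affMap (da (π⁻¹ (gam y hy))) (ds (π⁻¹ (gam y hy))) (dτ (π⁻¹ (gam y hy))) x₀
          = y := by
        rw [← hgfun_eq _ hγ x₀ hx₀]; exact hgx₀
      have h2 : ginv y = x₀ :=
        (hginv_eq _ hγ y hyc2).trans
          ((congrArg (affMap (invA (da (π⁻¹ (gam y hy))) (ds (π⁻¹ (gam y hy)))
              (dτ (π⁻¹ (gam y hy)))) (invS (ds (π⁻¹ (gam y hy))) (dτ (π⁻¹ (gam y hy))))
              (dτ (π⁻¹ (gam y hy))).symm) h1.symm).trans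
            (affMap_left (hds _) x₀))
      rw [h2, hgx₀]
    · rw [hginv_off y hy, hgfun_off y hy]
  set g : Equiv.Perm (Fin N → ℤ) := ⟨gfun, ginv, hleft, hright⟩ with hgdef
  have hgcoe : ⇑g = gfun := rfl
  -- decomposition of S \ D
  obtain ⟨𝓐, hSeq⟩ := ortho_to_cells hS
  have hDeq : D = ⋃ d ∈ G₀.image C, CellOf d := by
    rw [hD, Finset.set_biUnion_finset_image]
  obtain ⟨ι, hι, ρ, hdisjρ, hEq⟩ := diff_cells_decomp 𝓐 (G₀.image C)
  rw [← hSeq, ← hDeq] at hEq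
  have hρsub : ∀ i, CellOf (ρ i) ⊆ S \ D := by
    intro i
    rw [hEq]
    exact Set.subset_iUnion (fun i => CellOf (ρ i)) i
  have hDfix : ∀ x ∉ D, g x = x := by
    intro x hx
    rw [hgcoe]
    exact hgfun_off x hx
  have hpei : IsPeiPerm S g := by
    constructor
    · refine ⟨(Set.range fun i : ι => CellOf (ρ i)) ∪ ((fun γ => CellOf (C γ)) '' ↑G₀),
        ((Set.finite_range _).union ((G₀.finite_toSet).image _)), ?_, ?_, ?_, ?_⟩
      · rintro L (⟨i, rfl⟩ | ⟨γ, hγ, rfl⟩)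
        · exact ⟨rkD (ρ i), isOrth_cell _⟩
        · exact ⟨rkD (C γ), isOrth_cell _⟩
      · rw [Set.sUnion_union, Set.sUnion_range, Set.sUnion_image]
        have h1 : (⋃ i, CellOf (ρ i)) = S \ D := hEq.symm
        have h2 : (⋃ γ ∈ (↑G₀ : Set (Germ S k)), CellOf (C γ)) = D := by
          rw [hD]
          ext x
          simp
        rw [h1, h2, Set.diff_union_of_subset hDS]
      · rintro L (⟨i, rfl⟩ | ⟨γ, hγ, rfl⟩) L' (⟨j, rfl⟩ | ⟨γ', hγ', rfl⟩) hne
        · exact hdisjρ i j (fun h => hne (by rw [h]))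
        · exact Set.disjoint_of_subset (hρsub i) (hCD γ' hγ') Set.disjoint_sdiff_left
        · exact Set.disjoint_of_subset (hCD γ hγ) (hρsub j) Set.disjoint_sdiff_left.symm
        · exact hC2 γ hγ γ' hγ' (fun h => hne (by rw [h]))
      · rintro L (⟨i, rfl⟩ | ⟨γ, hγ, rfl⟩)
        · apply isometricOn_of_data (isoOn_id ?_)
          intro x hx
          rw [hgcoe]
          exact hgfun_off x (fun hxD => (hρsub i hx).2 hxD)
        · apply isometricOn_of_data (f := ⇑g) (a := da γ) (s := ds γ) (τ := dτ γ)
          refine ⟨hds γ, fun x hx j => ?_⟩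
          rw [hgcoe, hgfun_eq γ hγ x hx]
          rfl
    · intro x hx
      exact hDfix x (fun hxD => hx (hDS hxD))
  have hDorth : IsOrthohedral D := by
    refine ⟨(fun γ => CellOf (C γ)) '' ↑G₀, (G₀.finite_toSet).image _, ?_, ?_⟩
    · rintro L ⟨γ, hγ, rfl⟩
      exact ⟨rkD (C γ), isOrth_cell _⟩
    · rw [Set.sUnion_image, hD]
      ext x
      simp
  have hDrank : orthRank D ≤ k := by
    rw [hDeq]
    apply orthRank_cells_le
    intro d hd
    obtain ⟨γ, hγ, rfl⟩ := Finset.mem_image.mp hd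
    exact le_of_eq (hC1 γ hγ).1
  obtain ⟨σ, hInd, hfin, hspec⟩ := build_sigma S k g hpei D hDorth hDrank hDfix
  refine ⟨g, σ, hpei, ⟨D, hDorth, hDrank, hDfix⟩, hInd, ?_⟩
  intro γF
  have hγF : (γF : Germ S k) ∈ F := γF.2
  have hγG : (γF : Germ S k) ∈ G₀ := Finset.mem_union_left _ hγF
  obtain ⟨hmγ, hgermγ⟩ := (hC1 _ hγG).2.2
  have hiso : IsoOn (⇑g) (CellOf (C (γF : Germ S k))) (da (γF : Germ S k))
      (ds (γF : Germ S k)) (dτ (γF : Germ S k)) := by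
    refine ⟨hds _, fun x hx j => ?_⟩
    rw [hgcoe, hgfun_eq _ hγG x hx]
    rfl
  obtain ⟨hmπ, hgermπ⟩ := (hC1 (π (γF : Germ S k)) (hπmem _ hγG)).2.2
  have hm' : CellOf (mapD (da (γF : Germ S k)) (ds (γF : Germ S k)) (dτ (γF : Germ S k))
      (C (γF : Germ S k))) ∈ germSet S k := by
    rw [hdmap _ hγG]
    exact hmπ
  have h1 := hspec (C (γF : Germ S k)) hmγ (hC1 _ hγG).1 (da (γF : Germ S k))
    (ds (γF : Germ S k)) (dτ (γF : Germ S k)) hiso hm'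
  have h2 : germOf S k ⟨CellOf (mapD (da (γF : Germ S k)) (ds (γF : Germ S k))
        (dτ (γF : Germ S k)) (C (γF : Germ S k))), hm'⟩
      = germOf S k ⟨CellOf (C (π (γF : Germ S k))), hmπ⟩ :=
    congrArg (germOf S k) (Subtype.ext (congrArg CellOf (hdmap _ hγG)))
  have h3 : σ (γF : Germ S k) = π (γF : Germ S k) := by
    conv_lhs => rw [← hgermγ]
    rw [h1, h2, hgermπ]
  rw [h3, hπF _ hγF]

theorem stmt8' (S : Set (Fin N → ℤ)) (hS : IsOrthohedral S) (k : ℕ) :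
    (∀ g : Equiv.Perm (Fin N → ℤ), IsPeiPerm S g → rankLE g k →
      ∃ σ : Equiv.Perm (Germ S k), InducesGermMap S k g ⇑σ ∧ {γ | σ γ ≠ γ}.Finite) ∧
    (∀ (F F' : Finset (Germ S k)) (e : ↥F ≃ ↥F'),
      ∃ (g : Equiv.Perm (Fin N → ℤ)) (σ : Equiv.Perm (Germ S k)),
        IsPeiPerm S g ∧ rankLE g k ∧ InducesGermMap S k g ⇑σ ∧
        ∀ γ : ↥F, σ (γ : Germ S k) = ((e γ : ↥F') : Germ S k)) := by
  constructor
  · intro g hg hrk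
    obtain ⟨T, hT, hTrk, hTfix⟩ := hrk
    obtain ⟨σ, hInd, hfin, _⟩ := build_sigma S k g hg T hT hTrk hTfix
    exact ⟨σ, hInd, hfin⟩
  · intro F F' e
    exact part_b S hS k F F' e

end Final
/-- `G_k(S)` acts on the rank-`k` germs by finitary permutations, and this
action is highly transitive. -/
theorem stmt8 {N : ℕ} (S : Set (Fin N → ℤ)) (hS : IsOrthohedral S) (k : ℕ) :
    (∀ g : Equiv.Perm (Fin N → ℤ), IsPeiPerm S g → rankLE g k →
      ∃ σ : Equiv.Perm (Germ S k), InducesGermMap S k g ⇑σ ∧ {γ | σ γ ≠ γ}.Finite) ∧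
    (∀ (F F' : Finset (Germ S k)) (e : ↥F ≃ ↥F'),
      ∃ (g : Equiv.Perm (Fin N → ℤ)) (σ : Equiv.Perm (Germ S k)),
        IsPeiPerm S g ∧ rankLE g k ∧ InducesGermMap S k g ⇑σ ∧
        ∀ γ : ↥F, σ (γ : Germ S k) = ((e γ : ↥F') : Germ S k)) :=
  stmt8' S hS k

end PeiPaper
end
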